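/- arXiv:1310.3314 — 12 statements merged into one kernel-verified Lean document; each statement's English description precedes it below -/
import Mathlib

section
/- Let Q = ⋈_{F∈E} R_F be a natural join query whose hypergraph is H = (V, E), with each relation R_F finite, and let x = (x_F)_{F∈E} be any fractional edge cover of H. Then the size of the join output satisfies |Q| ≤ ∏_{F∈E} |R_F|^{x_F}. -/
open Finset
open scoped BigOperators


/-- Generalized Hölder inequality with total weight at least one. -/
lemma holder_ge_one {ι κ : Type*} (s : Finset ι) (t : Finset κ)
    (w : ι → ℝ) (f : ι → κ → ℝ)
    (hw : ∀ i ∈ s, 0 ≤ w i) (hf : ∀ i ∈ s, ∀ k ∈ t, 0 ≤ f i k)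
    (hsum : 1 ≤ ∑ i ∈ s, w i) :
    ∑ k ∈ t, ∏ i ∈ s, (f i k) ^ (w i) ≤ ∏ i ∈ s, (∑ k ∈ t, f i k) ^ (w i) := by
  classical
  -- reduce to positive weights
  set s' : Finset ι := s.filter (fun i => w i ≠ 0) with hs'
  have hsub : s' ⊆ s := filter_subset _ _
  have hprodeq : ∀ (z : ι → ℝ), ∏ i ∈ s, (z i) ^ (w i) = ∏ i ∈ s', (z i) ^ (w i) := by
    intro z
    refine (Finset.prod_subset hsub ?_).symm
    intro i hi hni
    have : w i = 0 := by
      by_contra h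
      exact hni (mem_filter.2 ⟨hi, h⟩)
    simp [this]
  have hsum' : 1 ≤ ∑ i ∈ s', w i := by
    rw [Finset.sum_filter_ne_zero] at *
    · exact hsum
  have hw' : ∀ i ∈ s', 0 < w i := fun i hi =>
    lt_of_le_of_ne (hw i (hsub hi)) (Ne.symm (mem_filter.1 hi).2)
  have hf' : ∀ i ∈ s', ∀ k ∈ t, 0 ≤ f i k := fun i hi => hf i (hsub hi)
  rw [hprodeq]
  simp only [hprodeq]
  -- now work on s' with positive weights
  by_cases hez : ∃ i ∈ s', ∑ k ∈ t, f i k = 0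
  · obtain ⟨i, hi, hzi⟩ := hez
    have hall : ∀ k ∈ t, f i k = 0 := by
      intro k hk
      have := (Finset.sum_eq_zero_iff_of_nonneg (fun k hk => hf' i hi k hk)).1 hzi
      exact this k hk
    have hlhs : ∑ k ∈ t, ∏ j ∈ s', (f j k) ^ (w j) = 0 := by
      refine Finset.sum_eq_zero (fun k hk => ?_)
      refine Finset.prod_eq_zero hi ?_
      rw [hall k hk, Real.zero_rpow (ne_of_gt (hw' i hi))]
    rw [hlhs]
    exact Finset.prod_nonneg fun j hj =>
      Real.rpow_nonneg (Finset.sum_nonneg fun k hk => hf' j hj k hk) _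
  · push_neg at hez
    set S : ι → ℝ := fun i => ∑ k ∈ t, f i k with hS
    have hSpos : ∀ i ∈ s', 0 < S i :=
      fun i hi => lt_of_le_of_ne (Finset.sum_nonneg fun k hk => hf' i hi k hk)
        (Ne.symm (hez i hi))
    set W : ℝ := ∑ i ∈ s', w i with hW
    have hWpos : 0 < W := lt_of_lt_of_le one_pos hsum'
    set a : ι → κ → ℝ := fun i k => f i k / S i with ha
    have ha0 : ∀ i ∈ s', ∀ k ∈ t, 0 ≤ a i k :=
      fun i hi k hk => div_nonneg (hf' i hi k hk) (hSpos i hi).le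
    have ha1 : ∀ i ∈ s', ∀ k ∈ t, a i k ≤ 1 := by
      intro i hi k hk
      rw [div_le_one (hSpos i hi)]
      exact Finset.single_le_sum (fun k hk => hf' i hi k hk) hk
    have hasum : ∀ i ∈ s', ∑ k ∈ t, a i k = 1 := by
      intro i hi
      rw [← Finset.sum_div, div_self (hez i hi)]
    -- key pointwise bound
    have key : ∀ k ∈ t, ∏ i ∈ s', (a i k) ^ (w i) ≤ ∑ i ∈ s', (w i / W) * a i k := by
      intro k hk
      have h1 : ∏ i ∈ s', (a i k) ^ (w i) = (∏ i ∈ s', (a i k) ^ (w i / W)) ^ W := by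
        rw [← Real.finset_prod_rpow _ _ (fun i hi => Real.rpow_nonneg (ha0 i hi k hk) _) W]
        refine Finset.prod_congr rfl (fun i hi => ?_)
        rw [← Real.rpow_mul (ha0 i hi k hk), div_mul_cancel₀ _ (ne_of_gt hWpos)]
      have h2 : ∏ i ∈ s', (a i k) ^ (w i / W) ≤ ∑ i ∈ s', (w i / W) * a i k := by
        refine Real.geom_mean_le_arith_mean_weighted s' _ _
          (fun i hi => div_nonneg (hw i (hsub hi)) hWpos.le) ?_
          (fun i hi => ha0 i hi k hk)
        rw [← Finset.sum_div, div_self (ne_of_gt hWpos)]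
      have h3 : ∑ i ∈ s', (w i / W) * a i k ≤ 1 := by
        calc ∑ i ∈ s', (w i / W) * a i k ≤ ∑ i ∈ s', (w i / W) * 1 := by
              refine Finset.sum_le_sum (fun i hi => ?_)
              exact mul_le_mul_of_nonneg_left (ha1 i hi k hk)
                (div_nonneg (hw i (hsub hi)) hWpos.le)
          _ = 1 := by simp [← Finset.sum_div, div_self (ne_of_gt hWpos)]; exact div_self (ne_of_gt hWpos)
      have hbnn : 0 ≤ ∏ i ∈ s', (a i k) ^ (w i / W) :=
        Finset.prod_nonneg fun i hi => Real.rpow_nonneg (ha0 i hi k hk) _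
      calc ∏ i ∈ s', (a i k) ^ (w i)
          = (∏ i ∈ s', (a i k) ^ (w i / W)) ^ W := h1
        _ ≤ (∑ i ∈ s', (w i / W) * a i k) ^ W := by
            refine Real.rpow_le_rpow hbnn h2 hWpos.le
        _ ≤ ∑ i ∈ s', (w i / W) * a i k := by
            rcases eq_or_lt_of_le (Finset.sum_nonneg (fun i hi =>
              mul_nonneg (div_nonneg (hw i (hsub hi)) hWpos.le) (ha0 i hi k hk))) with h | h
            · rw [← h, Real.zero_rpow (ne_of_gt hWpos)]
            · calc (∑ i ∈ s', (w i / W) * a i k) ^ W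
                  ≤ (∑ i ∈ s', (w i / W) * a i k) ^ (1:ℝ) :=
                    Real.rpow_le_rpow_of_exponent_ge h h3 hsum'
                _ = _ := Real.rpow_one _
      
    -- sum the pointwise bound
    have hfin : ∑ k ∈ t, ∏ i ∈ s', (a i k) ^ (w i) ≤ 1 := by
      calc ∑ k ∈ t, ∏ i ∈ s', (a i k) ^ (w i)
          ≤ ∑ k ∈ t, ∑ i ∈ s', (w i / W) * a i k := Finset.sum_le_sum key
        _ = ∑ i ∈ s', (w i / W) * ∑ k ∈ t, a i k := by
            rw [Finset.sum_comm]
            exact Finset.sum_congr rfl fun i hi => by rw [Finset.mul_sum]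
        _ = 1 := by
            rw [Finset.sum_congr rfl (fun i hi => by rw [hasum i hi, mul_one])]
            simp [← Finset.sum_div, div_self (ne_of_gt hWpos)]
            exact div_self (ne_of_gt hWpos)
    -- unnormalize
    have hsplit : ∀ k ∈ t, ∏ i ∈ s', (f i k) ^ (w i)
        = (∏ i ∈ s', (S i) ^ (w i)) * ∏ i ∈ s', (a i k) ^ (w i) := by
      intro k hk
      rw [← Finset.prod_mul_distrib]
      refine Finset.prod_congr rfl (fun i hi => ?_)
      rw [← Real.mul_rpow (hSpos i hi).le (ha0 i hi k hk)]
      rw [mul_div_cancel₀ _ (ne_of_gt (hSpos i hi))]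
    calc ∑ k ∈ t, ∏ i ∈ s', (f i k) ^ (w i)
        = (∏ i ∈ s', (S i) ^ (w i)) * ∑ k ∈ t, ∏ i ∈ s', (a i k) ^ (w i) := by
          rw [Finset.mul_sum]
          exact Finset.sum_congr rfl hsplit
      _ ≤ (∏ i ∈ s', (S i) ^ (w i)) * 1 := by
          refine mul_le_mul_of_nonneg_left hfin ?_
          exact Finset.prod_nonneg fun i hi => Real.rpow_nonneg (hSpos i hi).le _
      _ = _ := by rw [mul_one]


section AGMaux

variable {V D ι : Type*}

/-- Restriction of a partial tuple to a set of coordinates. -/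
def restrT [DecidableEq V] (F : Finset V) (t : V → Option D) : V → Option D :=
  fun v => if v ∈ F then t v else none

/-- The join set: partial tuples supported on `S` whose restriction to each edge
lies in the corresponding relation. -/
def Qset [DecidableEq V] (S : Finset V) (E : Finset ι) (e : ι → Finset V)
    (A : ι → Finset (V → Option D)) : Set (V → Option D) :=
  {t | (∀ v, v ∉ S → t v = none) ∧ ∀ i ∈ E, restrT (e i) t ∈ A i}

lemma Qset_finite [Fintype V] [DecidableEq V] (S : Finset V) (E : Finset ι)
    (e : ι → Finset V) (A : ι → Finset (V → Option D))
    (hcov : ∀ v ∈ S, ∃ i ∈ E, v ∈ e i) :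
    (Qset S E e A).Finite := by
  classical
  have hsub : Qset S E e A ⊆ Set.pi Set.univ
      (fun v => insert none (⋃ i ∈ E, ((A i).image (fun g => g v) : Set (Option D)))) := by
    intro t ht v _
    by_cases hv : v ∈ S
    · obtain ⟨i, hiE, hvi⟩ := hcov v hv
      have h2 := ht.2 i hiE
      have hmem : t v ∈ ((A i).image (fun g => g v) : Set (Option D)) := by
        refine Finset.mem_coe.2 (Finset.mem_image.2 ⟨restrT (e i) t, h2, ?_⟩)
        simp [restrT, hvi]
      exact Set.mem_insert_iff.2 (Or.inr (Set.mem_biUnion hiE hmem))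
    · exact Set.mem_insert_iff.2 (Or.inl (ht.1 v hv))
  refine Set.Finite.subset (Set.Finite.pi fun v => ?_) hsub
  exact Set.Finite.insert _ (Set.Finite.biUnion E.finite_toSet
    (fun i _ => ((A i).image (fun g => g v)).finite_toSet))

end AGMaux

section Main

variable {V D ι : Type*} [Fintype V] [DecidableEq V]

lemma agm_aux :
    ∀ (n : ℕ) (S : Finset V), S.card = n →
    ∀ (E : Finset ι) (e : ι → Finset V) (A : ι → Finset (V → Option D)) (x : ι → ℝ),
    (∀ i ∈ E, 0 ≤ x i) →
    (∀ v ∈ S, 1 ≤ ∑ i ∈ E.filter (fun i => v ∈ e i), x i) →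
    (∀ i ∈ E, e i ⊆ S) →
    (∀ i ∈ E, ∀ g ∈ A i, ∀ v, v ∉ e i → g v = none) →
    ((Qset S E e A).ncard : ℝ) ≤ ∏ i ∈ E, ((A i).card : ℝ) ^ (x i) := by
  classical
  intro n
  induction n with
  | zero =>
    intro S hS E e A x hx0 hcov he hA
    rw [Finset.card_eq_zero] at hS
    subst hS
    have hRnn : (0:ℝ) ≤ ∏ i ∈ E, ((A i).card : ℝ) ^ (x i) :=
      Finset.prod_nonneg fun i _ => Real.rpow_nonneg (Nat.cast_nonneg _) _
    by_cases hez : ∃ i ∈ E, A i = ∅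
    · obtain ⟨i, hiE, hAi⟩ := hez
      have hQ : Qset (∅ : Finset V) E e A = ∅ := by
        ext t
        simp only [Set.mem_empty_iff_false, iff_false]
        intro ht
        have := ht.2 i hiE
        rw [hAi] at this
        exact absurd this (Finset.notMem_empty _)
      rw [hQ]
      simpa using hRnn
    · push_neg at hez
      have h1 : ((Qset (∅ : Finset V) E e A).ncard : ℝ) ≤ 1 := by
        have hsub : Qset (∅ : Finset V) E e A ⊆ {fun _ => none} := by
          intro t ht
          have : t = fun _ => none := funext fun u => ht.1 u (Finset.notMem_empty u)
          simp [this]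
        have := Set.ncard_le_ncard hsub (Set.finite_singleton _)
        rw [Set.ncard_singleton] at this
        exact_mod_cast this
      refine h1.trans ?_
      have h2 : (1:ℝ) = ∏ _i ∈ E, (1:ℝ) := (Finset.prod_const_one).symm
      rw [h2]
      refine Finset.prod_le_prod (fun _ _ => zero_le_one) (fun i hi => ?_)
      have hcard : (1:ℝ) ≤ ((A i).card : ℝ) := by
        have := Finset.card_pos.2 (hez i hi)
        exact_mod_cast this
      calc (1:ℝ) = (1:ℝ) ^ (x i) := (Real.one_rpow _).symm
        _ ≤ ((A i).card : ℝ) ^ (x i) := Real.rpow_le_rpow (by norm_num) hcard (hx0 i hi)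
  | succ n IH =>
    intro S hS E e A x hx0 hcov he hA
    -- pick a vertex
    obtain ⟨v, hv⟩ := Finset.card_pos.1 (by omega : 0 < S.card)
    set S' : Finset V := S.erase v with hS'def
    have hS' : S'.card = n := by
      rw [hS'def, Finset.card_erase_of_mem hv, hS]
      omega
    set Ev : Finset ι := E.filter (fun i => v ∈ e i) with hEvdef
    have hEvsub : Ev ⊆ E := Finset.filter_subset _ _
    have hEvne : Ev.Nonempty := by
      rcases Finset.eq_empty_or_nonempty Ev with h | h
      · exfalso
        have h2 := hcov v hv
        rw [← hEvdef, h, Finset.sum_empty] at h2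
        linarith
      · exact h
    obtain ⟨i₀, hi₀⟩ := hEvne
    have hvi₀ : v ∈ e i₀ := (Finset.mem_filter.1 hi₀).2
    have hi₀E : i₀ ∈ E := (Finset.mem_filter.1 hi₀).1
    set Vals : Finset (Option D) := (A i₀).image (fun g => g v) with hValsdef
    set e' : ι → Finset V := fun i => (e i).erase v with he'def
    set A' : Option D → ι → Finset (V → Option D) := fun d i =>
      if v ∈ e i then ((A i).filter (fun g => g v = d)).image
        (fun g => Function.update g v none)
      else A i with hA'def
    -- hypotheses for the inductive call
    have hIH : ∀ d, ((Qset S' E e' (A' d)).ncard : ℝ)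
        ≤ ∏ i ∈ E, ((A' d i).card : ℝ) ^ (x i) := by
      intro d
      refine IH S' hS' E e' (A' d) x hx0 ?_ ?_ ?_
      · intro u hu
        have huS : u ∈ S := Finset.mem_of_mem_erase hu
        have hune : u ≠ v := Finset.ne_of_mem_erase hu
        have hfe : E.filter (fun i => u ∈ e' i) = E.filter (fun i => u ∈ e i) := by
          refine Finset.filter_congr (fun i _ => ?_)
          simp [he'def, Finset.mem_erase, hune]
        rw [hfe]
        exact hcov u huS
      · intro i hi
        exact Finset.erase_subset_erase v (he i hi)
      · intro i hi g hg u hu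
        by_cases hvei : v ∈ e i
        · rw [hA'def] at hg
          simp only [if_pos hvei] at hg
          obtain ⟨g₀, hg₀, rfl⟩ := Finset.mem_image.1 hg
          by_cases huv : u = v
          · subst huv; simp
          · rw [Function.update_of_ne huv]
            refine hA i hi g₀ (Finset.mem_of_mem_filter _ hg₀) u ?_
            intro huei
            exact hu (Finset.mem_erase.2 ⟨huv, huei⟩)
        · rw [hA'def] at hg
          simp only [if_neg hvei] at hg
          refine hA i hi g hg u ?_
          intro huei
          exact hu (Finset.mem_erase.2 ⟨fun hh => hvei (hh ▸ huei), huei⟩)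
    -- the join is finite
    have hex : ∀ u ∈ S, ∃ i ∈ E, u ∈ e i := by
      intro u hu
      by_contra h
      push_neg at h
      have hfe : E.filter (fun i => u ∈ e i) = ∅ := Finset.filter_eq_empty_iff.2 h
      have h2 := hcov u hu
      rw [hfe, Finset.sum_empty] at h2
      linarith
    have hQfin : (Qset S E e A).Finite := Qset_finite S E e A hex
    set QF : Finset (V → Option D) := hQfin.toFinset with hQFdef
    have hmemQF : ∀ t, t ∈ QF ↔ t ∈ Qset S E e A := fun t => Set.Finite.mem_toFinset _
    have htv : ∀ t ∈ QF, t v ∈ Vals := by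
      intro t ht
      rw [hmemQF] at ht
      have h2 := ht.2 i₀ hi₀E
      refine Finset.mem_image.2 ⟨restrT (e i₀) t, h2, ?_⟩
      simp [restrT, hvi₀]
    have hcardsum : QF.card = ∑ d ∈ Vals, (QF.filter (fun t => t v = d)).card :=
      Finset.card_eq_sum_card_fiberwise htv
    -- fibers biject with smaller joins
    have hfiber : ∀ d, (QF.filter (fun t => t v = d)).card = (Qset S' E e' (A' d)).ncard := by
      intro d
      have hinj : Set.InjOn (fun t => Function.update t v none)
          ((QF.filter (fun t => t v = d) : Finset (V → Option D)) : Set (V → Option D)) := by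
        intro t1 h1 t2 h2 h12
        have hd1 : t1 v = d := (Finset.mem_filter.1 (Finset.mem_coe.1 h1)).2
        have hd2 : t2 v = d := (Finset.mem_filter.1 (Finset.mem_coe.1 h2)).2
        funext u
        by_cases huv : u = v
        · subst huv; rw [hd1, hd2]
        · have h3 := congrFun h12 u
          simp only [Function.update_of_ne huv] at h3
          exact h3
      have himg : (fun t => Function.update t v none) '' ((QF.filter (fun t => t v = d) : Finset (V → Option D)) : Set (V → Option D))
          = Qset S' E e' (A' d) := by
        ext t'
        simp only [Set.mem_image, Finset.mem_coe, Finset.mem_filter, Qset, Set.mem_setOf_eq]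
        constructor
        · rintro ⟨t, ⟨htQF, htd⟩, rfl⟩
          have htQ : t ∈ Qset S E e A := (hmemQF t).1 htQF
          refine ⟨?_, ?_⟩
          · intro u hu
            by_cases huv : u = v
            · subst huv; simp
            · rw [Function.update_of_ne huv]
              exact htQ.1 u (fun huS => hu (Finset.mem_erase.2 ⟨huv, huS⟩))
          · intro i hiE
            by_cases hvei : v ∈ e i
            · simp only [hA'def, if_pos hvei]
              refine Finset.mem_image.2 ⟨restrT (e i) t,
                Finset.mem_filter.2 ⟨htQ.2 i hiE, by simp [restrT, hvei, htd]⟩, ?_⟩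
              funext u
              by_cases huv : u = v
              · subst huv
                simp [restrT, he'def]
              · rw [Function.update_of_ne huv]
                simp only [restrT, he'def, Finset.mem_erase, huv, Function.update_of_ne huv,
                  ne_eq, not_false_eq_true, true_and]
            · simp only [hA'def, if_neg hvei]
              have heq : restrT (e' i) (Function.update t v none) = restrT (e i) t := by
                funext u
                by_cases huv : u = v
                · subst huv; simp [restrT, he'def, hvei]
                · simp only [restrT, he'def, Finset.mem_erase, huv, ne_eq, not_false_eq_true,
                    true_and, Function.update_of_ne huv]
              rw [heq]
              exact htQ.2 i hiE
        · intro ht'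
          have ht'v : t' v = none := ht'.1 v (by simp [hS'def])
          refine ⟨Function.update t' v d,
            ⟨⟨(hmemQF _).2 ⟨?_, ?_⟩, Function.update_self _ _ _⟩, ?_⟩⟩
          · intro u hu
            have huv : u ≠ v := fun hh => hu (hh ▸ hv)
            rw [Function.update_of_ne huv]
            exact ht'.1 u (fun hh => hu (Finset.mem_of_mem_erase hh))
          · intro i hiE
            by_cases hvei : v ∈ e i
            · have h2 := ht'.2 i hiE
              simp only [hA'def, if_pos hvei] at h2
              obtain ⟨g, hgmem, hgeq⟩ := Finset.mem_image.1 h2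
              have hgA : g ∈ A i := Finset.mem_of_mem_filter _ hgmem
              have hgd : g v = d := (Finset.mem_filter.1 hgmem).2
              have : restrT (e i) (Function.update t' v d) = g := by
                funext u
                by_cases huv : u = v
                · subst huv; simp [restrT, hvei, hgd]
                · have h4 := congrFun hgeq u
                  rw [Function.update_of_ne huv] at h4
                  simp only [restrT, he'def, Finset.mem_erase, huv, ne_eq, not_false_eq_true,
                    true_and] at h4
                  by_cases huei : u ∈ e i
                  · simp only [restrT, if_pos huei, Function.update_of_ne huv]
                    rw [h4, if_pos huei]
                  · simp only [restrT, if_neg huei]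
                    exact (hA i hiE g hgA u huei).symm
              rw [this]
              exact hgA
            · have h2 := ht'.2 i hiE
              simp only [hA'def, if_neg hvei] at h2
              have heq : restrT (e i) (Function.update t' v d) = restrT (e' i) t' := by
                funext u
                by_cases huv : u = v
                · subst huv; simp [restrT, hvei, he'def]
                · simp only [restrT, he'def, Finset.mem_erase, huv, ne_eq, not_false_eq_true,
                    true_and, Function.update_of_ne huv]
              rw [heq]
              exact h2
          · funext u
            by_cases huv : u = v
            · subst huv; simp [ht'v]
            · simp [Function.update_of_ne huv]
      calc (QF.filter (fun t => t v = d)).card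
          = (((QF.filter (fun t => t v = d) : Finset (V → Option D)) : Set (V → Option D)) : Set _).ncard := (Set.ncard_coe_finset _).symm
        _ = ((fun t => Function.update t v none) ''
              ((QF.filter (fun t => t v = d) : Finset (V → Option D)) : Set (V → Option D))).ncard := (Set.ncard_image_of_injOn hinj).symm
        _ = (Qset S' E e' (A' d)).ncard := by rw [himg]
    -- cardinalities of the sliced relations
    set c : ι → Option D → ℕ := fun i d => ((A i).filter (fun g => g v = d)).card with hcdef
    have hA'card : ∀ d, ∀ i ∈ Ev, (A' d i).card = c i d := by
      intro d i hi
      have hvei : v ∈ e i := (Finset.mem_filter.1 hi).2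
      simp only [hA'def, if_pos hvei, hcdef]
      refine Finset.card_image_of_injOn ?_
      intro g1 h1 g2 h2 h12
      have hd1 : g1 v = d := (Finset.mem_filter.1 (Finset.mem_coe.1 h1)).2
      have hd2 : g2 v = d := (Finset.mem_filter.1 (Finset.mem_coe.1 h2)).2
      funext u
      by_cases huv : u = v
      · subst huv; rw [hd1, hd2]
      · have h3 := congrFun h12 u
        simp only [Function.update_of_ne huv] at h3
        exact h3
    have hsumc : ∀ i ∈ Ev, ∑ d ∈ Vals, c i d ≤ (A i).card := by
      intro i _
      have hdisj : ∀ d1 ∈ Vals, ∀ d2 ∈ Vals, d1 ≠ d2 →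
          Disjoint ((A i).filter (fun g => g v = d1)) ((A i).filter (fun g => g v = d2)) := by
        intro d1 _ d2 _ hne
        rw [Finset.disjoint_left]
        intro g hg1 hg2
        exact hne ((Finset.mem_filter.1 hg1).2 ▸ (Finset.mem_filter.1 hg2).2 ▸ rfl)
      calc ∑ d ∈ Vals, c i d
          = (Vals.biUnion fun d => (A i).filter (fun g => g v = d)).card :=
            (Finset.card_biUnion hdisj).symm
        _ ≤ (A i).card := Finset.card_le_card
            (fun g hg => (Finset.mem_filter.1 (Finset.mem_biUnion.1 hg).choose_spec.2).1)
    -- Hölder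
    have hHold : ∑ d ∈ Vals, ∏ i ∈ Ev, (c i d : ℝ) ^ (x i)
        ≤ ∏ i ∈ Ev, (∑ d ∈ Vals, (c i d : ℝ)) ^ (x i) :=
      holder_ge_one Ev Vals x (fun i d => (c i d : ℝ))
        (fun i hi => hx0 i (hEvsub hi)) (fun i _ d _ => Nat.cast_nonneg _) (hcov v hv)
    set K : ℝ := ∏ i ∈ E.filter (fun i => ¬ v ∈ e i), ((A i).card : ℝ) ^ (x i) with hKdef
    have hKnn : (0:ℝ) ≤ K :=
      Finset.prod_nonneg fun i _ => Real.rpow_nonneg (Nat.cast_nonneg _) _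
    have hprodsplit : ∀ d, ∏ i ∈ E, ((A' d i).card : ℝ) ^ (x i)
        = (∏ i ∈ Ev, (c i d : ℝ) ^ (x i)) * K := by
      intro d
      rw [← Finset.prod_filter_mul_prod_filter_not E (fun i => v ∈ e i)]
      congr 1
      · exact Finset.prod_congr rfl fun i hi => by rw [hA'card d i hi]
      · refine Finset.prod_congr rfl fun i hi => ?_
        have hni := (Finset.mem_filter.1 hi).2
        simp only [hA'def, if_neg hni]
    calc ((Qset S E e A).ncard : ℝ)
        = (QF.card : ℝ) := by rw [Set.ncard_eq_toFinset_card _ hQfin]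
      _ = ∑ d ∈ Vals, ((QF.filter (fun t => t v = d)).card : ℝ) := by
          rw [hcardsum]; push_cast; ring
      _ = ∑ d ∈ Vals, ((Qset S' E e' (A' d)).ncard : ℝ) :=
          Finset.sum_congr rfl fun d _ => by rw [hfiber d]
      _ ≤ ∑ d ∈ Vals, ∏ i ∈ E, ((A' d i).card : ℝ) ^ (x i) :=
          Finset.sum_le_sum fun d _ => hIH d
      _ = (∑ d ∈ Vals, ∏ i ∈ Ev, (c i d : ℝ) ^ (x i)) * K := by
          rw [Finset.sum_mul]
          exact Finset.sum_congr rfl fun d _ => hprodsplit d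
      _ ≤ (∏ i ∈ Ev, ((A i).card : ℝ) ^ (x i)) * K := by
          refine mul_le_mul_of_nonneg_right (hHold.trans ?_) hKnn
          refine Finset.prod_le_prod
            (fun i _ => Real.rpow_nonneg (Finset.sum_nonneg fun d _ => Nat.cast_nonneg _) _)
            (fun i hi => ?_)
          refine Real.rpow_le_rpow (Finset.sum_nonneg fun d _ => Nat.cast_nonneg _) ?_
            (hx0 i (hEvsub hi))
          rw [← Nat.cast_sum]
          exact_mod_cast hsumc i hi
      _ = ∏ i ∈ E, ((A i).card : ℝ) ^ (x i) :=
          Finset.prod_filter_mul_prod_filter_not E (fun i => v ∈ e i) _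

end Main

/-- **AGM bound.** Let `Q = ⋈_{F ∈ E} R_F` be a natural join query whose hypergraph is
`H = (V, E)`, with each relation `R_F` finite, and let `x = (x_F)_{F ∈ E}` be any
fractional edge cover of `H`.  Then `|Q| ≤ ∏_{F ∈ E} |R_F| ^ (x_F)`. -/
theorem agm_bound {V D : Type*} [Fintype V] [DecidableEq V]
    (E : Finset (Finset V))
    (R : (F : Finset V) → Set ({v : V // v ∈ F} → D))
    (hR : ∀ F ∈ E, (R F).Finite)
    (x : Finset V → ℝ)
    (hx0 : ∀ F ∈ E, 0 ≤ x F)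
    (hxcover : ∀ v : V, 1 ≤ ∑ F ∈ E.filter (fun F => v ∈ F), x F) :
    (({t : V → D | ∀ F ∈ E, (fun v : {v : V // v ∈ F} => t v.1) ∈ R F}).ncard : ℝ)
      ≤ ∏ F ∈ E, ((R F).ncard : ℝ) ^ (x F) := by
  classical
  set extF : (F : Finset V) → ({v : V // v ∈ F} → D) → (V → Option D) :=
    fun F r v => if hv : v ∈ F then some (r ⟨v, hv⟩) else none with hextF
  set Aext : Finset V → Finset (V → Option D) :=
    fun F => if h : F ∈ E then ((hR F h).toFinset).image (extF F) else ∅ with hAext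
  have hextinj : ∀ F : Finset V, Function.Injective (extF F) := by
    intro F r1 r2 h12
    funext u
    have h3 := congrFun h12 u.1
    simp only [hextF, dif_pos u.2] at h3
    have := Option.some.inj h3
    simpa using this
  have hAcard : ∀ F ∈ E, (Aext F).card = (R F).ncard := by
    intro F hF
    simp only [hAext, dif_pos hF]
    rw [Finset.card_image_of_injective _ (hextinj F)]
    exact (Set.ncard_eq_toFinset_card _ (hR F hF)).symm
  -- apply the auxiliary bound
  have haux := agm_aux (V := V) (D := D) (ι := Finset V) (Fintype.card V)
    Finset.univ (by simp) E (fun F => F) Aext x hx0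
    (fun v _ => hxcover v) (fun F _ => Finset.subset_univ F) ?hA
  case hA =>
    intro F hF g hg u hu
    simp only [hAext, dif_pos hF] at hg
    obtain ⟨r, _, rfl⟩ := Finset.mem_image.1 hg
    simp [hextF, hu]
  -- the original join injects into the auxiliary one
  set QO : Set (V → D) := {t : V → D | ∀ F ∈ E, (fun v : {v : V // v ∈ F} => t v.1) ∈ R F}
    with hQO
  set Φ : (V → D) → (V → Option D) := fun t v => some (t v) with hΦ
  have hΦinj : Function.Injective Φ := by
    intro t1 t2 h12
    funext u
    exact Option.some.inj (congrFun h12 u)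
  have himg : Φ '' QO ⊆ Qset Finset.univ E (fun F => F) Aext := by
    rintro _ ⟨t, ht, rfl⟩
    refine ⟨fun u hu => absurd (Finset.mem_univ u) hu, fun F hF => ?_⟩
    have heq : restrT F (Φ t) = extF F (fun v : {v : V // v ∈ F} => t v.1) := by
      funext u
      by_cases hu : u ∈ F
      · simp [restrT, hΦ, hextF, hu]
      · simp [restrT, hΦ, hextF, hu]
    rw [heq]
    simp only [hAext, dif_pos hF]
    exact Finset.mem_image.2 ⟨_, (Set.Finite.mem_toFinset _).2 (ht F hF), rfl⟩
  have hQfin : (Qset Finset.univ E (fun F => F) Aext : Set (V → Option D)).Finite := by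
    refine Qset_finite _ _ _ _ (fun u _ => ?_)
    by_contra h
    push_neg at h
    have hfe : E.filter (fun F => u ∈ F) = ∅ := Finset.filter_eq_empty_iff.2 h
    have h2 := hxcover u
    rw [hfe, Finset.sum_empty] at h2
    linarith
  have hle : (QO.ncard : ℝ) ≤ ((Qset Finset.univ E (fun F => F) Aext).ncard : ℝ) := by
    have h1 : QO.ncard = (Φ '' QO).ncard := (Set.ncard_image_of_injective _ hΦinj).symm
    rw [h1]
    exact_mod_cast Nat.cast_le.2 (Set.ncard_le_ncard himg hQfin)
  refine hle.trans (haux.trans ?_)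
  refine le_of_eq (Finset.prod_congr rfl fun F hF => ?_)
  rw [hAcard F hF]
end

section
/- (One-step unrolling inequality used in the proof of the query decomposition lemma.) Let Q = ⋈_{F∈E} R_F be a natural join query on hypergraph H = (V, E) with finite relations R_F, let x be a fractional edge cover of H, let V = I ⊎ J with 1 ≤ |I| < |V|, and let j ∈ I be any attribute. Set I' = I ∖ {j}, J' = J ∪ {j}, L = ⋈_{F∈E_I} π_I(R_F), and L' = ⋈_{F∈E_{I'}} π_{I'}(R_F). Then ∑_{t_I ∈ L} ∏_{F∈E_J} |R_F ⋉ t_I|^{x_F} ≤ ∑_{t_{I'} ∈ L'} ∏_{F∈E_{J'}} |R_F ⋉ t_{I'}|^{x_F}. -/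
open scoped BigOperators
open Finset

private lemma osu_add_rpow_le {a b p : ℝ} (ha : 0 ≤ a) (hb : 0 ≤ b) (hp : 1 ≤ p) :
    a ^ p + b ^ p ≤ (a + b) ^ p := by
  lift a to NNReal using ha
  lift b to NNReal using hb
  have := NNReal.add_rpow_le_rpow_add a b hp
  exact_mod_cast this

private lemma osu_sum_rpow_le {α : Type*} (A : Finset α) (g : α → ℝ) (hg : ∀ a ∈ A, 0 ≤ g a)
    {p : ℝ} (hp : 1 ≤ p) : ∑ a ∈ A, g a ^ p ≤ (∑ a ∈ A, g a) ^ p := by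
  classical
  induction A using Finset.induction with
  | empty => simp [Real.zero_rpow (by positivity : p ≠ 0)]
  | @insert a s ha ih =>
    rw [Finset.sum_insert ha, Finset.sum_insert ha]
    have h1 : 0 ≤ g a := hg a (mem_insert_self _ _)
    have h2 : ∀ b ∈ s, 0 ≤ g b := fun b hb => hg b (mem_insert_of_mem hb)
    have h3 : 0 ≤ ∑ b ∈ s, g b := Finset.sum_nonneg h2
    calc g a ^ p + ∑ b ∈ s, g b ^ p ≤ g a ^ p + (∑ b ∈ s, g b) ^ p := by
          linarith [ih h2]
      _ ≤ (g a + ∑ b ∈ s, g b) ^ p := osu_add_rpow_le h1 h3 hp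

private lemma osu_holder_one {ι α : Type*} (s : Finset ι) (A : Finset α) (w : ι → ℝ)
    (f : ι → α → ℝ) (hw : ∀ i ∈ s, 0 ≤ w i) (hw1 : ∑ i ∈ s, w i = 1)
    (hf : ∀ i ∈ s, ∀ a ∈ A, 0 ≤ f i a) :
    ∑ a ∈ A, ∏ i ∈ s, f i a ^ w i ≤ ∏ i ∈ s, (∑ a ∈ A, f i a) ^ w i := by
  classical
  set S : ι → ℝ := fun i => ∑ a ∈ A, f i a with hS
  have hS0 : ∀ i ∈ s, 0 ≤ S i := fun i hi => Finset.sum_nonneg (fun a ha => hf i hi a ha)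
  by_cases hz : ∃ i ∈ s, w i ≠ 0 ∧ S i = 0
  · obtain ⟨i, his, hwi, hSi⟩ := hz
    have hfa : ∀ a ∈ A, f i a = 0 := by
      intro a ha
      have := (Finset.sum_eq_zero_iff_of_nonneg (fun a ha => hf i his a ha)).1 hSi
      exact this a ha
    have hlhs : ∑ a ∈ A, ∏ k ∈ s, f k a ^ w k = 0 := by
      refine Finset.sum_eq_zero fun a ha => ?_
      exact Finset.prod_eq_zero his (by rw [hfa a ha, Real.zero_rpow hwi])
    rw [hlhs]
    exact Finset.prod_nonneg fun k hk => Real.rpow_nonneg (hS0 k hk) _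
  · push_neg at hz
    have hSpos : ∀ i ∈ s, w i ≠ 0 → 0 < S i := fun i hi hwi =>
      lt_of_le_of_ne (hS0 i hi) (Ne.symm (hz i hi hwi))
    have hQpos : 0 < ∏ i ∈ s, S i ^ w i := by
      refine Finset.prod_pos fun i hi => ?_
      by_cases hwi : w i = 0
      · rw [hwi, Real.rpow_zero]; exact one_pos
      · exact Real.rpow_pos_of_pos (hSpos i hi hwi) _
    rw [← div_le_one hQpos, Finset.sum_div]
    have key : ∀ a ∈ A, (∏ i ∈ s, f i a ^ w i) / (∏ i ∈ s, S i ^ w i)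
        ≤ ∑ i ∈ s, w i * (f i a / S i) := by
      intro a ha
      have := Real.geom_mean_le_arith_mean_weighted s w (fun i => f i a / S i)
        hw hw1 (fun i hi => div_nonneg (hf i hi a ha) (hS0 i hi))
      calc (∏ i ∈ s, f i a ^ w i) / (∏ i ∈ s, S i ^ w i)
          = ∏ i ∈ s, (f i a / S i) ^ w i := by
            rw [← Finset.prod_div_distrib]
            exact Finset.prod_congr rfl fun i hi =>
              (Real.div_rpow (hf i hi a ha) (hS0 i hi) (w i)).symm
        _ ≤ ∑ i ∈ s, w i * (f i a / S i) := this
    calc ∑ a ∈ A, (∏ i ∈ s, f i a ^ w i) / (∏ i ∈ s, S i ^ w i)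
        ≤ ∑ a ∈ A, ∑ i ∈ s, w i * (f i a / S i) := Finset.sum_le_sum key
      _ = ∑ i ∈ s, w i * (S i / S i) := by
          rw [Finset.sum_comm]
          refine Finset.sum_congr rfl fun i hi => ?_
          rw [← Finset.mul_sum, ← Finset.sum_div]
      _ ≤ ∑ i ∈ s, w i := by
          refine Finset.sum_le_sum fun i hi => ?_
          by_cases hwi : w i = 0
          · simp [hwi]
          · rw [div_self (hz i hi hwi), mul_one]
      _ = 1 := hw1

private lemma osu_holder {ι α : Type*} (s : Finset ι) (A : Finset α) (w : ι → ℝ)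
    (f : ι → α → ℝ) (hw : ∀ i ∈ s, 0 ≤ w i) (hw1 : 1 ≤ ∑ i ∈ s, w i)
    (hf : ∀ i ∈ s, ∀ a ∈ A, 0 ≤ f i a) :
    ∑ a ∈ A, ∏ i ∈ s, f i a ^ w i ≤ ∏ i ∈ s, (∑ a ∈ A, f i a) ^ w i := by
  classical
  set T : ℝ := ∑ i ∈ s, w i with hT
  have hTpos : 0 < T := lt_of_lt_of_le one_pos hw1
  have h1 := osu_holder_one s A (fun i => w i / T) (fun i a => f i a ^ T)
    (fun i hi => div_nonneg (hw i hi) hTpos.le)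
    (by rw [← Finset.sum_div, div_self hTpos.ne'])
    (fun i hi a ha => Real.rpow_nonneg (hf i hi a ha) _)
  calc ∑ a ∈ A, ∏ i ∈ s, f i a ^ w i
      = ∑ a ∈ A, ∏ i ∈ s, (f i a ^ T) ^ (w i / T) := by
        refine Finset.sum_congr rfl fun a ha => Finset.prod_congr rfl fun i hi => ?_
        rw [← Real.rpow_mul (hf i hi a ha), mul_div_cancel₀ _ hTpos.ne']
    _ ≤ ∏ i ∈ s, (∑ a ∈ A, f i a ^ T) ^ (w i / T) := h1
    _ ≤ ∏ i ∈ s, ((∑ a ∈ A, f i a) ^ T) ^ (w i / T) := by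
        refine Finset.prod_le_prod (fun i hi => Real.rpow_nonneg
          (Finset.sum_nonneg fun a ha => Real.rpow_nonneg (hf i hi a ha) _) _)
          (fun i hi => ?_)
        exact Real.rpow_le_rpow
          (Finset.sum_nonneg fun a ha => Real.rpow_nonneg (hf i hi a ha) _)
          (osu_sum_rpow_le A (f i) (fun a ha => hf i hi a ha) hw1)
          (div_nonneg (hw i hi) hTpos.le)
    _ = ∏ i ∈ s, (∑ a ∈ A, f i a) ^ w i := by
        refine Finset.prod_congr rfl fun i hi => ?_
        rw [← Real.rpow_mul (Finset.sum_nonneg fun a ha => hf i hi a ha),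
          mul_div_cancel₀ _ hTpos.ne']

private lemma osu_sum_card_fiber_le {β γ : Type*} [DecidableEq γ] (T : Finset β) (g : β → γ)
    (A : Finset γ) : ∑ a ∈ A, (T.filter (fun u => g u = a)).card ≤ T.card := by
  classical
  calc ∑ a ∈ A, (T.filter (fun u => g u = a)).card
      = ∑ a ∈ A, ((T.filter (fun u => g u ∈ A)).filter (fun u => g u = a)).card := by
        refine Finset.sum_congr rfl fun a ha => ?_
        rw [Finset.filter_filter]
        congr 1
        exact Finset.filter_congr fun u _ =>
          ⟨fun h => ⟨by rw [h]; exact ha, h⟩, fun h => h.2⟩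
    _ = (T.filter (fun u => g u ∈ A)).card :=
        (Finset.card_eq_sum_card_fiberwise (fun u hu => (Finset.mem_filter.1 hu).2)).symm
    _ ≤ T.card := Finset.card_filter_le _ _


/-- **One-step unrolling inequality** used in the proof of the query decomposition lemma.
With `V = I ⊎ J`, `j ∈ I`, `I' = I ∖ {j}`, `J' = J ∪ {j}`,
`L = ⋈_{F ∈ E_I} π_I(R_F)` and `L' = ⋈_{F ∈ E_{I'}} π_{I'}(R_F)`, we have
`∑_{t_I ∈ L} ∏_{F ∈ E_J} |R_F ⋉ t_I| ^ (x_F)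
  ≤ ∑_{t_{I'} ∈ L'} ∏_{F ∈ E_{J'}} |R_F ⋉ t_{I'}| ^ (x_F)`. -/
theorem one_step_unrolling {V D : Type*} [Fintype V] [DecidableEq V]
    (E : Finset (Finset V))
    (R : (F : Finset V) → Set ({v : V // v ∈ F} → D))
    (hR : ∀ F ∈ E, (R F).Finite)
    (x : Finset V → ℝ)
    (hx0 : ∀ F ∈ E, 0 ≤ x F)
    (hxcover : ∀ v : V, 1 ≤ ∑ F ∈ E.filter (fun F => v ∈ F), x F)
    (I J : Finset V) (hdisj : Disjoint I J) (hunion : I ∪ J = Finset.univ)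
    (hI1 : 1 ≤ I.card) (hIlt : I.card < Fintype.card V)
    (j : V) (hj : j ∈ I)
    -- the join `L = ⋈_{F ∈ E_I} π_I(R_F)`
    (hL : {tI : {v : V // v ∈ I} → D |
        ∀ F ∈ E.filter (fun F => (F ∩ I).Nonempty), ∃ u ∈ R F,
          ∀ (v : V) (hvF : v ∈ F) (hvI : v ∈ I), u ⟨v, hvF⟩ = tI ⟨v, hvI⟩}.Finite)
    -- the join `L' = ⋈_{F ∈ E_{I'}} π_{I'}(R_F)` where `I' = I.erase j`
    (hL' : {tI' : {v : V // v ∈ I.erase j} → D |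
        ∀ F ∈ E.filter (fun F => (F ∩ I.erase j).Nonempty), ∃ u ∈ R F,
          ∀ (v : V) (hvF : v ∈ F) (hvI' : v ∈ I.erase j),
            u ⟨v, hvF⟩ = tI' ⟨v, hvI'⟩}.Finite) :
    ∑ tI ∈ hL.toFinset,
      ∏ F ∈ E.filter (fun F => (F ∩ J).Nonempty),
        (({u ∈ R F | ∀ (v : V) (hvF : v ∈ F) (hvI : v ∈ I),
            u ⟨v, hvF⟩ = tI ⟨v, hvI⟩}).ncard : ℝ) ^ (x F)
      ≤ ∑ tI' ∈ hL'.toFinset,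
          ∏ F ∈ E.filter (fun F => (F ∩ insert j J).Nonempty),
            (({u ∈ R F | ∀ (v : V) (hvF : v ∈ F) (hvI' : v ∈ I.erase j),
                u ⟨v, hvF⟩ = tI' ⟨v, hvI'⟩}).ncard : ℝ) ^ (x F) := by
  
  classical
  set res : ({v : V // v ∈ I} → D) → ({v : V // v ∈ I.erase j} → D) :=
    fun t v => t ⟨v.1, Finset.mem_of_mem_erase v.2⟩ with hres
  have hmaps : ∀ tI ∈ hL.toFinset, res tI ∈ hL'.toFinset := by
    intro tI htI
    rw [Set.Finite.mem_toFinset] at htI ⊢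
    intro F hF
    rw [Finset.mem_filter] at hF
    obtain ⟨v0, hv0⟩ := hF.2
    rw [Finset.mem_inter] at hv0
    have hF' : F ∈ E.filter (fun F => (F ∩ I).Nonempty) :=
      Finset.mem_filter.2 ⟨hF.1,
        ⟨v0, Finset.mem_inter.2 ⟨hv0.1, Finset.mem_of_mem_erase hv0.2⟩⟩⟩
    obtain ⟨u, hu, hagree⟩ := htI F hF'
    exact ⟨u, hu, fun v hvF hvI' => hagree v hvF (Finset.mem_of_mem_erase hvI')⟩
  rw [← Finset.sum_fiberwise_of_maps_to hmaps]
  refine Finset.sum_le_sum fun tI' htI' => ?_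
  -- extension of tI' by value a at j
  set ext : D → ({v : V // v ∈ I} → D) := fun a v =>
    if h : (v : V) = j then a else tI' ⟨v.1, Finset.mem_erase.2 ⟨h, v.2⟩⟩ with hext
  have hext_j : ∀ a, ext a ⟨j, hj⟩ = a := fun a => dif_pos rfl
  have hext_ne : ∀ (a : D) (v : V) (hvI : v ∈ I) (hne : v ≠ j),
      ext a ⟨v, hvI⟩ = tI' ⟨v, Finset.mem_erase.2 ⟨hne, hvI⟩⟩ := fun a v hvI hne => dif_neg hne
  set fiber := hL.toFinset.filter (fun tI => res tI = tI') with hfiber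
  have hfiber_ext : ∀ tI ∈ fiber, ext (tI ⟨j, hj⟩) = tI := by
    intro tI htI
    rw [hfiber, Finset.mem_filter] at htI
    funext v
    by_cases h : (v : V) = j
    · have hv : v = ⟨j, hj⟩ := Subtype.ext h
      rw [hv, hext_j]
    · have : ext (tI ⟨j, hj⟩) v = tI' ⟨v.1, Finset.mem_erase.2 ⟨h, v.2⟩⟩ :=
        hext_ne _ v.1 v.2 h
      rw [this, ← htI.2]
  set A := fiber.image (fun tI => tI ⟨j, hj⟩) with hA
  have hextA : ∀ a ∈ A, ext a ∈ fiber := by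
    intro a ha
    obtain ⟨tI, htI, rfl⟩ := Finset.mem_image.1 ha
    rw [hfiber_ext tI htI]
    exact htI
  -- abbreviations
  set N : Finset V → ℝ := fun F =>
    (({u ∈ R F | ∀ (v : V) (hvF : v ∈ F) (hvI' : v ∈ I.erase j),
        u ⟨v, hvF⟩ = tI' ⟨v, hvI'⟩}).ncard : ℝ) with hNdef
  set m : Finset V → D → ℝ := fun F a =>
    (({u ∈ R F | ∀ (v : V) (hvF : v ∈ F) (hvI : v ∈ I),
        u ⟨v, hvF⟩ = ext a ⟨v, hvI⟩}).ncard : ℝ) with hmdef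
  have hm0 : ∀ F a, 0 ≤ m F a := fun F a => Nat.cast_nonneg _
  have hN0 : ∀ F, 0 ≤ N F := fun F => Nat.cast_nonneg _
  -- rewrite fiber sum over A
  have hsum_eq : ∑ tI ∈ fiber,
      ∏ F ∈ E.filter (fun F => (F ∩ J).Nonempty),
        (({u ∈ R F | ∀ (v : V) (hvF : v ∈ F) (hvI : v ∈ I),
            u ⟨v, hvF⟩ = tI ⟨v, hvI⟩}).ncard : ℝ) ^ (x F)
      = ∑ a ∈ A, ∏ F ∈ E.filter (fun F => (F ∩ J).Nonempty), m F a ^ x F := by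
    refine Finset.sum_nbij' (i := fun tI => tI ⟨j, hj⟩) (j := ext) ?_ ?_ ?_ ?_ ?_
    · intro tI htI
      exact Finset.mem_image_of_mem _ htI
    · intro a ha
      exact hextA a ha
    · intro tI htI
      exact hfiber_ext tI htI
    · intro a ha
      exact hext_j a
    · intro tI htI
      refine Finset.prod_congr rfl fun F _ => ?_
      rw [hmdef]
      simp only
      rw [hfiber_ext tI htI]
  rw [hsum_eq]
  -- fact (1): j ∉ F → m F a = N F
  have hm_eq_N : ∀ (F : Finset V), j ∉ F → ∀ a, m F a = N F := by
    intro F hjF a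
    rw [hmdef, hNdef]
    simp only
    congr 2
    ext u
    simp only [Set.mem_setOf_eq]
    constructor
    · rintro ⟨hu, h⟩
      refine ⟨hu, fun v hvF hvI' => ?_⟩
      have hne : v ≠ j := (Finset.mem_erase.1 hvI').1
      rw [h v hvF (Finset.mem_of_mem_erase hvI'), hext_ne a v (Finset.mem_of_mem_erase hvI') hne]
    · rintro ⟨hu, h⟩
      refine ⟨hu, fun v hvF hvI => ?_⟩
      have hne : v ≠ j := fun h' => hjF (h' ▸ hvF)
      rw [hext_ne a v hvI hne]
      exact h v hvF (Finset.mem_erase.2 ⟨hne, hvI⟩)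
  -- fact (3): j ∈ F, F ∩ J = ∅, a ∈ A → m F a = 1
  have hm_one : ∀ F ∈ E, j ∈ F → F ∩ J = ∅ → ∀ a ∈ A, m F a = 1 := by
    intro F hFE hjF hFJ a ha
    have hFI : ∀ v ∈ F, v ∈ I := by
      intro v hv
      have hvu : v ∈ I ∪ J := hunion ▸ Finset.mem_univ v
      rcases Finset.mem_union.1 hvu with h | h
      · exact h
      · exact absurd (Finset.mem_inter.2 ⟨hv, h⟩) (by simp [hFJ])
    have hextL : ext a ∈ hL.toFinset := (Finset.mem_filter.1 (hextA a ha)).1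
    rw [Set.Finite.mem_toFinset] at hextL
    have hFmem : F ∈ E.filter (fun F => (F ∩ I).Nonempty) :=
      Finset.mem_filter.2 ⟨hFE, ⟨j, Finset.mem_inter.2 ⟨hjF, hj⟩⟩⟩
    obtain ⟨u0, hu0, hagree0⟩ := hextL F hFmem
    have hsingle : {u ∈ R F | ∀ (v : V) (hvF : v ∈ F) (hvI : v ∈ I),
        u ⟨v, hvF⟩ = ext a ⟨v, hvI⟩} = {u0} := by
      ext u
      simp only [Set.mem_setOf_eq, Set.mem_singleton_iff]
      constructor
      · rintro ⟨hu, h⟩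
        funext v
        exact (h v.1 v.2 (hFI v.1 v.2)).trans (hagree0 v.1 v.2 (hFI v.1 v.2)).symm
      · rintro rfl
        exact ⟨hu0, hagree0⟩
    rw [hmdef]
    simp only
    rw [hsingle, Set.ncard_singleton, Nat.cast_one]
  -- fact (4): j ∈ F, F ∈ E → ∑ a ∈ A, m F a ≤ N F
  have hsum_m : ∀ F ∈ E, ∀ (hjF : j ∈ F), ∑ a ∈ A, m F a ≤ N F := by
    intro F hFE hjF
    have hfin : ({u ∈ R F | ∀ (v : V) (hvF : v ∈ F) (hvI' : v ∈ I.erase j),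
        u ⟨v, hvF⟩ = tI' ⟨v, hvI'⟩}).Finite := (hR F hFE).subset (Set.sep_subset _ _)
    have hset : ∀ a, {u ∈ R F | ∀ (v : V) (hvF : v ∈ F) (hvI : v ∈ I),
        u ⟨v, hvF⟩ = ext a ⟨v, hvI⟩}
        = ↑(hfin.toFinset.filter (fun u => u ⟨j, hjF⟩ = a)) := by
      intro a
      ext u
      simp only [Finset.coe_filter, Set.Finite.mem_toFinset, Set.mem_setOf_eq]
      constructor
      · rintro ⟨hu, h⟩
        refine ⟨⟨hu, fun v hvF hvI' => ?_⟩, ?_⟩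
        · have hne : v ≠ j := (Finset.mem_erase.1 hvI').1
          rw [h v hvF (Finset.mem_of_mem_erase hvI'),
            hext_ne a v (Finset.mem_of_mem_erase hvI') hne]
        · rw [h j hjF hj]
          exact hext_j a
      · rintro ⟨⟨hu, h⟩, hja⟩
        refine ⟨hu, fun v hvF hvI => ?_⟩
        by_cases hv : v = j
        · subst hv
          exact hja.trans (hext_j a).symm
        · rw [hext_ne a v hvI hv]
          exact h v hvF (Finset.mem_erase.2 ⟨hv, hvI⟩)
    have hmcard : ∀ a, m F a = ((hfin.toFinset.filter (fun u => u ⟨j, hjF⟩ = a)).card : ℝ) := by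
      intro a
      rw [hmdef]
      simp only
      rw [hset a, Set.ncard_coe_finset]
    have hNcard : N F = (hfin.toFinset.card : ℝ) := by
      rw [hNdef]
      simp only
      rw [Set.ncard_eq_toFinset_card _ hfin]
    calc ∑ a ∈ A, m F a
        = ((∑ a ∈ A, (hfin.toFinset.filter (fun u => u ⟨j, hjF⟩ = a)).card : ℕ) : ℝ) := by
          rw [Nat.cast_sum]
          exact Finset.sum_congr rfl fun a _ => hmcard a
      _ ≤ (hfin.toFinset.card : ℝ) := by
          exact_mod_cast osu_sum_card_fiber_le hfin.toFinset (fun u => u ⟨j, hjF⟩) A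
      _ = N F := hNcard.symm
  -- now the main chain
  set EJ := E.filter (fun F => (F ∩ J).Nonempty) with hEJ
  set C := E.filter (fun F => j ∈ F) with hC
  set c : ℝ := ∏ F ∈ EJ.filter (fun F => j ∉ F), N F ^ x F with hc
  have hc0 : 0 ≤ c := Finset.prod_nonneg fun F _ => Real.rpow_nonneg (hN0 F) _
  have hprod_split : ∀ a ∈ A, ∏ F ∈ EJ, m F a ^ x F = (∏ F ∈ C, m F a ^ x F) * c := by
    intro a ha
    rw [← Finset.prod_filter_mul_prod_filter_not EJ (fun F => j ∈ F)]
    congr 1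
    · -- ∏ over EJ.filter (j ∈ ·) = ∏ over C
      rw [← Finset.prod_filter_mul_prod_filter_not C (fun F => (F ∩ J).Nonempty)]
      have h1 : EJ.filter (fun F => j ∈ F) = C.filter (fun F => (F ∩ J).Nonempty) := by
        rw [hEJ, hC, Finset.filter_filter, Finset.filter_filter]
        exact Finset.filter_congr fun F _ => and_comm
      have h2 : ∏ F ∈ C.filter (fun F => ¬(F ∩ J).Nonempty), m F a ^ x F = 1 := by
        refine Finset.prod_eq_one fun F hF => ?_
        rw [Finset.mem_filter, hC, Finset.mem_filter] at hF
        have hFJ : F ∩ J = ∅ := Finset.not_nonempty_iff_eq_empty.1 hF.2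
        rw [hm_one F hF.1.1 hF.1.2 hFJ a ha, Real.one_rpow]
      rw [h1, h2, mul_one]
    · -- ∏ over EJ.filter (j ∉ ·) = c
      refine Finset.prod_congr rfl fun F hF => ?_
      rw [hm_eq_N F (Finset.mem_filter.1 hF).2 a]
  calc ∑ a ∈ A, ∏ F ∈ EJ, m F a ^ x F
      = (∑ a ∈ A, ∏ F ∈ C, m F a ^ x F) * c := by
        rw [Finset.sum_mul]
        exact Finset.sum_congr rfl hprod_split
    _ ≤ (∏ F ∈ C, (∑ a ∈ A, m F a) ^ x F) * c := by
        refine mul_le_mul_of_nonneg_right ?_ hc0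
        refine osu_holder C A x (fun F a => m F a)
          (fun F hF => hx0 F (Finset.mem_filter.1 hF).1) ?_
          (fun F _ a _ => hm0 F a)
        exact hxcover j
    _ ≤ (∏ F ∈ C, N F ^ x F) * c := by
        refine mul_le_mul_of_nonneg_right ?_ hc0
        refine Finset.prod_le_prod (fun F _ => Real.rpow_nonneg
          (Finset.sum_nonneg fun a _ => hm0 F a) _) (fun F hF => ?_)
        have hFm := Finset.mem_filter.1 hF
        exact Real.rpow_le_rpow (Finset.sum_nonneg fun a _ => hm0 F a)
          (hsum_m F hFm.1 hFm.2) (hx0 F hFm.1)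
    _ = ∏ F ∈ E.filter (fun F => (F ∩ insert j J).Nonempty), N F ^ x F := by
        rw [← Finset.prod_filter_mul_prod_filter_not
          (E.filter (fun F => (F ∩ insert j J).Nonempty)) (fun F => j ∈ F)]
        congr 1
        · congr 1
          rw [hC, Finset.filter_filter]
          exact (Finset.filter_congr fun F _ =>
            ⟨fun h => h.2, fun h => ⟨⟨j, Finset.mem_inter.2 ⟨h, Finset.mem_insert_self j J⟩⟩, h⟩⟩).symm
        · rw [hc, hEJ, Finset.filter_filter, Finset.filter_filter]
          refine Finset.prod_congr (Finset.filter_congr fun F _ => ?_) fun _ _ => rfl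
          constructor
          · rintro ⟨⟨v, hv⟩, hjF⟩
            rw [Finset.mem_inter] at hv
            exact ⟨⟨v, Finset.mem_inter.2 ⟨hv.1, Finset.mem_insert_of_mem hv.2⟩⟩, hjF⟩
          · rintro ⟨⟨v, hv⟩, hjF⟩
            rw [Finset.mem_inter, Finset.mem_insert] at hv
            rcases hv.2 with h | h
            · exact absurd (h ▸ hv.1) hjF
            · exact ⟨⟨v, Finset.mem_inter.2 ⟨hv.1, h⟩⟩, hjF⟩
end

section
/- (AGM bound for the triangle query.) Let R ⊆ A × B, S ⊆ B × C, and T ⊆ A × C be finite binary relations, and let Q_△ = {(a,b,c) : (a,b) ∈ R, (b,c) ∈ S, (a,c) ∈ T}. Then |Q_△| ≤ √(|R| · |S| · |T|). In particular, if |R| = |S| = |T| = N then |Q_△| ≤ N^{3/2}. -/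
open scoped BigOperators

set_option maxHeartbeats 1000000

private lemma sum_filter_card_le {B C : Type*} [DecidableEq B] [DecidableEq C]
    (S : Finset (B × C)) (I : Finset B) :
    ∑ b ∈ I, (S.filter (fun p => p.1 = b)).card ≤ S.card := by
  have hdisj : ∀ x ∈ I, ∀ y ∈ I, x ≠ y →
      Disjoint (S.filter (fun p => p.1 = x)) (S.filter (fun p => p.1 = y)) := by
    intro x _ y _ hxy
    refine Finset.disjoint_left.2 ?_
    intro p hp hq
    rw [Finset.mem_filter] at hp hq
    exact hxy (hp.2.symm.trans hq.2)
  rw [← Finset.card_biUnion hdisj]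
  apply Finset.card_le_card
  intro p hp
  obtain ⟨b, _, hb⟩ := Finset.mem_biUnion.1 hp
  exact (Finset.mem_filter.1 hb).1

private lemma triangle_key {A B C : Type*} [DecidableEq A] [DecidableEq B] [DecidableEq C]
    (R : Finset (A × B)) (S : Finset (B × C)) (T : Finset (A × C))
    (Q : Finset (A × B × C))
    (hmem : ∀ p ∈ Q, (p.1, p.2.1) ∈ R ∧ (p.2.1, p.2.2) ∈ S ∧ (p.1, p.2.2) ∈ T) :
    (Q.card : ℝ) ≤ Real.sqrt ((R.card : ℝ) * (S.card : ℝ) * (T.card : ℝ)) := by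
  set Bimg : Finset B := R.image Prod.snd with hBimg
  set r : B → ℕ := fun b => (R.filter (fun p => p.2 = b)).card with hr
  set s : B → ℕ := fun b => (S.filter (fun p => p.1 = b)).card with hs
  set n : B → ℕ := fun b => (Q.filter (fun p => p.2.1 = b)).card with hn
  have hsum : Q.card = ∑ b ∈ Bimg, n b := by
    apply Finset.card_eq_sum_card_fiberwise
    intro p hp
    exact Finset.mem_image.2 ⟨(p.1, p.2.1), (hmem p hp).1, rfl⟩
  have hnT : ∀ b, n b ≤ T.card := by
    intro b
    apply Finset.card_le_card_of_injOn (fun p => (p.1, p.2.2))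
    · intro p hp
      exact (hmem p (Finset.mem_filter.1 hp).1).2.2
    · intro p hp q hq hpq
      have hb1 := (Finset.mem_filter.1 hp).2
      have hb2 := (Finset.mem_filter.1 hq).2
      simp only [Prod.mk.injEq] at hpq
      exact Prod.ext hpq.1 (Prod.ext (hb1.trans hb2.symm) hpq.2)
  have hnrs : ∀ b, n b ≤ r b * s b := by
    intro b
    rw [hr, hs]
    simp only
    rw [← Finset.card_product]
    apply Finset.card_le_card_of_injOn (fun p => ((p.1, p.2.1), (p.2.1, p.2.2)))
    · intro p hp
      have h1 := hmem p (Finset.mem_filter.1 hp).1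
      have h2 := (Finset.mem_filter.1 hp).2
      simp only [Finset.mem_coe, Finset.mem_product, Finset.mem_filter]
      exact ⟨⟨h1.1, h2⟩, h1.2.1, h2⟩
    · intro p _ q _ hpq
      simp only [Prod.mk.injEq] at hpq
      exact Prod.ext hpq.1.1 (Prod.ext hpq.1.2 hpq.2.2)
  have step1 : (Q.card : ℝ) ≤ ∑ b ∈ Bimg, Real.sqrt (T.card : ℝ) *
      (Real.sqrt (r b : ℝ) * Real.sqrt (s b : ℝ)) := by
    rw [hsum]
    push_cast
    apply Finset.sum_le_sum
    intro b _
    have h1 : ((n b : ℝ)) ^ 2 ≤ (T.card : ℝ) * ((r b : ℝ) * (s b : ℝ)) := by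
      have h2 := Nat.mul_le_mul (hnT b) (hnrs b)
      calc ((n b : ℝ)) ^ 2 = ((n b * n b : ℕ) : ℝ) := by push_cast; ring
        _ ≤ ((T.card * (r b * s b) : ℕ) : ℝ) := by exact_mod_cast h2
        _ = (T.card : ℝ) * ((r b : ℝ) * (s b : ℝ)) := by push_cast; ring
    calc (n b : ℝ) = Real.sqrt ((n b : ℝ) ^ 2) :=
          (Real.sqrt_sq (Nat.cast_nonneg _)).symm
      _ ≤ Real.sqrt ((T.card : ℝ) * ((r b : ℝ) * (s b : ℝ))) := Real.sqrt_le_sqrt h1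
      _ = Real.sqrt (T.card : ℝ) * (Real.sqrt (r b : ℝ) * Real.sqrt (s b : ℝ)) := by
          rw [Real.sqrt_mul (Nat.cast_nonneg _), Real.sqrt_mul (Nat.cast_nonneg _)]
  have step2 : ∑ b ∈ Bimg, Real.sqrt (r b : ℝ) * Real.sqrt (s b : ℝ)
      ≤ Real.sqrt (R.card : ℝ) * Real.sqrt (S.card : ℝ) := by
    have cs := Real.sum_sqrt_mul_sqrt_le Bimg (f := fun b => (r b : ℝ))
      (g := fun b => (s b : ℝ)) (fun b => Nat.cast_nonneg _) (fun b => Nat.cast_nonneg _)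
    refine cs.trans ?_
    have hR : ∑ b ∈ Bimg, (r b : ℝ) = (R.card : ℝ) := by
      have h := (Finset.card_eq_sum_card_image Prod.snd R).symm
      rw [← Nat.cast_sum, h]
    have hS : ∑ b ∈ Bimg, (s b : ℝ) ≤ (S.card : ℝ) := by
      rw [← Nat.cast_sum]
      exact_mod_cast sum_filter_card_le S Bimg
    rw [hR]
    exact mul_le_mul_of_nonneg_left (Real.sqrt_le_sqrt hS) (Real.sqrt_nonneg _)
  calc (Q.card : ℝ) ≤ ∑ b ∈ Bimg, Real.sqrt (T.card : ℝ) *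
        (Real.sqrt (r b : ℝ) * Real.sqrt (s b : ℝ)) := step1
    _ = Real.sqrt (T.card : ℝ) * ∑ b ∈ Bimg, Real.sqrt (r b : ℝ) * Real.sqrt (s b : ℝ) := by
        rw [Finset.mul_sum]
    _ ≤ Real.sqrt (T.card : ℝ) * (Real.sqrt (R.card : ℝ) * Real.sqrt (S.card : ℝ)) :=
        mul_le_mul_of_nonneg_left step2 (Real.sqrt_nonneg _)
    _ = Real.sqrt ((R.card : ℝ) * (S.card : ℝ) * (T.card : ℝ)) := by
        rw [Real.sqrt_mul (by positivity : (0:ℝ) ≤ (R.card : ℝ) * (S.card : ℝ)),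
          Real.sqrt_mul (Nat.cast_nonneg _)]
        ring

/-- **AGM bound for the triangle query.** For finite binary relations `R ⊆ A × B`,
`S ⊆ B × C`, `T ⊆ A × C`, the triangle join
`Q_△ = {(a,b,c) : (a,b) ∈ R, (b,c) ∈ S, (a,c) ∈ T}` satisfies
`|Q_△| ≤ √(|R|·|S|·|T|)`; in particular, if `|R| = |S| = |T| = N` then
`|Q_△| ≤ N^(3/2)`. -/
theorem triangle_agm {A B C : Type*}
    (R : Finset (A × B)) (S : Finset (B × C)) (T : Finset (A × C)) :
    (({p : A × B × C | (p.1, p.2.1) ∈ R ∧ (p.2.1, p.2.2) ∈ S ∧ (p.1, p.2.2) ∈ T}).ncard : ℝ)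
        ≤ Real.sqrt ((R.card : ℝ) * (S.card : ℝ) * (T.card : ℝ)) ∧
      ∀ N : ℕ, R.card = N → S.card = N → T.card = N →
        (({p : A × B × C | (p.1, p.2.1) ∈ R ∧ (p.2.1, p.2.2) ∈ S ∧
            (p.1, p.2.2) ∈ T}).ncard : ℝ) ≤ (N : ℝ) ^ ((3 : ℝ) / 2) := by
  classical
  set Q : Finset (A × B × C) :=
    ((R ×ˢ S).filter (fun p => p.1.2 = p.2.1 ∧ (p.1.1, p.2.2) ∈ T)).image
      (fun p => (p.1.1, p.1.2, p.2.2)) with hQdef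
  have hset : {p : A × B × C | (p.1, p.2.1) ∈ R ∧ (p.2.1, p.2.2) ∈ S ∧ (p.1, p.2.2) ∈ T}
      = (Q : Set (A × B × C)) := by
    ext ⟨a, b, c⟩
    simp only [Set.mem_setOf_eq, hQdef, Finset.coe_image, Set.mem_image, Finset.mem_coe,
      Finset.mem_filter, Finset.mem_product]
    constructor
    · rintro ⟨h1, h2, h3⟩
      exact ⟨((a, b), (b, c)), ⟨⟨h1, h2⟩, rfl, h3⟩, rfl⟩
    · rintro ⟨⟨⟨a', b'⟩, ⟨b'', c'⟩⟩, ⟨⟨h1, h2⟩, he, h3⟩, hp⟩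
      cases hp
      cases he
      exact ⟨h1, h2, h3⟩
  have hncard : ({p : A × B × C | (p.1, p.2.1) ∈ R ∧ (p.2.1, p.2.2) ∈ S ∧ (p.1, p.2.2) ∈ T}).ncard
      = Q.card := by rw [hset, Set.ncard_coe_finset]
  have hmem : ∀ p ∈ Q, (p.1, p.2.1) ∈ R ∧ (p.2.1, p.2.2) ∈ S ∧ (p.1, p.2.2) ∈ T := by
    intro p hp
    have : p ∈ (Q : Set (A × B × C)) := hp
    rw [← hset] at this
    exact this
  have key : (Q.card : ℝ) ≤ Real.sqrt ((R.card : ℝ) * (S.card : ℝ) * (T.card : ℝ)) :=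
    triangle_key R S T Q hmem
  rw [hncard]
  refine ⟨key, ?_⟩
  rintro N hR hS hT
  have hpow : Real.sqrt ((R.card : ℝ) * (S.card : ℝ) * (T.card : ℝ))
      = (N : ℝ) ^ ((3 : ℝ) / 2) := by
    rw [hR, hS, hT]
    have h3 : ((N : ℝ)) * (N : ℝ) * (N : ℝ) = (N : ℝ) ^ ((3 : ℕ) : ℝ) := by
      rw [Real.rpow_natCast]; ring
    rw [h3, Real.sqrt_eq_rpow, ← Real.rpow_mul (Nat.cast_nonneg _)]
    norm_num
  rw [← hpow]
  exact key
end

section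
/- (Runtime bound for the power-of-two-choices triangle algorithm.) Let R ⊆ A × B, S ⊆ B × C, and T ⊆ A × C be finite binary relations, and let L = π_A(R) ∩ π_A(T) be the set of values a appearing as the first coordinate of both some tuple of R and some tuple of T. Then ∑_{a ∈ L} min(|σ_{A=a}R| · |σ_{A=a}T|, |S|) ≤ √(|R| · |S| · |T|), where σ_{A=a}R = {(a',b) ∈ R : a' = a} and σ_{A=a}T = {(a',c) ∈ T : a' = a}. -/
open scoped BigOperators

/-- **Runtime bound for the power-of-two-choices triangle algorithm.**
With `L = π_A(R) ∩ π_A(T)`, we have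
`∑_{a ∈ L} min(|σ_{A=a}R| · |σ_{A=a}T|, |S|) ≤ √(|R|·|S|·|T|)`. -/
theorem two_choices_runtime {A B C : Type*} [DecidableEq A]
    (R : Finset (A × B)) (S : Finset (B × C)) (T : Finset (A × C)) :
    (∑ a ∈ R.image Prod.fst ∩ T.image Prod.fst,
        (min ((R.filter (fun p => p.1 = a)).card * (T.filter (fun p => p.1 = a)).card)
          S.card : ℕ) : ℝ)
      ≤ Real.sqrt ((R.card : ℝ) * (S.card : ℝ) * (T.card : ℝ)) := by
  set L := R.image Prod.fst ∩ T.image Prod.fst with hL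
  set r : A → ℝ := fun a => ((R.filter (fun p => p.1 = a)).card : ℝ)
  set t : A → ℝ := fun a => ((T.filter (fun p => p.1 = a)).card : ℝ)
  have hr : ∀ a, 0 ≤ r a := fun a => Nat.cast_nonneg _
  have ht : ∀ a, 0 ≤ t a := fun a => Nat.cast_nonneg _
  have hs : (0:ℝ) ≤ S.card := Nat.cast_nonneg _
  push_cast
  have step1 : ∀ a ∈ L, min (r a * t a) (S.card : ℝ) ≤ Real.sqrt (r a * t a * S.card) := by
    intro a _
    have h1 : 0 ≤ r a * t a := mul_nonneg (hr a) (ht a)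
    rcases le_total (r a * t a) (S.card : ℝ) with h | h
    · rw [min_eq_left h]
      calc r a * t a = Real.sqrt ((r a * t a) * (r a * t a)) := by
            rw [Real.sqrt_mul_self h1]
        _ ≤ Real.sqrt (r a * t a * S.card) :=
            Real.sqrt_le_sqrt (mul_le_mul_of_nonneg_left h h1)
    · rw [min_eq_right h]
      calc (S.card : ℝ) = Real.sqrt ((S.card:ℝ) * S.card) := by rw [Real.sqrt_mul_self hs]
        _ ≤ Real.sqrt (r a * t a * S.card) :=
            Real.sqrt_le_sqrt (mul_le_mul_of_nonneg_right h hs)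
  have CS : ∑ a ∈ L, Real.sqrt (r a) * Real.sqrt (t a)
      ≤ Real.sqrt (∑ a ∈ L, r a) * Real.sqrt (∑ a ∈ L, t a) := by
    have h := Finset.sum_mul_sq_le_sq_mul_sq L
      (fun a => Real.sqrt (r a)) (fun a => Real.sqrt (t a))
    have e1 : ∑ a ∈ L, Real.sqrt (r a) ^ 2 = ∑ a ∈ L, r a :=
      Finset.sum_congr rfl fun a _ => Real.sq_sqrt (hr a)
    have e2 : ∑ a ∈ L, Real.sqrt (t a) ^ 2 = ∑ a ∈ L, t a :=
      Finset.sum_congr rfl fun a _ => Real.sq_sqrt (ht a)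
    rw [e1, e2] at h
    have hnn : 0 ≤ ∑ a ∈ L, Real.sqrt (r a) * Real.sqrt (t a) :=
      Finset.sum_nonneg fun a _ => mul_nonneg (Real.sqrt_nonneg _) (Real.sqrt_nonneg _)
    calc ∑ a ∈ L, Real.sqrt (r a) * Real.sqrt (t a)
        = Real.sqrt ((∑ a ∈ L, Real.sqrt (r a) * Real.sqrt (t a)) ^ 2) :=
          (Real.sqrt_sq hnn).symm
      _ ≤ Real.sqrt ((∑ a ∈ L, r a) * ∑ a ∈ L, t a) := Real.sqrt_le_sqrt h
      _ = Real.sqrt (∑ a ∈ L, r a) * Real.sqrt (∑ a ∈ L, t a) :=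
          Real.sqrt_mul (Finset.sum_nonneg fun a _ => hr a) _
  have hR : ∑ a ∈ L, r a ≤ (R.card : ℝ) := by
    have e : ∑ a ∈ R.image Prod.fst, r a = R.card := by
      rw [← Nat.cast_sum]
      norm_cast
      exact (Finset.card_eq_sum_card_fiberwise (fun p hp =>
        Finset.mem_image_of_mem Prod.fst hp)).symm
    calc ∑ a ∈ L, r a ≤ ∑ a ∈ R.image Prod.fst, r a :=
          Finset.sum_le_sum_of_subset_of_nonneg Finset.inter_subset_left
            (fun a _ _ => hr a)
      _ = R.card := e
  have hT : ∑ a ∈ L, t a ≤ (T.card : ℝ) := by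
    have e : ∑ a ∈ T.image Prod.fst, t a = T.card := by
      rw [← Nat.cast_sum]
      norm_cast
      exact (Finset.card_eq_sum_card_fiberwise (fun p hp =>
        Finset.mem_image_of_mem Prod.fst hp)).symm
    calc ∑ a ∈ L, t a ≤ ∑ a ∈ T.image Prod.fst, t a :=
          Finset.sum_le_sum_of_subset_of_nonneg Finset.inter_subset_right
            (fun a _ _ => ht a)
      _ = T.card := e
  calc (∑ a ∈ L, min (r a * t a) (S.card : ℝ))
      ≤ ∑ a ∈ L, Real.sqrt (r a * t a * S.card) := Finset.sum_le_sum step1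
    _ = ∑ a ∈ L, Real.sqrt (r a) * Real.sqrt (t a) * Real.sqrt S.card := by
        refine Finset.sum_congr rfl fun a _ => ?_
        rw [Real.sqrt_mul (mul_nonneg (hr a) (ht a)), Real.sqrt_mul (hr a)]
    _ = (∑ a ∈ L, Real.sqrt (r a) * Real.sqrt (t a)) * Real.sqrt S.card := by
        rw [Finset.sum_mul]
    _ ≤ Real.sqrt (∑ a ∈ L, r a) * Real.sqrt (∑ a ∈ L, t a) * Real.sqrt S.card :=
        mul_le_mul_of_nonneg_right CS (Real.sqrt_nonneg _)
    _ ≤ Real.sqrt R.card * Real.sqrt T.card * Real.sqrt S.card :=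
        mul_le_mul_of_nonneg_right
          (mul_le_mul (Real.sqrt_le_sqrt hR) (Real.sqrt_le_sqrt hT)
            (Real.sqrt_nonneg _) (Real.sqrt_nonneg _)) (Real.sqrt_nonneg _)
    _ = Real.sqrt ((R.card:ℝ) * S.card * T.card) := by
        rw [← Real.sqrt_mul (Nat.cast_nonneg _), ← Real.sqrt_mul (by positivity)]
        congr 1
        ring
end

section
/- (Runtime bound for the delayed-computation triangle algorithm.) Let R ⊆ A × B, S ⊆ B × C, and T ⊆ A × C be finite binary relations. Let L_A = π_A(R) ∩ π_A(T), and for each a ∈ L_A let L_B^a = π_B(σ_{A=a}R) ∩ π_B(S). Then ∑_{a ∈ L_A} ∑_{b ∈ L_B^a} min(|π_C(σ_{B=b}S)|, |π_C(σ_{A=a}T)|) ≤ √(|R| · |S| · |T|). -/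
open scoped BigOperators

private lemma sum_deg_le' {α β : Type*} [DecidableEq α] [DecidableEq β]
    (R : Finset (α × β)) (s : Finset α) :
    ∑ a ∈ s, (R.filter (fun p => p.1 = a)).card ≤ R.card := by
  rw [← Finset.card_biUnion]
  · exact Finset.card_le_card (by
      intro x hx
      simp only [Finset.mem_biUnion, Finset.mem_filter] at hx
      obtain ⟨a, _, hx, _⟩ := hx
      exact hx)
  · intro a _ b _ hab
    simp only [Finset.disjoint_left, Finset.mem_filter]
    rintro x ⟨_, h1⟩ ⟨_, h2⟩
    exact hab (h1.symm.trans h2)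

private lemma sum_sqrt_le {α : Type*} (s : Finset α) (f : α → ℝ) (hf : ∀ a ∈ s, 0 ≤ f a) :
    ∑ a ∈ s, Real.sqrt (f a) ≤ Real.sqrt ((s.card : ℝ) * ∑ a ∈ s, f a) := by
  have h2 : (∑ a ∈ s, Real.sqrt (f a)) ^ 2 ≤ (∑ a ∈ s, (1:ℝ)^2) * ∑ a ∈ s, Real.sqrt (f a) ^ 2 := by
    calc (∑ a ∈ s, Real.sqrt (f a)) ^ 2
        = (∑ a ∈ s, 1 * Real.sqrt (f a)) ^ 2 := by simp
      _ ≤ _ := Finset.sum_mul_sq_le_sq_mul_sq s _ _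
  have h3 : ∑ a ∈ s, Real.sqrt (f a) ^ 2 = ∑ a ∈ s, f a := by
    apply Finset.sum_congr rfl
    intro a ha
    exact Real.sq_sqrt (hf a ha)
  have h4 : 0 ≤ ∑ a ∈ s, Real.sqrt (f a) :=
    Finset.sum_nonneg fun a _ => Real.sqrt_nonneg _
  rw [← Real.sqrt_sq h4]
  apply Real.sqrt_le_sqrt
  calc (∑ a ∈ s, Real.sqrt (f a)) ^ 2 ≤ _ := h2
    _ = (s.card : ℝ) * ∑ a ∈ s, f a := by rw [h3]; simp

/-- **Runtime bound for the delayed-computation triangle algorithm.**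
With `L_A = π_A(R) ∩ π_A(T)` and, for each `a ∈ L_A`,
`L_B^a = π_B(σ_{A=a}R) ∩ π_B(S)`, we have
`∑_{a ∈ L_A} ∑_{b ∈ L_B^a} min(|π_C(σ_{B=b}S)|, |π_C(σ_{A=a}T)|) ≤ √(|R|·|S|·|T|)`. -/
theorem delayed_computation_runtime {A B C : Type*}
    [DecidableEq A] [DecidableEq B] [DecidableEq C]
    (R : Finset (A × B)) (S : Finset (B × C)) (T : Finset (A × C)) :
    (∑ a ∈ R.image Prod.fst ∩ T.image Prod.fst,
        ∑ b ∈ (R.filter (fun p => p.1 = a)).image Prod.snd ∩ S.image Prod.fst,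
          (min ((S.filter (fun p => p.1 = b)).image Prod.snd).card
            (((T.filter (fun p => p.1 = a)).image Prod.snd).card) : ℕ) : ℝ)
      ≤ Real.sqrt ((R.card : ℝ) * (S.card : ℝ) * (T.card : ℝ)) := by
  set LA := R.image Prod.fst ∩ T.image Prod.fst with hLA
  set LB := fun a => (R.filter (fun p => p.1 = a)).image Prod.snd ∩ S.image Prod.fst with hLB
  set dS : B → ℝ := fun b => ((S.filter (fun p => p.1 = b)).card : ℝ) with hdS
  set dT : A → ℝ := fun a => ((T.filter (fun p => p.1 = a)).card : ℝ) with hdT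
  set dR : A → ℝ := fun a => ((R.filter (fun p => p.1 = a)).card : ℝ) with hdR
  have dSnn : ∀ b, 0 ≤ dS b := fun b => Nat.cast_nonneg _
  have dTnn : ∀ a, 0 ≤ dT a := fun a => Nat.cast_nonneg _
  have dRnn : ∀ a, 0 ≤ dR a := fun a => Nat.cast_nonneg _
  -- Step 1: inner min ≤ √(dS b) * √(dT a)
  have step1 : ∀ a, ∀ b,
      ((min ((S.filter (fun p => p.1 = b)).image Prod.snd).card
        (((T.filter (fun p => p.1 = a)).image Prod.snd).card) : ℕ) : ℝ)
      ≤ Real.sqrt (dS b) * Real.sqrt (dT a) := by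
    intro a b
    have h1 : (((S.filter (fun p => p.1 = b)).image Prod.snd).card : ℝ) ≤ dS b :=
      Nat.cast_le.mpr Finset.card_image_le
    have h2 : (((T.filter (fun p => p.1 = a)).image Prod.snd).card : ℝ) ≤ dT a :=
      Nat.cast_le.mpr Finset.card_image_le
    set m : ℝ := ((min ((S.filter (fun p => p.1 = b)).image Prod.snd).card
        (((T.filter (fun p => p.1 = a)).image Prod.snd).card) : ℕ) : ℝ)
    have hmnn : 0 ≤ m := Nat.cast_nonneg _
    have hm1 : m ≤ dS b := le_trans (Nat.cast_le.mpr (min_le_left _ _)) h1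
    have hm2 : m ≤ dT a := le_trans (Nat.cast_le.mpr (min_le_right _ _)) h2
    rw [← Real.sqrt_mul (dSnn b)]
    rw [← Real.sqrt_mul_self hmnn]
    exact Real.sqrt_le_sqrt (mul_le_mul hm1 hm2 hmnn (dSnn b))
  -- Step 2: inner sum bound
  have cardLB : ∀ a, ((LB a).card : ℝ) ≤ dR a := by
    intro a
    show ((LB a).card : ℝ) ≤ (((R.filter (fun p => p.1 = a)).card : ℕ) : ℝ)
    exact_mod_cast le_trans (Finset.card_le_card Finset.inter_subset_left) Finset.card_image_le
  have sumdS : ∀ a, ∑ b ∈ LB a, dS b ≤ (S.card : ℝ) := by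
    intro a
    show ∑ b ∈ LB a, (((S.filter (fun p => p.1 = b)).card : ℕ) : ℝ) ≤ ((S.card : ℕ) : ℝ)
    exact_mod_cast sum_deg_le' S (LB a)
  have step2 : ∀ a ∈ LA,
      (∑ b ∈ LB a,
          ((min ((S.filter (fun p => p.1 = b)).image Prod.snd).card
            (((T.filter (fun p => p.1 = a)).image Prod.snd).card) : ℕ) : ℝ))
      ≤ Real.sqrt (dT a) * (Real.sqrt (dR a) * Real.sqrt (S.card : ℝ)) := by
    intro a _
    calc ∑ b ∈ LB a, ((min ((S.filter (fun p => p.1 = b)).image Prod.snd).card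
            (((T.filter (fun p => p.1 = a)).image Prod.snd).card) : ℕ) : ℝ)
        ≤ ∑ b ∈ LB a, Real.sqrt (dS b) * Real.sqrt (dT a) :=
          Finset.sum_le_sum fun b _ => step1 a b
      _ = Real.sqrt (dT a) * ∑ b ∈ LB a, Real.sqrt (dS b) := by
          rw [Finset.mul_sum]
          exact Finset.sum_congr rfl fun b _ => mul_comm _ _
      _ ≤ Real.sqrt (dT a) * Real.sqrt (((LB a).card : ℝ) * ∑ b ∈ LB a, dS b) := by
          apply mul_le_mul_of_nonneg_left _ (Real.sqrt_nonneg _)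
          exact sum_sqrt_le _ _ fun b _ => dSnn b
      _ ≤ Real.sqrt (dT a) * (Real.sqrt (dR a) * Real.sqrt (S.card : ℝ)) := by
          apply mul_le_mul_of_nonneg_left _ (Real.sqrt_nonneg _)
          rw [← Real.sqrt_mul (dRnn a)]
          apply Real.sqrt_le_sqrt
          apply mul_le_mul (cardLB a) (sumdS a)
            (Finset.sum_nonneg fun b _ => dSnn b) (dRnn a)
  -- Step 3: final Cauchy-Schwarz
  calc (∑ a ∈ LA, ∑ b ∈ LB a,
          ((min ((S.filter (fun p => p.1 = b)).image Prod.snd).card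
            (((T.filter (fun p => p.1 = a)).image Prod.snd).card) : ℕ) : ℝ))
      ≤ ∑ a ∈ LA, Real.sqrt (dT a) * (Real.sqrt (dR a) * Real.sqrt (S.card : ℝ)) :=
        Finset.sum_le_sum step2
    _ = Real.sqrt (S.card : ℝ) * ∑ a ∈ LA, Real.sqrt (dT a) * Real.sqrt (dR a) := by
        rw [Finset.mul_sum]; apply Finset.sum_congr rfl; intro a _; ring
    _ ≤ Real.sqrt (S.card : ℝ) * (Real.sqrt (T.card : ℝ) * Real.sqrt (R.card : ℝ)) := by
        apply mul_le_mul_of_nonneg_left _ (Real.sqrt_nonneg _)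
        have cs : (∑ a ∈ LA, Real.sqrt (dT a) * Real.sqrt (dR a)) ^ 2
            ≤ (∑ a ∈ LA, Real.sqrt (dT a) ^ 2) * ∑ a ∈ LA, Real.sqrt (dR a) ^ 2 :=
          Finset.sum_mul_sq_le_sq_mul_sq LA _ _
        have hT : ∑ a ∈ LA, Real.sqrt (dT a) ^ 2 ≤ (T.card : ℝ) := by
          calc ∑ a ∈ LA, Real.sqrt (dT a) ^ 2 = ∑ a ∈ LA, dT a := by
                apply Finset.sum_congr rfl; intro a _; exact Real.sq_sqrt (dTnn a)
            _ ≤ (T.card : ℝ) := by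
                show ∑ a ∈ LA, (((T.filter (fun p => p.1 = a)).card : ℕ) : ℝ) ≤ ((T.card : ℕ) : ℝ)
                exact_mod_cast sum_deg_le' T LA
        have hR : ∑ a ∈ LA, Real.sqrt (dR a) ^ 2 ≤ (R.card : ℝ) := by
          calc ∑ a ∈ LA, Real.sqrt (dR a) ^ 2 = ∑ a ∈ LA, dR a := by
                apply Finset.sum_congr rfl; intro a _; exact Real.sq_sqrt (dRnn a)
            _ ≤ (R.card : ℝ) := by
                show ∑ a ∈ LA, (((R.filter (fun p => p.1 = a)).card : ℕ) : ℝ) ≤ ((R.card : ℕ) : ℝ)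
                exact_mod_cast sum_deg_le' R LA
        have hnn : 0 ≤ ∑ a ∈ LA, Real.sqrt (dT a) * Real.sqrt (dR a) :=
          Finset.sum_nonneg fun a _ => mul_nonneg (Real.sqrt_nonneg _) (Real.sqrt_nonneg _)
        rw [← Real.sqrt_mul (Nat.cast_nonneg _), ← Real.sqrt_sq hnn]
        apply Real.sqrt_le_sqrt
        calc (∑ a ∈ LA, Real.sqrt (dT a) * Real.sqrt (dR a)) ^ 2 ≤ _ := cs
          _ ≤ (T.card : ℝ) * (R.card : ℝ) := by
              apply mul_le_mul hT hR (Finset.sum_nonneg fun a _ => sq_nonneg _)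
                (Nat.cast_nonneg _)
    _ = Real.sqrt ((R.card : ℝ) * (S.card : ℝ) * (T.card : ℝ)) := by
        rw [← Real.sqrt_mul (Nat.cast_nonneg _), ← Real.sqrt_mul (Nat.cast_nonneg _)]
        ring_nf
end

section
/- (AGM bound for Loomis–Whitney queries; discrete Loomis–Whitney inequality.) Let n ≥ 2, and for each i ∈ [n] let R_{-i} be a finite relation on the attribute set [n] ∖ {i} over a domain D, i.e. a finite set of tuples t : [n]∖{i} → D. Then the natural join satisfies |⋈_{i=1}^n R_{-i}| ≤ ∏_{i=1}^n |R_{-i}|^{1/(n-1)}. In particular, if |R_{-i}| = N for all i, then the join has at most N^{1+1/(n-1)} tuples. -/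
open scoped BigOperators

open scoped ENNReal


open scoped BigOperators ENNReal

lemma hoelder_sum {α : Type*} {m : ℕ} (s : Finset α) (f : Fin m → α → ℝ≥0∞) (p : ℝ)
    (hp : (m : ℝ) * p = 1) (hp0 : 0 ≤ p) :
    ∑ a ∈ s, ∏ i : Fin m, f i a ^ p ≤ ∏ i : Fin m, (∑ a ∈ s, f i a) ^ p := by
  classical
  letI : MeasurableSpace ↥s := ⊤
  haveI : MeasurableSingletonClass ↥s := ⟨fun _ => trivial⟩
  have H := ENNReal.lintegral_prod_norm_pow_le (μ := MeasureTheory.Measure.count (α := ↥s))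
    (Finset.univ : Finset (Fin m)) (f := fun i (a : ↥s) => f i a)
    (fun i _ => (measurable_from_top).aemeasurable) (p := fun _ => p)
    (by simp [Finset.sum_const, hp, mul_comm]) (fun i _ => hp0)
  simp only [MeasureTheory.lintegral_count, tsum_fintype] at H
  have h1 : ∑ a ∈ s, ∏ i : Fin m, f i a ^ p = ∑ a : ↥s, ∏ i : Fin m, f i ↑a ^ p :=
    (Finset.sum_coe_sort s _).symm
  have h2 : ∀ i : Fin m, (∑ a : ↥s, f i ↑a) = ∑ a ∈ s, f i a := fun i =>
    Finset.sum_coe_sort s (f i)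
  rw [h1]
  refine H.trans_eq (Finset.prod_congr rfl fun i _ => by rw [h2 i])

lemma lw_card (n : ℕ) (hn : 1 ≤ n) :
    ∀ {A : Type*} [DecidableEq A] (a₀ : A) (S : Finset (Fin n → A)),
      S.card ^ n ≤ S.card * ∏ i : Fin n, (S.image fun t => Function.update t i a₀).card := by
  induction n, hn using Nat.le_induction with
  | base =>
    intro A _ a₀ S
    rcases S.eq_empty_or_nonempty with h | h
    · simp [h]
    · rw [pow_one, Fin.prod_univ_one]
      exact Nat.le_mul_of_pos_right _ (Finset.card_pos.mpr (h.image _))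
  | succ n hn ih =>
    intro A _ a₀ S
    classical
    set l : Fin (n + 1) := Fin.last n with hl
    set P : Fin (n + 1) → Finset (Fin (n + 1) → A) :=
      fun j => S.image fun t => Function.update t j a₀ with hP
    set s : Finset A := S.image fun t => t l with hs
    set Sa : A → Finset (Fin (n + 1) → A) := fun a => S.filter (fun t => t l = a) with hSa
    set Ta : A → Finset (Fin n → A) := fun a => (Sa a).image Fin.init with hTa
    have snoc_inj : ∀ (x : A), Function.Injective (fun u : Fin n → A => (Fin.snoc u x : Fin (n+1) → A)) := by
      intro x u u' h
      have := congrArg Fin.init h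
      simpa [Fin.init_snoc] using this
    have cardTa : ∀ a, (Ta a).card = (Sa a).card := by
      intro a
      apply Finset.card_image_of_injOn
      intro t ht t' ht' h
      have h1 : t l = a := (Finset.mem_filter.mp ht).2
      have h2 : t' l = a := (Finset.mem_filter.mp ht').2
      funext j
      refine Fin.lastCases ?_ ?_ j
      · rw [← hl, h1, h2]
      · intro k
        exact congrFun h k
    -- Claim A
    have claimA : ∀ a, (Ta a).card ≤ (P l).card := by
      intro a
      have hsub : (Ta a).image (fun u => (Fin.snoc u a₀ : Fin (n+1) → A)) ⊆ P l := by
        intro v hv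
        rcases Finset.mem_image.mp hv with ⟨u, hu, rfl⟩
        rcases Finset.mem_image.mp hu with ⟨t, ht, rfl⟩
        have htS : t ∈ S := (Finset.mem_filter.mp ht).1
        refine Finset.mem_image.mpr ⟨t, htS, ?_⟩
        funext j
        refine Fin.lastCases ?_ ?_ j
        · simp [hl, Fin.snoc_last]
        · intro k
          have hk : (k.castSucc : Fin (n + 1)) ≠ l := (Fin.castSucc_lt_last k).ne
          simp [Function.update_of_ne hk, Fin.snoc_castSucc, Fin.init]
      calc (Ta a).card = ((Ta a).image (fun u => (Fin.snoc u a₀ : Fin (n+1) → A))).card :=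
            (Finset.card_image_of_injective _ (snoc_inj a₀)).symm
        _ ≤ (P l).card := Finset.card_le_card hsub
    -- Claim B
    have claimB : ∀ (a : A) (i : Fin n),
        ((Ta a).image fun u => Function.update u i a₀).card
          ≤ ((P i.castSucc).filter fun t => t l = a).card := by
      intro a i
      have hsub : (((Ta a).image fun u => Function.update u i a₀).image
          (fun u => (Fin.snoc u a : Fin (n+1) → A))) ⊆ (P i.castSucc).filter fun t => t l = a := by
        intro w hw
        rcases Finset.mem_image.mp hw with ⟨v, hv, rfl⟩
        rcases Finset.mem_image.mp hv with ⟨u, hu, rfl⟩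
        rcases Finset.mem_image.mp hu with ⟨t, ht, rfl⟩
        have htS : t ∈ S := (Finset.mem_filter.mp ht).1
        have htl : t l = a := (Finset.mem_filter.mp ht).2
        have hkey : (Fin.snoc (Function.update (Fin.init t) i a₀) a : Fin (n+1) → A)
            = Function.update t i.castSucc a₀ := by
          funext j
          refine Fin.lastCases ?_ ?_ j
          · have hne : (Fin.last n : Fin (n+1)) ≠ i.castSucc := (Fin.castSucc_lt_last i).ne'
            simp [Function.update_of_ne hne, hl, htl, Fin.snoc_last]
            exact htl.symm
          · intro k
            rcases eq_or_ne k i with rfl | hki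
            · simp
            · have h1 : (k.castSucc : Fin (n+1)) ≠ i.castSucc :=
                fun h => hki (Fin.castSucc_injective _ h)
              simp [Fin.snoc_castSucc, Function.update_of_ne hki,
                Function.update_of_ne h1, Fin.init]
        rw [hkey]
        refine Finset.mem_filter.mpr ⟨Finset.mem_image.mpr ⟨t, htS, rfl⟩, ?_⟩
        have hne : (l : Fin (n+1)) ≠ i.castSucc := (Fin.castSucc_lt_last i).ne'
        rw [Function.update_of_ne hne, htl]
      calc ((Ta a).image fun u => Function.update u i a₀).card
          = (((Ta a).image fun u => Function.update u i a₀).image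
              (fun u => (Fin.snoc u a : Fin (n+1) → A))).card :=
            (Finset.card_image_of_injective _ (snoc_inj a)).symm
        _ ≤ ((P i.castSucc).filter fun t => t l = a).card := Finset.card_le_card hsub
    -- pointwise ℕ bound
    have keyNat : ∀ a : A, (Sa a).card ^ (n + 1)
        ≤ (P l).card * ((Sa a).card *
            ∏ i : Fin n, ((P i.castSucc).filter fun t => t l = a).card) := by
      intro a
      have hIH := ih a₀ (Ta a)
      rw [cardTa] at hIH
      calc (Sa a).card ^ (n + 1) = (Sa a).card * (Sa a).card ^ n := by ring
        _ ≤ (Sa a).card * ((Sa a).card *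
              ∏ i : Fin n, ((Ta a).image fun u => Function.update u i a₀).card) :=
            Nat.mul_le_mul_left _ hIH
        _ ≤ (P l).card * ((Sa a).card *
              ∏ i : Fin n, ((P i.castSucc).filter fun t => t l = a).card) := by
            refine Nat.mul_le_mul (cardTa a ▸ claimA a) (Nat.mul_le_mul_left _ ?_)
            exact Finset.prod_le_prod' fun i _ => claimB a i
    -- move to ℝ≥0∞
    set p : ℝ := 1 / (n + 1 : ℝ) with hp
    have hp0 : 0 ≤ p := by positivity
    have hpmul : ((n + 1 : ℕ) : ℝ) * p = 1 := by
      rw [hp]; push_cast; field_simp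
    set f : Fin (n + 1) → A → ℝ≥0∞ := fun j a =>
      Fin.lastCases ((Sa a).card : ℝ≥0∞)
        (fun i => (((P i.castSucc).filter fun t => t l = a).card : ℝ≥0∞)) j with hf
    have hflast : ∀ a, f l a = ((Sa a).card : ℝ≥0∞) := fun a => by
      show (Fin.lastCases _ _ (Fin.last n) : ℝ≥0∞) = _
      exact Fin.lastCases_last
    have hfcast : ∀ a (i : Fin n),
        f i.castSucc a = (((P i.castSucc).filter fun t => t l = a).card : ℝ≥0∞) :=
      fun a i => by simp [hf, Fin.lastCases_castSucc]
    have key : ∀ a : A, ((Sa a).card : ℝ≥0∞)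
        ≤ ((P l).card : ℝ≥0∞) ^ p * ∏ j : Fin (n + 1), f j a ^ p := by
      intro a
      have h1 : (((Sa a).card : ℝ≥0∞) ^ (n + 1 : ℕ)) ^ p
          ≤ ((((P l).card : ℝ≥0∞) * (((Sa a).card : ℝ≥0∞) *
              ∏ i : Fin n, (((P i.castSucc).filter fun t => t l = a).card : ℝ≥0∞)))) ^ p := by
        apply ENNReal.rpow_le_rpow _ hp0
        exact_mod_cast keyNat a
      have h2 : (((Sa a).card : ℝ≥0∞) ^ (n + 1 : ℕ)) ^ p = ((Sa a).card : ℝ≥0∞) := by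
        rw [← ENNReal.rpow_natCast, ← ENNReal.rpow_mul, hpmul, ENNReal.rpow_one]
      rw [← h2]
      refine h1.trans_eq ?_
      rw [ENNReal.mul_rpow_of_nonneg _ _ hp0, ENNReal.mul_rpow_of_nonneg _ _ hp0,
        ← ENNReal.prod_rpow_of_nonneg hp0]
      congr 1
      rw [Fin.prod_univ_castSucc (f := fun j => f j a ^ p)]
      rw [hflast, mul_comm]
      congr 1
      exact Finset.prod_congr rfl fun i _ => by rw [hfcast]
    -- summing
    have hcardsum : S.card = ∑ a ∈ s, (Sa a).card :=
      Finset.card_eq_sum_card_fiberwise fun t ht => Finset.mem_image_of_mem _ ht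
    have hfil : ∀ (Q : Finset (Fin (n + 1) → A)),
        ∑ a ∈ s, ((Q.filter fun t => t l = a).card) ≤ Q.card := by
      intro Q
      rw [← Finset.card_biUnion]
      · exact Finset.card_le_card (Finset.biUnion_subset.mpr fun a _ => Finset.filter_subset _ _)
      · intro a _ b _ hab
        refine Finset.disjoint_left.mpr fun t hta htb => ?_
        have h1 := (Finset.mem_filter.mp hta).2
        have h2 := (Finset.mem_filter.mp htb).2
        exact hab (h1 ▸ h2 ▸ rfl)
    set g : Fin (n + 1) → ℝ≥0∞ := fun j =>
      Fin.lastCases ((S.card : ℝ≥0∞)) (fun i => ((P i.castSucc).card : ℝ≥0∞)) j with hg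
    have hsumf : ∀ j : Fin (n + 1), ∑ a ∈ s, f j a ≤ g j := by
      intro j
      refine Fin.lastCases ?_ ?_ j
      · have hgl : g (Fin.last n) = (S.card : ℝ≥0∞) := by
          show (Fin.lastCases _ _ (Fin.last n) : ℝ≥0∞) = _
          exact Fin.lastCases_last
        rw [hgl]
        calc ∑ a ∈ s, f (Fin.last n) a = ∑ a ∈ s, ((Sa a).card : ℝ≥0∞) :=
              Finset.sum_congr rfl fun a _ => hflast a
          _ = ((S.card : ℕ) : ℝ≥0∞) := by rw [hcardsum]; push_cast; ring
          _ ≤ (S.card : ℝ≥0∞) := le_rfl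
      · intro i
        have hgc : g i.castSucc = ((P i.castSucc).card : ℝ≥0∞) := by
          show (Fin.lastCases _ _ i.castSucc : ℝ≥0∞) = _
          exact Fin.lastCases_castSucc i
        rw [hgc]
        calc ∑ a ∈ s, f i.castSucc a
            = ∑ a ∈ s, (((P i.castSucc).filter fun t => t l = a).card : ℝ≥0∞) :=
              Finset.sum_congr rfl fun a _ => hfcast a i
          _ ≤ ((P i.castSucc).card : ℝ≥0∞) := by exact_mod_cast hfil (P i.castSucc)
    have main : (S.card : ℝ≥0∞) ≤ ((P l).card : ℝ≥0∞) ^ p * ∏ j : Fin (n + 1), g j ^ p := by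
      calc (S.card : ℝ≥0∞) = ∑ a ∈ s, ((Sa a).card : ℝ≥0∞) := by
            rw [hcardsum]; push_cast; ring
        _ ≤ ∑ a ∈ s, (((P l).card : ℝ≥0∞) ^ p * ∏ j : Fin (n + 1), f j a ^ p) :=
            Finset.sum_le_sum fun a _ => key a
        _ = ((P l).card : ℝ≥0∞) ^ p * ∑ a ∈ s, ∏ j : Fin (n + 1), f j a ^ p := by
            rw [Finset.mul_sum]
        _ ≤ ((P l).card : ℝ≥0∞) ^ p * ∏ j : Fin (n + 1), (∑ a ∈ s, f j a) ^ p := by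
            exact mul_le_mul_right (hoelder_sum s f p hpmul hp0) _
        _ ≤ ((P l).card : ℝ≥0∞) ^ p * ∏ j : Fin (n + 1), g j ^ p := by
            refine mul_le_mul_right (Finset.prod_le_prod' fun j _ => ?_) _
            exact ENNReal.rpow_le_rpow (hsumf j) hp0
    -- raise both sides to n+1
    have hpow : (S.card : ℝ≥0∞) ^ (n + 1 : ℕ)
        ≤ ((P l).card : ℝ≥0∞) * ∏ j : Fin (n + 1), g j := by
      have h1 := pow_le_pow_left₀ zero_le main (n + 1)
      have hexp : ∀ x : ℝ≥0∞, (x ^ p) ^ (n + 1 : ℕ) = x := fun x => by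
        rw [← ENNReal.rpow_natCast (x ^ p), ← ENNReal.rpow_mul, mul_comm, hpmul,
          ENNReal.rpow_one]
      refine h1.trans_eq ?_
      rw [mul_pow, hexp, ← Finset.prod_pow]
      congr 1
      exact Finset.prod_congr rfl fun j _ => hexp (g j)
    have hgprod : ∏ j : Fin (n + 1), g j
        = (∏ i : Fin n, ((P i.castSucc).card : ℝ≥0∞)) * (S.card : ℝ≥0∞) := by
      rw [Fin.prod_univ_castSucc (f := g)]
      congr 1
      · refine Finset.prod_congr rfl fun i _ => ?_
        show (Fin.lastCases _ _ i.castSucc : ℝ≥0∞) = _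
        exact Fin.lastCases_castSucc i
      · show (Fin.lastCases _ _ (Fin.last n) : ℝ≥0∞) = _
        exact Fin.lastCases_last
    have final : (S.card : ℝ≥0∞) ^ (n + 1)
        ≤ ((S.card * ∏ j : Fin (n + 1), (P j).card : ℕ) : ℝ≥0∞) := by
      refine hpow.trans_eq ?_
      rw [hgprod]
      push_cast
      rw [Fin.prod_univ_castSucc (f := fun j => ((P j).card : ℝ≥0∞))]
      ring
    exact_mod_cast final

/-- **AGM bound for Loomis–Whitney queries (discrete Loomis–Whitney inequality).**
For `n ≥ 2` and finite relations `R_{-i}` on attribute sets `[n] ∖ {i}`,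
`|⋈_{i} R_{-i}| ≤ ∏_i |R_{-i}| ^ (1/(n-1))`; in particular if all `|R_{-i}| = N`
then the join has at most `N^(1 + 1/(n-1))` tuples. -/
theorem loomis_whitney {D : Type*} (n : ℕ) (hn : 2 ≤ n)
    (R : (i : Fin n) → Set ({j : Fin n // j ≠ i} → D))
    (hR : ∀ i, (R i).Finite) :
    (({t : Fin n → D | ∀ i : Fin n,
        (fun j : {j : Fin n // j ≠ i} => t j.1) ∈ R i}).ncard : ℝ)
        ≤ ∏ i : Fin n, ((R i).ncard : ℝ) ^ ((1 : ℝ) / ((n : ℝ) - 1)) ∧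
      ∀ N : ℕ, (∀ i : Fin n, (R i).ncard = N) →
        (({t : Fin n → D | ∀ i : Fin n,
            (fun j : {j : Fin n // j ≠ i} => t j.1) ∈ R i}).ncard : ℝ)
          ≤ (N : ℝ) ^ ((1 : ℝ) + 1 / ((n : ℝ) - 1)) := by
  classical
  have hn1 : (1 : ℝ) ≤ (n : ℝ) := by exact_mod_cast Nat.one_le_of_lt hn
  have hne : (n : ℝ) - 1 ≠ 0 := by
    have : (2 : ℝ) ≤ (n : ℝ) := by exact_mod_cast hn
    linarith
  have hpos : (0 : ℝ) < (n : ℝ) - 1 := by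
    have : (2 : ℝ) ≤ (n : ℝ) := by exact_mod_cast hn
    linarith
  set J : Set (Fin n → D) := {t : Fin n → D | ∀ i : Fin n,
      (fun j : {j : Fin n // j ≠ i} => t j.1) ∈ R i} with hJ
  -- reduce the second statement to the first
  suffices h1 : (J.ncard : ℝ) ≤ ∏ i : Fin n, ((R i).ncard : ℝ) ^ ((1 : ℝ) / ((n : ℝ) - 1)) by
    refine ⟨h1, fun N hN => ?_⟩
    refine h1.trans_eq ?_
    calc ∏ i : Fin n, ((R i).ncard : ℝ) ^ ((1 : ℝ) / ((n : ℝ) - 1))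
        = ∏ _i : Fin n, ((N : ℝ)) ^ ((1 : ℝ) / ((n : ℝ) - 1)) := by
          exact Finset.prod_congr rfl fun i _ => by rw [hN i]
      _ = (((N : ℝ)) ^ ((1 : ℝ) / ((n : ℝ) - 1))) ^ (n : ℕ) := by
          rw [Finset.prod_const, Finset.card_univ, Fintype.card_fin]
      _ = (N : ℝ) ^ ((1 : ℝ) + 1 / ((n : ℝ) - 1)) := by
          rw [← Real.rpow_natCast ((N : ℝ) ^ ((1 : ℝ) / ((n : ℝ) - 1))) n,
            ← Real.rpow_mul (Nat.cast_nonneg N)]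
          congr 1
          field_simp
          ring
  -- now the main inequality
  rcases isEmpty_or_nonempty D with hD | hD
  · have : J = ∅ := by
      ext t
      simp only [Set.mem_empty_iff_false, iff_false]
      intro ht
      exact (IsEmpty.false (t ⟨0, by omega⟩))
    rw [this]
    simp only [Set.ncard_empty, Nat.cast_zero]
    positivity
  obtain ⟨a₀⟩ := hD
  -- J is finite
  have h0n : 0 < n := by omega
  have h1n : 1 < n := by omega
  set i0 : Fin n := ⟨0, h0n⟩ with hi0
  set i1 : Fin n := ⟨1, h1n⟩ with hi1
  have hzero : i0 ≠ i1 := by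
    intro h
    have := congrArg Fin.val h
    simp [hi0, hi1] at this
  have hJfin : J.Finite := by
    set φ : (Fin n → D) → (({j : Fin n // j ≠ i0} → D) × ({j : Fin n // j ≠ i1} → D)) :=
      fun t => (fun j => t j.1, fun j => t j.1) with hφ
    have hinj : Function.Injective φ := by
      intro t t' h
      funext x
      rcases eq_or_ne x i0 with rfl | hx
      · exact congrFun (congrArg Prod.snd h) ⟨i0, hzero⟩
      · exact congrFun (congrArg Prod.fst h) ⟨x, hx⟩
    have hsub : J ⊆ φ ⁻¹' ((R i0) ×ˢ (R i1)) := fun t ht => ⟨ht i0, ht i1⟩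
    exact Set.Finite.subset (((hR i0).prod (hR i1)).preimage hinj.injOn) hsub
  set F : Finset (Fin n → D) := hJfin.toFinset with hF
  have hJcard : J.ncard = F.card := Set.ncard_eq_toFinset_card J hJfin
  have key := lw_card n (by omega) a₀ F
  -- bound each projection by (R i).ncard
  have himg : ∀ i : Fin n, (F.image fun t => Function.update t i a₀).card ≤ (R i).ncard := by
    intro i
    set ψ : (Fin n → D) → ({j : Fin n // j ≠ i} → D) := fun u j => u j.1 with hψ
    have hinj : Set.InjOn ψ ↑(F.image fun t => Function.update t i a₀) := by
      intro u hu u' hu' h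
      simp only [Finset.coe_image, Set.mem_image, Finset.mem_coe] at hu hu'
      obtain ⟨t, _, rfl⟩ := hu
      obtain ⟨t', _, rfl⟩ := hu'
      funext x
      rcases eq_or_ne x i with rfl | hx
      · rw [Function.update_self, Function.update_self]
      · have := congrFun h ⟨x, hx⟩
        simpa [hψ, Function.update_of_ne hx] using this
    have hsub : ψ '' ↑(F.image fun t => Function.update t i a₀) ⊆ R i := by
      rintro _ ⟨u, hu, rfl⟩
      simp only [Finset.coe_image, Set.mem_image, Finset.mem_coe] at hu
      obtain ⟨t, htF, rfl⟩ := hu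
      have htJ : t ∈ J := by
        rw [hF] at htF
        exact (Set.Finite.mem_toFinset hJfin).mp htF
      have : ψ (Function.update t i a₀) = fun j : {j : Fin n // j ≠ i} => t j.1 := by
        funext j
        exact Function.update_of_ne j.2 a₀ t
      rw [this]
      exact htJ i
    calc (F.image fun t => Function.update t i a₀).card
        = (ψ '' ↑(F.image fun t => Function.update t i a₀)).ncard := by
          rw [Set.ncard_image_of_injOn hinj, Set.ncard_coe_finset]
      _ ≤ (R i).ncard := Set.ncard_le_ncard hsub (hR i)
  have keyNat : F.card ^ n ≤ F.card * ∏ i : Fin n, (R i).ncard :=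
    key.trans (Nat.mul_le_mul_left _ (Finset.prod_le_prod' fun i _ => himg i))
  rw [hJcard]
  rcases Nat.eq_zero_or_pos F.card with hc | hc
  · rw [hc]
    simp only [Nat.cast_zero]
    positivity
  have hcancel : F.card ^ (n - 1) ≤ ∏ i : Fin n, (R i).ncard := by
    refine Nat.le_of_mul_le_mul_left ?_ hc
    calc F.card * F.card ^ (n - 1) = F.card ^ ((n - 1) + 1) := (pow_succ' _ _).symm
      _ = F.card ^ n := by congr 1; omega
      _ ≤ F.card * ∏ i : Fin n, (R i).ncard := keyNat
  have hreal : ((F.card : ℝ)) ^ ((n : ℝ) - 1) ≤ ∏ i : Fin n, ((R i).ncard : ℝ) := by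
    have h1 : ((F.card : ℝ)) ^ ((n - 1 : ℕ) : ℝ) ≤ ∏ i : Fin n, ((R i).ncard : ℝ) := by
      rw [Real.rpow_natCast]
      exact_mod_cast hcancel
    have h2 : ((n - 1 : ℕ) : ℝ) = (n : ℝ) - 1 := by
      have : 1 ≤ n := by omega
      push_cast [this]
      ring
    rwa [h2] at h1
  have hFc : (F.card : ℝ) = (((F.card : ℝ)) ^ ((n : ℝ) - 1)) ^ ((1 : ℝ) / ((n : ℝ) - 1)) := by
    rw [← Real.rpow_mul (Nat.cast_nonneg F.card), mul_one_div, div_self hne, Real.rpow_one]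
  calc (F.card : ℝ)
      = (((F.card : ℝ)) ^ ((n : ℝ) - 1)) ^ ((1 : ℝ) / ((n : ℝ) - 1)) := hFc
    _ ≤ (∏ i : Fin n, ((R i).ncard : ℝ)) ^ ((1 : ℝ) / ((n : ℝ) - 1)) := by
        refine Real.rpow_le_rpow ?_ hreal (by positivity)
        exact Real.rpow_nonneg (Nat.cast_nonneg _) _
    _ = ∏ i : Fin n, ((R i).ncard : ℝ) ^ ((1 : ℝ) / ((n : ℝ) - 1)) :=
        (Real.finset_prod_rpow _ _ (fun i _ => Nat.cast_nonneg _) _).symm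
end

section
/- (AGM bound for clique queries.) Let n ≥ 3, and for each pair i < j in [n] let R_{i,j} be a finite binary relation over a domain D on the attribute pair {i, j}, i.e. a finite set of pairs in D × D. Then the natural join K_n = ⋈_{i<j} R_{i,j}, consisting of all tuples t : [n] → D with (t(i), t(j)) ∈ R_{i,j} for all i < j, satisfies |K_n| ≤ (∏_{i<j} |R_{i,j}|)^{1/(n-1)}. In particular, if |R_{i,j}| = N for all i < j, then |K_n| ≤ N^{n/2}. -/
open scoped BigOperators

set_option maxHeartbeats 1000000

open scoped ENNReal

lemma holder_sum {ι α : Type*} (s : Finset ι) (t : Finset α) (f : ι → α → ℝ≥0∞)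
    {p : ι → ℝ} (hp : ∑ i ∈ s, p i = 1) (h2p : ∀ i ∈ s, 0 ≤ p i) :
    ∑ a ∈ t, ∏ i ∈ s, f i a ^ p i ≤ ∏ i ∈ s, (∑ a ∈ t, f i a) ^ p i := by
  letI : MeasurableSpace {a // a ∈ t} := ⊤
  haveI : MeasurableSingletonClass {a // a ∈ t} := ⟨fun _ => trivial⟩
  have key := ENNReal.lintegral_prod_norm_pow_le
    (μ := MeasureTheory.Measure.count (α := {a // a ∈ t})) s
    (f := fun i a => f i a.1) (fun i _ => Measurable.aemeasurable (by exact fun _ _ => trivial))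
    hp h2p
  rw [MeasureTheory.lintegral_count] at key
  simp_rw [MeasureTheory.lintegral_count, tsum_fintype] at key
  calc ∑ a ∈ t, ∏ i ∈ s, f i a ^ p i
      = ∑ a : {a // a ∈ t}, ∏ i ∈ s, f i a.1 ^ p i := (Finset.sum_coe_sort t _).symm
    _ ≤ ∏ i ∈ s, (∑ a : {a // a ∈ t}, f i a.1) ^ p i := by
        exact key
    _ = ∏ i ∈ s, (∑ a ∈ t, f i a) ^ p i := by
        congr 1; ext i; rw [Finset.sum_coe_sort]

lemma LW {ι D : Type*} [DecidableEq ι] [DecidableEq D] [DecidableEq (ι → D)] [Inhabited D] (A : Finset ι) (hA : 2 ≤ A.card)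
    (S : Finset (ι → D)) (hsupp : ∀ t ∈ S, ∀ j, j ∉ A → t j = default) :
    S.card ^ (A.card - 1) ≤
      ∏ i ∈ A, (S.image (fun t => Function.update t i default)).card := by
  classical
  induction A using Finset.strongInduction generalizing S with
  | _ A ih =>
  rcases eq_or_lt_of_le hA with h2 | h3
  · -- base case |A| = 2
    obtain ⟨i₀, i₁, hne, hA2⟩ := Finset.card_eq_two.mp h2.symm
    subst hA2
    have hinj : Set.InjOn
        (fun t => (Function.update t i₀ default, Function.update t i₁ default))
        (S : Set (ι → D)) := by
      intro t ht t' ht' h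
      simp only [Prod.mk.injEq] at h
      funext j
      by_cases hj : j = i₀
      · subst hj
        have := congrFun h.2 j
        simpa [Function.update, hne] using this
      · have := congrFun h.1 j
        simpa [Function.update, hj] using this
    have hmaps : ∀ t ∈ S,
        (Function.update t i₀ default, Function.update t i₁ default) ∈
          (S.image (fun t => Function.update t i₀ default)) ×ˢ
          (S.image (fun t => Function.update t i₁ default)) := by
      intro t ht
      exact Finset.mk_mem_product (Finset.mem_image_of_mem _ ht)
        (Finset.mem_image_of_mem _ ht)
    have := Finset.card_le_card_of_injOn _ hmaps hinj
    rw [Finset.card_product] at this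
    simpa [← h2, Finset.prod_insert, hne] using this
  · -- induction step, |A| ≥ 3
    obtain ⟨i₀, hi₀⟩ := Finset.card_pos.mp (by omega : 0 < A.card)
    set B := A.erase i₀ with hB
    have hBA : B ⊂ A := Finset.erase_ssubset hi₀
    have hBcard : B.card = A.card - 1 := Finset.card_erase_of_mem hi₀
    have hB2 : 2 ≤ B.card := by omega
    set m := B.card with hm
    have hmpos : (0:ℝ) < (m : ℝ) := by exact_mod_cast (by omega : 0 < m)
    set q : ℝ := 1 / (m : ℝ) with hq
    have hq0 : 0 ≤ q := by positivity
    set π : ι → (ι → D) → (ι → D) := fun i t => Function.update t i default with hπ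
    set Sv : D → Finset (ι → D) := fun v => S.filter (fun t => t i₀ = v) with hSvdef
    set Tv : D → Finset (ι → D) := fun v => (Sv v).image (π i₀) with hTvdef
    set V : Finset D := S.image (fun t => t i₀) with hVdef
    -- (1) cardinality by fibers
    have hsum : S.card = ∑ v ∈ V, (Sv v).card :=
      Finset.card_eq_sum_card_fiberwise (fun t ht => Finset.mem_image_of_mem _ ht)
    -- (2) Tv has the same card as Sv
    have hTcard : ∀ v, (Tv v).card = (Sv v).card := by
      intro v
      apply Finset.card_image_of_injOn
      intro t ht t' ht' h
      have hti : t i₀ = v := (Finset.mem_filter.mp ht).2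
      have ht'i : t' i₀ = v := (Finset.mem_filter.mp ht').2
      funext j
      by_cases hj : j = i₀
      · subst hj; rw [hti, ht'i]
      · have := congrFun h j
        simpa [π, Function.update, hj] using this
    -- (3) Tv supported on B
    have hTsupp : ∀ v, ∀ t ∈ Tv v, ∀ j, j ∉ B → t j = default := by
      intro v t ht j hj
      obtain ⟨u, hu, rfl⟩ := Finset.mem_image.mp ht
      by_cases hji : j = i₀
      · subst hji; simp [π]
      · have hjA : j ∉ A := by
          intro hjA
          exact hj (Finset.mem_erase.mpr ⟨hji, hjA⟩)
        have := hsupp u (Finset.mem_filter.mp hu).1 j hjA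
        simpa [π, Function.update, hji] using this
    -- (4) IH applied to slices
    have hIH : ∀ v, (Sv v).card ^ (m - 1) ≤ ∏ i ∈ B, ((Tv v).image (π i)).card := by
      intro v
      rw [← hTcard v]
      exact ih B hBA hB2 (Tv v) (hTsupp v)
    -- (5) each slice is at most the i₀-projection
    have hslice : ∀ v, (Sv v).card ≤ (S.image (π i₀)).card := by
      intro v
      rw [← hTcard v]
      exact Finset.card_le_card (Finset.image_subset_image (Finset.filter_subset _ _))
    -- (6) summed projections of slices are at most the global projection
    have hsumproj : ∀ i ∈ B, ∑ v ∈ V, ((Tv v).image (π i)).card ≤ (S.image (π i)).card := by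
      intro i hiB
      have hii₀ : i ≠ i₀ := (Finset.mem_erase.mp hiB).1
      set W : D → Finset (ι → D) := fun v =>
        ((Tv v).image (π i)).image (fun u => Function.update u i₀ v) with hWdef
      have hudef : ∀ v, ∀ u ∈ (Tv v).image (π i), u i₀ = default := by
        intro v u hu
        obtain ⟨w, hw, rfl⟩ := Finset.mem_image.mp hu
        obtain ⟨t, ht, rfl⟩ := Finset.mem_image.mp hw
        simp [π, Function.update, hii₀]
      have hWcard : ∀ v, (W v).card = ((Tv v).image (π i)).card := by
        intro v
        apply Finset.card_image_of_injOn
        intro u hu u' hu' h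
        funext j
        by_cases hj : j = i₀
        · subst hj; rw [hudef v u hu, hudef v u' hu']
        · have := congrFun h j
          simpa [Function.update, hj] using this
      have hWsub : ∀ v ∈ V, W v ⊆ S.image (π i) := by
        intro v hv w hw
        obtain ⟨u, hu, rfl⟩ := Finset.mem_image.mp hw
        obtain ⟨u', hu', rfl⟩ := Finset.mem_image.mp hu
        obtain ⟨t, ht, rfl⟩ := Finset.mem_image.mp hu'
        have htS : t ∈ S := (Finset.mem_filter.mp ht).1
        have hti : t i₀ = v := (Finset.mem_filter.mp ht).2
        have : Function.update (π i (π i₀ t)) i₀ v = π i t := by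
          funext j
          by_cases hj : j = i₀
          · subst hj; simp [π, Function.update, hii₀, Ne.symm hii₀, hti]
          · by_cases hj2 : j = i
            · subst hj2; simp [π, Function.update, hii₀, hj]
            · simp [π, Function.update, hj, hj2]
        rw [this]
        exact Finset.mem_image_of_mem _ htS
      have hWdisj : (V : Set D).PairwiseDisjoint W := by
        intro v hv v' hv' hne
        apply Finset.disjoint_left.mpr
        intro w hw hw'
        obtain ⟨u, hu, rfl⟩ := Finset.mem_image.mp hw
        obtain ⟨u', hu', heq⟩ := Finset.mem_image.mp hw'
        apply hne
        have h1 : Function.update u i₀ v i₀ = v := by simp [Function.update]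
        have h2 : Function.update u' i₀ v' i₀ = v' := by simp [Function.update]
        rw [← h1, ← heq, h2]
      calc ∑ v ∈ V, ((Tv v).image (π i)).card
          = ∑ v ∈ V, (W v).card := by
            exact Finset.sum_congr rfl (fun v _ => (hWcard v).symm)
        _ = (V.biUnion W).card := (Finset.card_biUnion hWdisj).symm
        _ ≤ (S.image (π i)).card := by
            apply Finset.card_le_card
            exact Finset.biUnion_subset.mpr hWsub
    -- now the ENNReal chain
    set g : ι → ℝ≥0∞ := fun i => ((S.image (π i)).card : ℝ≥0∞) with hgdef
    set c : D → ℝ≥0∞ := fun v => ((Sv v).card : ℝ≥0∞) with hcdef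
    set f : ι → D → ℝ≥0∞ := fun i v => (((Tv v).image (π i)).card : ℝ≥0∞) with hfdef
    have key : (S.card : ℝ≥0∞) ≤ g i₀ ^ q * ∏ i ∈ B, g i ^ q := by
      calc (S.card : ℝ≥0∞) = ∑ v ∈ V, c v := by
            simp only [hcdef]; exact_mod_cast hsum
        _ ≤ ∑ v ∈ V, g i₀ ^ q * ∏ i ∈ B, f i v ^ q := by
            apply Finset.sum_le_sum
            intro v hv
            have step1 : c v = c v ^ q * c v ^ (1 - q) := by
              rw [← ENNReal.rpow_add_of_nonneg q (1 - q) hq0 (by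
                  rw [hq, sub_nonneg]
                  rw [div_le_one hmpos]
                  exact_mod_cast (by omega : 1 ≤ m))]
              simp
            have step2 : c v ^ q ≤ g i₀ ^ q :=
              ENNReal.rpow_le_rpow
                (by simp only [hcdef, hgdef]; exact_mod_cast hslice v) hq0
            have step3 : c v ^ (1 - q) ≤ ∏ i ∈ B, f i v ^ q := by
              have hnat : (c v ^ (m - 1) : ℝ≥0∞) ≤ ∏ i ∈ B, f i v := by
                simp only [hcdef, hfdef]
                exact_mod_cast hIH v
              have := ENNReal.rpow_le_rpow hnat hq0
              rw [← ENNReal.prod_rpow_of_nonneg hq0] at this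
              refine le_trans (le_of_eq ?_) this
              rw [← ENNReal.rpow_natCast (c v) (m - 1), ← ENNReal.rpow_mul]
              congr 1
              have : ((m - 1 : ℕ) : ℝ) = (m : ℝ) - 1 := by
                push_cast [Nat.cast_sub (by omega : 1 ≤ m)]; ring
              rw [this, hq]
              field_simp
            calc c v = c v ^ q * c v ^ (1 - q) := step1
              _ ≤ g i₀ ^ q * ∏ i ∈ B, f i v ^ q := mul_le_mul' step2 step3
        _ = g i₀ ^ q * ∑ v ∈ V, ∏ i ∈ B, f i v ^ q := by rw [Finset.mul_sum]
        _ ≤ g i₀ ^ q * ∏ i ∈ B, (∑ v ∈ V, f i v) ^ q := by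
            apply mul_le_mul_right
            apply holder_sum B V f (p := fun _ => q)
            · rw [Finset.sum_const, ← hm, hq, nsmul_eq_mul]
              field_simp
            · intro _ _; exact hq0
        _ ≤ g i₀ ^ q * ∏ i ∈ B, g i ^ q := by
            apply mul_le_mul_right
            apply Finset.prod_le_prod' 
            intro i hiB
            apply ENNReal.rpow_le_rpow _ hq0
            have := hsumproj i hiB
            calc ∑ v ∈ V, f i v = ((∑ v ∈ V, ((Tv v).image (π i)).card : ℕ) : ℝ≥0∞) := by
                  simp only [hfdef]; push_cast; rfl
              _ ≤ g i := by simp only [hgdef]; exact_mod_cast this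
    -- raise to the m-th power
    have key2 : (S.card : ℝ≥0∞) ^ (m : ℕ) ≤ ∏ i ∈ A, g i := by
      have hAins : A = insert i₀ B := (Finset.insert_erase hi₀).symm
      have hi₀B : i₀ ∉ B := Finset.notMem_erase _ _
      have key' : (S.card : ℝ≥0∞) ≤ ∏ i ∈ A, g i ^ q := by
        rw [hAins, Finset.prod_insert hi₀B]
        exact key
      have hmnn : (0:ℝ) ≤ (m:ℝ) := le_of_lt hmpos
      have this1 := ENNReal.rpow_le_rpow key' hmnn
      have hrhs : (∏ i ∈ A, g i ^ q) ^ (m:ℝ) = ∏ i ∈ A, g i := by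
        rw [← ENNReal.prod_rpow_of_nonneg hmnn]
        refine Finset.prod_congr rfl fun i _ => ?_
        rw [← ENNReal.rpow_mul, hq,
          show (1 / (m:ℝ)) * (m:ℝ) = 1 by field_simp, ENNReal.rpow_one]
      rw [hrhs, ENNReal.rpow_natCast] at this1
      exact this1
    rw [hBcard] at key2
    simp only [hgdef, hπ] at key2
    exact_mod_cast key2

lemma CL {n : ℕ} {D : Type*} [DecidableEq D] [DecidableEq (Fin n → D)] [Inhabited D]
    (R : Fin n → Fin n → Finset (D × D)) (A : Finset (Fin n)) (hA : 2 ≤ A.card)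
    (S : Finset (Fin n → D))
    (hsupp : ∀ t ∈ S, ∀ j, j ∉ A → t j = default)
    (hcon : ∀ t ∈ S, ∀ i ∈ A, ∀ j ∈ A, i < j → (t i, t j) ∈ R i j) :
    S.card ^ (A.card - 1) ≤
      ∏ p ∈ (A ×ˢ A).filter (fun p => p.1 < p.2), (R p.1 p.2).card := by
  classical
  induction A using Finset.strongInduction generalizing S with
  | _ A ih =>
  rcases eq_or_lt_of_le hA with h2 | h3
  · -- base case |A| = 2
    obtain ⟨a, b, hab, hA2⟩ := Finset.card_eq_two.mp h2.symm
    -- order the two elements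
    obtain ⟨i, j, hij, hAij⟩ : ∃ i j : Fin n, i < j ∧ A = {i, j} := by
      rcases lt_or_gt_of_ne hab with h | h
      · exact ⟨a, b, h, hA2⟩
      · exact ⟨b, a, h, by rw [hA2, Finset.pair_comm]⟩
    have hPair : (A ×ˢ A).filter (fun p => p.1 < p.2) = {(i, j)} := by
      ext p
      simp only [Finset.mem_filter, Finset.mem_product, Finset.mem_singleton, hAij,
        Finset.mem_insert, Finset.mem_singleton]
      constructor
      · rintro ⟨⟨h1 | h1, h2 | h2⟩, hlt⟩
        · rw [h1, h2] at hlt; exact absurd hlt (lt_irrefl _)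
        · exact Prod.ext_iff.mpr ⟨h1, h2⟩
        · rw [h1, h2] at hlt; exact (lt_asymm hij hlt).elim
        · rw [h1, h2] at hlt; exact absurd hlt (lt_irrefl _)
      · rintro rfl
        exact ⟨⟨Or.inl rfl, Or.inr rfl⟩, hij⟩
    rw [hPair, Finset.prod_singleton, h2.symm]
    simp only [Nat.sub_self]
    have hinj : Set.InjOn (fun t => (t i, t j)) (S : Set (Fin n → D)) := by
      intro t ht t' ht' h
      simp only [Prod.mk.injEq] at h
      funext k
      by_cases hk : k ∈ A
      · rw [hAij] at hk
        rcases Finset.mem_insert.mp hk with rfl | hk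
        · exact h.1
        · rw [Finset.mem_singleton.mp hk]; exact h.2
      · rw [hsupp t ht k hk, hsupp t' ht' k hk]
    have hmaps : ∀ t ∈ S, (t i, t j) ∈ R i j := by
      intro t ht
      exact hcon t ht i (by simp [hAij]) j (by simp [hAij]) hij
    simpa using Finset.card_le_card_of_injOn _ hmaps hinj
  · -- inductive step |A| ≥ 3
    set π : Fin n → (Fin n → D) → (Fin n → D) :=
      fun i t => Function.update t i default with hπ
    set m2 := A.card - 2 with hm2
    have hm2pos : 0 < m2 := by omega
    have hLW := LW A hA S hsupp
    -- projections satisfy the constraints on A.erase k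
    have hT : ∀ k ∈ A, (S.image (π k)).card ^ (A.card - 2) ≤
        ∏ p ∈ ((A.erase k) ×ˢ (A.erase k)).filter (fun p => p.1 < p.2),
          (R p.1 p.2).card := by
      intro k hk
      have hcard : (A.erase k).card = A.card - 1 := Finset.card_erase_of_mem hk
      have h2 : 2 ≤ (A.erase k).card := by omega
      have := ih (A.erase k) (Finset.erase_ssubset hk) h2 (S.image (π k))
        (by
          intro t ht j hj
          obtain ⟨u, hu, rfl⟩ := Finset.mem_image.mp ht
          by_cases hjk : j = k
          · subst hjk; simp [π]
          · have hjA : j ∉ A := fun hjA => hj (Finset.mem_erase.mpr ⟨hjk, hjA⟩)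
            have := hsupp u hu j hjA
            simpa [π, Function.update, hjk] using this)
        (by
          intro t ht i hi j hj hij
          obtain ⟨u, hu, rfl⟩ := Finset.mem_image.mp ht
          have hik : i ≠ k := (Finset.mem_erase.mp hi).1
          have hjk : j ≠ k := (Finset.mem_erase.mp hj).1
          have h1 : π k u i = u i := by simp [π, Function.update, hik]
          have h2 : π k u j = u j := by simp [π, Function.update, hjk]
          rw [h1, h2]
          exact hcon u hu i (Finset.mem_of_mem_erase hi) j (Finset.mem_of_mem_erase hj) hij)
      rw [hcard] at this
      rw [show A.card - 2 = A.card - 1 - 1 by omega]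
      exact this
    -- double counting of the pairs
    have hdc : ∏ k ∈ A, ∏ p ∈ ((A.erase k) ×ˢ (A.erase k)).filter (fun p => p.1 < p.2),
          (R p.1 p.2).card
        = ∏ p ∈ (A ×ˢ A).filter (fun p => p.1 < p.2), (R p.1 p.2).card ^ m2 := by
      have hPk : ∀ k, ((A.erase k) ×ˢ (A.erase k)).filter (fun p => p.1 < p.2)
          = ((A ×ˢ A).filter (fun p => p.1 < p.2)).filter
              (fun p => p.1 ≠ k ∧ p.2 ≠ k) := by
        intro k
        ext p
        simp only [Finset.mem_filter, Finset.mem_product, Finset.mem_erase]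
        tauto
      calc ∏ k ∈ A, ∏ p ∈ ((A.erase k) ×ˢ (A.erase k)).filter (fun p => p.1 < p.2),
            (R p.1 p.2).card
          = ∏ k ∈ A, ∏ p ∈ (A ×ˢ A).filter (fun p => p.1 < p.2),
              (if p.1 ≠ k ∧ p.2 ≠ k then (R p.1 p.2).card else 1) := by
            refine Finset.prod_congr rfl fun k _ => ?_
            rw [hPk k, Finset.prod_filter]
        _ = ∏ p ∈ (A ×ˢ A).filter (fun p => p.1 < p.2), ∏ k ∈ A,
              (if p.1 ≠ k ∧ p.2 ≠ k then (R p.1 p.2).card else 1) := Finset.prod_comm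
        _ = ∏ p ∈ (A ×ˢ A).filter (fun p => p.1 < p.2), (R p.1 p.2).card ^ m2 := by
            refine Finset.prod_congr rfl fun p hp => ?_
            rw [← Finset.prod_filter, Finset.prod_const]
            congr 1
            have hp1 : p.1 ∈ A := (Finset.mem_product.mp (Finset.mem_filter.mp hp).1).1
            have hp2 : p.2 ∈ A := (Finset.mem_product.mp (Finset.mem_filter.mp hp).1).2
            have hne : p.1 ≠ p.2 := ne_of_lt (Finset.mem_filter.mp hp).2
            have : A.filter (fun k => p.1 ≠ k ∧ p.2 ≠ k) = (A.erase p.1).erase p.2 := by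
              ext k
              simp only [Finset.mem_filter, Finset.mem_erase]
              constructor
              · rintro ⟨hkA, h1, h2⟩; exact ⟨fun h => h2 h.symm, fun h => h1 h.symm, hkA⟩
              · rintro ⟨h2, h1, hkA⟩; exact ⟨hkA, fun h => h1 h.symm, fun h => h2 h.symm⟩
            rw [this, Finset.card_erase_of_mem (Finset.mem_erase.mpr ⟨hne.symm, hp2⟩),
              Finset.card_erase_of_mem hp1, hm2]
            omega
    -- combine
    have chain : (S.card ^ (A.card - 1)) ^ m2
        ≤ (∏ p ∈ (A ×ˢ A).filter (fun p => p.1 < p.2), (R p.1 p.2).card) ^ m2 := by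
      calc (S.card ^ (A.card - 1)) ^ m2
          ≤ (∏ i ∈ A, (S.image (π i)).card) ^ m2 := Nat.pow_le_pow_left hLW m2
        _ = ∏ i ∈ A, (S.image (π i)).card ^ m2 := by rw [Finset.prod_pow]
        _ ≤ ∏ k ∈ A, ∏ p ∈ ((A.erase k) ×ˢ (A.erase k)).filter (fun p => p.1 < p.2),
              (R p.1 p.2).card := Finset.prod_le_prod' (fun k hk => hT k hk)
        _ = ∏ p ∈ (A ×ˢ A).filter (fun p => p.1 < p.2), (R p.1 p.2).card ^ m2 := hdc
        _ = (∏ p ∈ (A ×ˢ A).filter (fun p => p.1 < p.2), (R p.1 p.2).card) ^ m2 := by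
            rw [Finset.prod_pow]
    exact (Nat.pow_le_pow_iff_left (by omega : m2 ≠ 0)).mp chain

/-- **AGM bound for clique queries.** For `n ≥ 3` and finite binary relations
`R i j ⊆ D × D` on each attribute pair `i < j`, the clique join
`K_n = {t : [n] → D | ∀ i < j, (t i, t j) ∈ R i j}` satisfies
`|K_n| ≤ (∏_{i<j} |R i j|) ^ (1/(n-1))`; in particular if all `|R i j| = N`
then `|K_n| ≤ N^(n/2)`. -/
theorem clique_agm {D : Type*} (n : ℕ) (hn : 3 ≤ n)
    (R : Fin n → Fin n → Finset (D × D)) :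
    (({t : Fin n → D | ∀ i j : Fin n, i < j → (t i, t j) ∈ R i j}).ncard : ℝ)
        ≤ (∏ p ∈ Finset.univ.filter (fun p : Fin n × Fin n => p.1 < p.2),
            ((R p.1 p.2).card : ℝ)) ^ ((1 : ℝ) / ((n : ℝ) - 1)) ∧
      ∀ N : ℕ, (∀ i j : Fin n, i < j → (R i j).card = N) →
        (({t : Fin n → D | ∀ i j : Fin n, i < j → (t i, t j) ∈ R i j}).ncard : ℝ)
          ≤ (N : ℝ) ^ ((n : ℝ) / 2) := by
  classical
  set K : Set (Fin n → D) := {t | ∀ i j : Fin n, i < j → (t i, t j) ∈ R i j} with hK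
  set Pc : Finset (Fin n × Fin n) :=
    Finset.univ.filter (fun p : Fin n × Fin n => p.1 < p.2) with hPc
  have hn1 : ((n : ℝ) - 1) ≠ 0 := by
    have : (3:ℝ) ≤ (n:ℝ) := by exact_mod_cast hn
    linarith
  have hn1pos : (0:ℝ) < 1 / ((n : ℝ) - 1) := by
    have : (3:ℝ) ≤ (n:ℝ) := by exact_mod_cast hn
    apply one_div_pos.mpr
    linarith
  -- count the pairs
  have hPcard : 2 * Pc.card = n * (n - 1) := by
    set U : Finset (Fin n × Fin n) := Finset.univ with hU
    have hUc : U.card = n * n := by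
      simp [hU, Finset.card_univ]
    have hsplit1 : Pc.card + (U.filter (fun p => ¬ p.1 < p.2)).card = n * n := by
      rw [← hUc]; exact Finset.card_filter_add_card_filter_not _
    have hgt : (U.filter (fun p => ¬ p.1 < p.2)).card
        = ((U.filter (fun p => ¬ p.1 < p.2)).filter (fun p => p.2 < p.1)).card
          + ((U.filter (fun p => ¬ p.1 < p.2)).filter (fun p => ¬ p.2 < p.1)).card :=
      (Finset.card_filter_add_card_filter_not _).symm
    have he1 : (U.filter (fun p => ¬ p.1 < p.2)).filter (fun p => p.2 < p.1)
        = U.filter (fun p => p.2 < p.1) := by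
      ext p
      simp only [Finset.mem_filter]
      constructor
      · rintro ⟨⟨h1, _⟩, h2⟩; exact ⟨h1, h2⟩
      · rintro ⟨h1, h2⟩; exact ⟨⟨h1, asymm h2⟩, h2⟩
    have he2 : (U.filter (fun p => ¬ p.1 < p.2)).filter (fun p => ¬ p.2 < p.1)
        = U.filter (fun p => p.1 = p.2) := by
      ext p
      simp only [Finset.mem_filter]
      constructor
      · rintro ⟨⟨h1, h2⟩, h3⟩
        exact ⟨h1, le_antisymm (not_lt.mp h3) (not_lt.mp h2)⟩
      · rintro ⟨h1, h2⟩
        exact ⟨⟨h1, by rw [h2]; exact lt_irrefl _⟩, by rw [h2]; exact lt_irrefl _⟩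
    have hswap : (U.filter (fun p => p.2 < p.1)).card = Pc.card := by
      apply Finset.card_bij (fun p _ => (p.2, p.1))
      · intro p hp
        have hlt : p.2 < p.1 := (Finset.mem_filter.mp hp).2
        exact Finset.mem_filter.mpr ⟨Finset.mem_univ _, hlt⟩
      · intro p hp p' hp' h
        simp only [Prod.mk.injEq] at h
        exact Prod.ext h.2 h.1
      · intro p hp
        have hlt : p.1 < p.2 := (Finset.mem_filter.mp hp).2
        exact ⟨(p.2, p.1), Finset.mem_filter.mpr ⟨Finset.mem_univ _, hlt⟩, rfl⟩
    have hdiag : (U.filter (fun p => p.1 = p.2)).card = n := by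
      have : U.filter (fun p => p.1 = p.2)
          = Finset.univ.image (fun i : Fin n => (i, i)) := by
        ext p
        simp only [Finset.mem_filter, Finset.mem_image, Finset.mem_univ, true_and, hU]
        constructor
        · intro h; exact ⟨p.1, Prod.ext rfl h⟩
        · rintro ⟨i, rfl⟩; exact rfl
      rw [this, Finset.card_image_of_injective _ (fun a b h => (Prod.mk.injEq _ _ _ _).mp h |>.1),
        Finset.card_univ, Fintype.card_fin]
    rw [he1, he2] at hgt
    have hmul : n * (n - 1) + n = n * n := by
      have h1 : n - 1 + 1 = n := by omega
      calc n * (n - 1) + n = n * ((n - 1) + 1) := by ring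
        _ = n * n := by rw [h1]
    omega
  -- the main cardinality bound, natural number version
  by_cases hD : Nonempty D
  · obtain ⟨d⟩ := hD
    letI : Inhabited D := ⟨d⟩
    -- K is finite
    have hKfin : K.Finite := by
      set F : Fin n → Finset D := fun i =>
        Finset.univ.biUnion (fun j => (R i j).image Prod.fst ∪ (R j i).image Prod.snd)
        with hF
      have hsub : K ⊆ Set.pi Set.univ (fun i => (F i : Set D)) := by
        intro t ht i _
        have h3 : ∃ j : Fin n, j ≠ i := by
          rcases eq_or_ne i ⟨0, by omega⟩ with rfl | h
          · exact ⟨⟨1, by omega⟩, by simp [Fin.ext_iff]⟩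
          · exact ⟨⟨0, by omega⟩, fun h' => h h'.symm⟩
        obtain ⟨j, hji⟩ := h3
        rcases lt_or_gt_of_ne (Ne.symm hji) with hlt | hlt
        · have h1 : t i ∈ (R i j).image Prod.fst :=
            Finset.mem_image_of_mem _ (ht i j hlt)
          exact Finset.mem_coe.mpr (Finset.mem_biUnion.mpr
            ⟨j, Finset.mem_univ j, Finset.mem_union_left _ h1⟩)
        · have h1 : t i ∈ (R j i).image Prod.snd :=
            Finset.mem_image_of_mem _ (ht j i hlt)
          exact Finset.mem_coe.mpr (Finset.mem_biUnion.mpr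
            ⟨j, Finset.mem_univ j, Finset.mem_union_right _ h1⟩)
      exact Set.Finite.subset (Set.Finite.pi (fun i => (F i).finite_toSet)) hsub
    set KF : Finset (Fin n → D) := hKfin.toFinset with hKF
    have hKcard : K.ncard = KF.card := Set.ncard_eq_toFinset_card K hKfin
    -- apply the clique lemma with A = univ
    have hmain : KF.card ^ (n - 1) ≤ ∏ p ∈ Pc, (R p.1 p.2).card := by
      have h1 := CL R Finset.univ
        (by rw [Finset.card_univ, Fintype.card_fin]; omega) KF
        (fun t _ j hj => absurd (Finset.mem_univ j) hj)
        (by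
          intro t ht i _ j _ hij
          have : t ∈ K := (Set.Finite.mem_toFinset hKfin).mp ht
          exact this i j hij)
      rw [Finset.card_univ, Fintype.card_fin, Finset.univ_product_univ] at h1
      exact h1
    -- part 1
    have part1 : (K.ncard : ℝ) ≤ (∏ p ∈ Pc, ((R p.1 p.2).card : ℝ)) ^ ((1:ℝ) / ((n:ℝ) - 1)) := by
      have hC0 : (0:ℝ) ≤ (KF.card : ℝ) := by positivity
      have h1 : ((KF.card : ℝ)) ^ (((n - 1 : ℕ) : ℝ)) ≤ ∏ p ∈ Pc, ((R p.1 p.2).card : ℝ) := by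
        rw [Real.rpow_natCast]
        exact_mod_cast hmain
      have h2 := Real.rpow_le_rpow (by positivity) h1 (le_of_lt hn1pos)
      rw [← Real.rpow_mul hC0] at h2
      have he : ((n - 1 : ℕ) : ℝ) * ((1:ℝ) / ((n:ℝ) - 1)) = 1 := by
        have : ((n - 1 : ℕ) : ℝ) = (n : ℝ) - 1 := by
          push_cast [Nat.cast_sub (by omega : 1 ≤ n)]; ring
        rw [this]; field_simp
      rw [he, Real.rpow_one] at h2
      rw [hKcard]
      exact h2
    refine ⟨part1, ?_⟩
    -- part 2
    intro N hN
    have hprod : (∏ p ∈ Pc, ((R p.1 p.2).card : ℝ)) = (N : ℝ) ^ Pc.card := by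
      rw [Finset.prod_congr rfl (fun p hp => ?_), Finset.prod_const]
      have : p.1 < p.2 := (Finset.mem_filter.mp hp).2
      rw [hN p.1 p.2 this]
    have hexp : (Pc.card : ℝ) * ((1:ℝ) / ((n:ℝ) - 1)) = (n : ℝ) / 2 := by
      have h2c : (2:ℝ) * (Pc.card : ℝ) = (n : ℝ) * ((n : ℝ) - 1) := by
        have : ((2 * Pc.card : ℕ) : ℝ) = ((n * (n-1) : ℕ) : ℝ) := by exact_mod_cast hPcard
        push_cast [Nat.cast_sub (by omega : 1 ≤ n)] at this
        linarith
      field_simp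
      nlinarith [h2c]
    calc (K.ncard : ℝ) ≤ (∏ p ∈ Pc, ((R p.1 p.2).card : ℝ)) ^ ((1:ℝ) / ((n:ℝ) - 1)) := part1
      _ = ((N : ℝ) ^ Pc.card) ^ ((1:ℝ) / ((n:ℝ) - 1)) := by rw [hprod]
      _ = (N : ℝ) ^ ((Pc.card : ℝ) * ((1:ℝ) / ((n:ℝ) - 1))) := by
          rw [← Real.rpow_natCast (N:ℝ) Pc.card, ← Real.rpow_mul (by positivity)]
      _ = (N : ℝ) ^ ((n : ℝ) / 2) := by rw [hexp]
  · -- D is empty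
    have hKempty : K = ∅ := by
      ext t
      simp only [Set.mem_empty_iff_false, iff_false]
      intro _
      exact hD ⟨t ⟨0, by omega⟩⟩
    rw [hKempty]
    simp only [Set.ncard_empty, Nat.cast_zero]
    constructor
    · exact Real.rpow_nonneg
        (Finset.prod_nonneg fun p _ => Nat.cast_nonneg _) _
    · intro N _
      exact Real.rpow_nonneg (Nat.cast_nonneg _) _
end

section
/- (Shearer's inequality for fractional edge covers.) Let X_1, …, X_n be discrete random variables on a common probability space, each taking finitely many values. For each subset F ⊆ [n] let X_F = (X_i)_{i∈F}, and let X = X_{[n]}. Let H = ([n], E) be a hypergraph and x = (x_F)_{F∈E} any fractional edge cover of H. Then the Shannon entropies satisfy H[X] ≤ ∑_{F∈E} x_F · H[X_F]. -/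
open scoped BigOperators

/-- The joint (binary) Shannon entropy `H[X_F]` of the tuple of random variables
`(X i)_{i ∈ F}` on a finite probability space with probability mass function `p`:
`H[X_F] = - ∑_y Pr[X_F = y] log₂ Pr[X_F = y]`, where `y` ranges over tuples of values.
(The term for `Pr = 0` vanishes since `Real.logb 2 0 = 0`.) -/
noncomputable def jointEntropy {n : ℕ} {Ω : Type*} [Fintype Ω]
    {D : Fin n → Type*} [∀ i, Fintype (D i)] [∀ i, DecidableEq (D i)]
    (p : Ω → ℝ) (X : (i : Fin n) → Ω → D i) (F : Finset (Fin n)) : ℝ :=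
  - ∑ y : (i : {i : Fin n // i ∈ F}) → D i.1,
      (∑ ω ∈ Finset.univ.filter (fun ω => ∀ i : {i : Fin n // i ∈ F}, X i.1 ω = y i), p ω) *
        Real.logb 2
          (∑ ω ∈ Finset.univ.filter (fun ω => ∀ i : {i : Fin n // i ∈ F}, X i.1 ω = y i), p ω)

set_option linter.unusedSectionVars false
set_option maxHeartbeats 1000000

namespace ShearerAux

variable {n : ℕ} {Ω : Type*} [Fintype Ω]
    {D : Fin n → Type*} [∀ i, Fintype (D i)] [∀ i, DecidableEq (D i)]
    (p : Ω → ℝ) (X : (i : Fin n) → Ω → D i)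

noncomputable def q (F : Finset (Fin n)) (y : (i : {i : Fin n // i ∈ F}) → D i.1) : ℝ :=
  ∑ ω ∈ Finset.univ.filter (fun ω => ∀ i : {i : Fin n // i ∈ F}, X i.1 ω = y i), p ω

def XF (F : Finset (Fin n)) (ω : Ω) : (i : {i : Fin n // i ∈ F}) → D i.1 := fun i => X i.1 ω

def res {F G : Finset (Fin n)} (h : G ⊆ F) (z : (i : {i : Fin n // i ∈ F}) → D i.1) :
    (i : {i : Fin n // i ∈ G}) → D i.1 := fun i => z ⟨i.1, h i.2⟩

theorem jointEntropy_eq (F : Finset (Fin n)) :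
    jointEntropy p X F = - ∑ y, q p X F y * Real.logb 2 (q p X F y) := rfl

theorem q_eq_filter (F : Finset (Fin n)) (y) :
    q p X F y = ∑ ω ∈ Finset.univ.filter (fun ω => XF X F ω = y), p ω := by
  unfold q
  congr 1
  apply Finset.filter_congr
  intro ω _
  simp [XF, funext_iff]

theorem q_nonneg (hp0 : ∀ ω, 0 ≤ p ω) (F : Finset (Fin n)) (y) : 0 ≤ q p X F y :=
  Finset.sum_nonneg fun ω _ => hp0 ω

theorem sum_q (F : Finset (Fin n)) : ∑ y, q p X F y = ∑ ω, p ω := by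
  simp_rw [q_eq_filter]
  exact Finset.sum_fiberwise _ _ _

theorem marginal {F G : Finset (Fin n)} (h : G ⊆ F) (w) :
    ∑ z ∈ Finset.univ.filter (fun z => res h z = w), q p X F z = q p X G w := by
  simp_rw [q_eq_filter]
  rw [Finset.sum_fiberwise_eq_sum_filter Finset.univ
    (Finset.univ.filter (fun z => res h z = w)) (XF X F) p]
  congr 1
  apply Finset.filter_congr
  intro ω _
  simp only [Finset.mem_filter, Finset.mem_univ, true_and]
  exact Iff.rfl

theorem q_le_res (hp0 : ∀ ω, 0 ≤ p ω) {F G : Finset (Fin n)} (h : G ⊆ F) (z) :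
    q p X F z ≤ q p X G (res h z) := by
  rw [q_eq_filter, q_eq_filter]
  apply Finset.sum_le_sum_of_subset_of_nonneg
  · intro ω hω
    simp only [Finset.mem_filter, Finset.mem_univ, true_and] at *
    rw [← hω]
    rfl
  · intro ω _ _
    exact hp0 ω

theorem ent_eq {F G : Finset (Fin n)} (h : G ⊆ F) :
    jointEntropy p X G = - ∑ z, q p X F z * Real.logb 2 (q p X G (res h z)) := by
  rw [jointEntropy_eq]
  congr 1
  calc ∑ y, q p X G y * Real.logb 2 (q p X G y)
      = ∑ y, ∑ z ∈ Finset.univ.filter (fun z => res h z = y),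
          q p X F z * Real.logb 2 (q p X G y) := by
        refine Finset.sum_congr rfl fun y _ => ?_
        rw [← Finset.sum_mul, marginal]
    _ = ∑ y, ∑ z ∈ Finset.univ.filter (fun z => res h z = y),
          q p X F z * Real.logb 2 (q p X G (res h z)) := by
        refine Finset.sum_congr rfl fun y _ => Finset.sum_congr rfl fun z hz => ?_
        rw [(Finset.mem_filter.1 hz).2]
    _ = _ := Finset.sum_fiberwise _ _ _

theorem ent_mono (hp0 : ∀ ω, 0 ≤ p ω) {F G : Finset (Fin n)} (h : G ⊆ F) :
    jointEntropy p X G ≤ jointEntropy p X F := by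
  rw [ent_eq p X h, jointEntropy_eq]
  rw [neg_le_neg_iff]
  refine Finset.sum_le_sum fun z _ => ?_
  rcases eq_or_lt_of_le (q_nonneg p X hp0 F z) with hq | hq
  · rw [← hq]; simp
  · refine mul_le_mul_of_nonneg_left ?_ hq.le
    exact Real.logb_le_logb_of_le one_lt_two hq (q_le_res p X hp0 h z)

theorem ent_empty (hp1 : ∑ ω, p ω = 1) : jointEntropy p X (∅ : Finset (Fin n)) = 0 := by
  rw [jointEntropy_eq]
  have hq : ∀ y, q p X (∅ : Finset (Fin n)) y = ∑ ω, p ω := by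
    intro y
    unfold q
    congr 1
    rw [Finset.filter_true_of_mem]
    intro ω _ i
    exact absurd i.2 (Finset.notMem_empty _)
  simp [hq, hp1]

theorem key2 (hp0 : ∀ ω, 0 ≤ p ω) (hp1 : ∑ ω, p ω = 1) (A B : Finset (Fin n))
    (hA : A ⊆ A ∪ B) (hB : B ⊆ A ∪ B) (hI : A ∩ B ⊆ A ∪ B) :
    ∑ z, q p X A (res hA z) * q p X B (res hB z) / q p X (A ∩ B) (res hI z) ≤ 1 := by
  have hIA : A ∩ B ⊆ A := Finset.inter_subset_left
  have hIB : A ∩ B ⊆ B := Finset.inter_subset_right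
  rw [← Finset.sum_fiberwise Finset.univ (res hI)
    (fun z => q p X A (res hA z) * q p X B (res hB z) / q p X (A ∩ B) (res hI z))]
  have step : ∀ w, ∑ z ∈ Finset.univ.filter (fun z => res hI z = w),
      q p X A (res hA z) * q p X B (res hB z) / q p X (A ∩ B) (res hI z)
      ≤ q p X (A ∩ B) w := by
    intro w
    have hrw : ∑ z ∈ Finset.univ.filter (fun z => res hI z = w),
        q p X A (res hA z) * q p X B (res hB z) / q p X (A ∩ B) (res hI z)
        = (∑ z ∈ Finset.univ.filter (fun z => res hI z = w),
            q p X A (res hA z) * q p X B (res hB z)) / q p X (A ∩ B) w := by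
      rw [Finset.sum_div]
      refine Finset.sum_congr rfl fun z hz => ?_
      rw [(Finset.mem_filter.1 hz).2]
    rw [hrw]
    rcases eq_or_lt_of_le (q_nonneg p X hp0 (A ∩ B) w) with hw | hw
    · rw [← hw, div_zero]
    · rw [div_le_iff₀ hw]
      have hinj : ∀ z ∈ Finset.univ.filter (fun z => res hI z = w),
          ∀ z' ∈ Finset.univ.filter (fun z => res hI z = w),
          (res hA z, res hB z) = (res hA z', res hB z') → z = z' := by
        intro z _ z' _ hzz
        funext i
        rcases Finset.mem_union.1 i.2 with hiA | hiB
        · exact congrFun (congrArg Prod.fst hzz) ⟨i.1, hiA⟩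
        · exact congrFun (congrArg Prod.snd hzz) ⟨i.1, hiB⟩
      have himage : (∑ pr ∈ (Finset.univ.filter (fun z => res hI z = w)).image
              (fun z => (res hA z, res hB z)), q p X A pr.1 * q p X B pr.2)
          = ∑ z ∈ Finset.univ.filter (fun z => res hI z = w),
              q p X A (res hA z) * q p X B (res hB z) :=
        Finset.sum_image hinj
      rw [← himage]
      have hsub : (Finset.univ.filter (fun z => res hI z = w)).image
          (fun z => (res hA z, res hB z)) ⊆
          (Finset.univ.filter (fun α => res hIA α = w)) ×ˢ
          (Finset.univ.filter (fun β => res hIB β = w)) := by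
        intro pr hpr
        rcases Finset.mem_image.1 hpr with ⟨z, hz, rfl⟩
        have hzw : res hI z = w := (Finset.mem_filter.1 hz).2
        simp only [Finset.mem_product, Finset.mem_filter, Finset.mem_univ, true_and]
        exact ⟨hzw, hzw⟩
      calc ∑ pr ∈ (Finset.univ.filter (fun z => res hI z = w)).image
              (fun z => (res hA z, res hB z)), q p X A pr.1 * q p X B pr.2
          ≤ ∑ pr ∈ (Finset.univ.filter (fun α => res hIA α = w)) ×ˢ
              (Finset.univ.filter (fun β => res hIB β = w)),
              q p X A pr.1 * q p X B pr.2 := by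
            apply Finset.sum_le_sum_of_subset_of_nonneg hsub
            intro pr _ _
            exact mul_nonneg (q_nonneg p X hp0 _ _) (q_nonneg p X hp0 _ _)
        _ = (∑ α ∈ Finset.univ.filter (fun α => res hIA α = w), q p X A α) *
            (∑ β ∈ Finset.univ.filter (fun β => res hIB β = w), q p X B β) := by
            rw [Finset.sum_product, ← Finset.sum_mul_sum]
        _ = q p X (A ∩ B) w * q p X (A ∩ B) w := by
            rw [marginal p X hIA w, marginal p X hIB w]
  calc ∑ w, ∑ z ∈ Finset.univ.filter (fun z => res hI z = w),
        q p X A (res hA z) * q p X B (res hB z) / q p X (A ∩ B) (res hI z)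
      ≤ ∑ w, q p X (A ∩ B) w := Finset.sum_le_sum fun w _ => step w
    _ = 1 := by rw [sum_q, hp1]

theorem real_term (qz a b i : ℝ) (hq0 : 0 ≤ qz) (ha' : 0 ≤ a) (hb' : 0 ≤ b)
    (hi' : 0 ≤ i) (hqa : qz ≤ a) (hqb : qz ≤ b) (hqi : qz ≤ i) :
    qz * Real.logb 2 a + qz * Real.logb 2 b ≤
      qz * Real.logb 2 qz + qz * Real.logb 2 i + (a * b / i - qz) / Real.log 2 := by
  have hlog2 : (0:ℝ) < Real.log 2 := Real.log_pos one_lt_two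
  rcases eq_or_lt_of_le hq0 with h0 | h0
  · rw [← h0]
    simp only [zero_mul, add_zero, zero_add, sub_zero]
    positivity
  · have ha0 : 0 < a := lt_of_lt_of_le h0 hqa
    have hb0 : 0 < b := lt_of_lt_of_le h0 hqb
    have hi0 : 0 < i := lt_of_lt_of_le h0 hqi
    have ht0 : 0 < a * b / (qz * i) := by positivity
    have hlog : Real.log (a * b / (qz * i)) ≤ a * b / (qz * i) - 1 :=
      Real.log_le_sub_one_of_pos ht0
    have hcomb : Real.logb 2 a + Real.logb 2 b - Real.logb 2 qz - Real.logb 2 i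
        = Real.log (a * b / (qz * i)) / Real.log 2 := by
      rw [Real.log_div (by positivity) (by positivity), Real.log_mul ha0.ne' hb0.ne',
        Real.log_mul h0.ne' hi0.ne']
      simp only [Real.logb]
      ring
    have hmain : qz * (Real.logb 2 a + Real.logb 2 b - Real.logb 2 qz - Real.logb 2 i)
        ≤ (a * b / i - qz) / Real.log 2 := by
      rw [hcomb]
      have h1 : qz * (Real.log (a * b / (qz * i)) / Real.log 2)
          ≤ qz * ((a * b / (qz * i) - 1) / Real.log 2) := by
        refine mul_le_mul_of_nonneg_left ?_ h0.le
        exact (div_le_div_iff_of_pos_right hlog2).2 hlog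
      have h2 : qz * ((a * b / (qz * i) - 1) / Real.log 2)
          = (a * b / i - qz) / Real.log 2 := by
        field_simp
      linarith
    nlinarith [hmain]

theorem submod (hp0 : ∀ ω, 0 ≤ p ω) (hp1 : ∑ ω, p ω = 1) (A B : Finset (Fin n)) :
    jointEntropy p X (A ∪ B) + jointEntropy p X (A ∩ B) ≤
      jointEntropy p X A + jointEntropy p X B := by
  have hA : A ⊆ A ∪ B := Finset.subset_union_left
  have hB : B ⊆ A ∪ B := Finset.subset_union_right
  have hI : A ∩ B ⊆ A ∪ B := Finset.inter_subset_left.trans hA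
  have hU : A ∪ B ⊆ A ∪ B := Finset.Subset.refl _
  rw [ent_eq p X hA, ent_eq p X hB, ent_eq p X hI, ent_eq p X hU]
  have hres : ∀ z : (i : {i : Fin n // i ∈ A ∪ B}) → D i.1, res hU z = z :=
    fun z => rfl
  simp only [hres]
  rw [← neg_add, ← neg_add, neg_le_neg_iff]
  have hlog2 : (0:ℝ) < Real.log 2 := Real.log_pos one_lt_two
  have term : ∀ z, q p X (A ∪ B) z * Real.logb 2 (q p X A (res hA z)) +
      q p X (A ∪ B) z * Real.logb 2 (q p X B (res hB z)) ≤
      q p X (A ∪ B) z * Real.logb 2 (q p X (A ∪ B) z) +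
      q p X (A ∪ B) z * Real.logb 2 (q p X (A ∩ B) (res hI z)) +
      (q p X A (res hA z) * q p X B (res hB z) / q p X (A ∩ B) (res hI z)
        - q p X (A ∪ B) z) / Real.log 2 :=
    fun z => real_term _ _ _ _ (q_nonneg p X hp0 _ _) (q_nonneg p X hp0 _ _)
      (q_nonneg p X hp0 _ _) (q_nonneg p X hp0 _ _) (q_le_res p X hp0 hA z)
      (q_le_res p X hp0 hB z) (q_le_res p X hp0 hI z)
  have hsum1 : ∑ z, q p X (A ∪ B) z = 1 := by rw [sum_q, hp1]
  have hk := key2 p X hp0 hp1 A B hA hB hI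
  calc (∑ z, q p X (A ∪ B) z * Real.logb 2 (q p X A (res hA z))) +
        ∑ z, q p X (A ∪ B) z * Real.logb 2 (q p X B (res hB z))
      = ∑ z, (q p X (A ∪ B) z * Real.logb 2 (q p X A (res hA z)) +
          q p X (A ∪ B) z * Real.logb 2 (q p X B (res hB z))) :=
        (Finset.sum_add_distrib).symm
    _ ≤ ∑ z, (q p X (A ∪ B) z * Real.logb 2 (q p X (A ∪ B) z) +
          q p X (A ∪ B) z * Real.logb 2 (q p X (A ∩ B) (res hI z)) +
          (q p X A (res hA z) * q p X B (res hB z) / q p X (A ∩ B) (res hI z)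
            - q p X (A ∪ B) z) / Real.log 2) := Finset.sum_le_sum fun z _ => term z
    _ = (∑ z, q p X (A ∪ B) z * Real.logb 2 (q p X (A ∪ B) z)) +
        (∑ z, q p X (A ∪ B) z * Real.logb 2 (q p X (A ∩ B) (res hI z))) +
        ((∑ z, q p X A (res hA z) * q p X B (res hB z) / q p X (A ∩ B) (res hI z)) - 1)
          / Real.log 2 := by
        rw [Finset.sum_add_distrib, Finset.sum_add_distrib, ← Finset.sum_div,
          Finset.sum_sub_distrib, hsum1]
    _ ≤ (∑ z, q p X (A ∪ B) z * Real.logb 2 (q p X (A ∪ B) z)) +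
        ∑ z, q p X (A ∪ B) z * Real.logb 2 (q p X (A ∩ B) (res hI z)) := by
        have hd : ((∑ z, q p X A (res hA z) * q p X B (res hB z)
            / q p X (A ∩ B) (res hI z)) - 1) / Real.log 2 ≤ 0 :=
          div_nonpos_of_nonpos_of_nonneg (by linarith) hlog2.le
        linarith

def Sk (k : ℕ) : Finset (Fin n) := Finset.univ.filter (fun i => (i : ℕ) < k)

theorem mem_Sk {k : ℕ} {i : Fin n} : i ∈ Sk k ↔ (i : ℕ) < k := by
  simp [Sk]

theorem Sk_zero : Sk (n := n) 0 = ∅ := by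
  ext i; simp [mem_Sk]

theorem Sk_n : Sk (n := n) n = Finset.univ := by
  ext i; simp [mem_Sk, i.isLt]

theorem Sk_mono {k m : ℕ} (h : k ≤ m) : Sk (n := n) k ⊆ Sk m := by
  intro i hi
  rw [mem_Sk] at *
  omega

theorem tele (hp1 : ∑ ω, p ω = 1) (F : Finset (Fin n)) :
    jointEntropy p X F = ∑ j : Fin n,
      (jointEntropy p X (F ∩ Sk (j.1 + 1)) - jointEntropy p X (F ∩ Sk j.1)) := by
  rw [Fin.sum_univ_eq_sum_range
    (fun k => jointEntropy p X (F ∩ Sk (k + 1)) - jointEntropy p X (F ∩ Sk k)) n]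
  rw [Finset.sum_range_sub (fun k => jointEntropy p X (F ∩ Sk k)) n]
  rw [Sk_n, Sk_zero, Finset.inter_univ, Finset.inter_empty, ent_empty p X hp1, sub_zero]

theorem step (hp0 : ∀ ω, 0 ≤ p ω) (hp1 : ∑ ω, p ω = 1) {F : Finset (Fin n)} {j : Fin n}
    (hj : j ∈ F) :
    jointEntropy p X (Sk (j.1 + 1)) - jointEntropy p X (Sk j.1) ≤
      jointEntropy p X (F ∩ Sk (j.1 + 1)) - jointEntropy p X (F ∩ Sk j.1) := by
  have hu : Sk j.1 ∪ (F ∩ Sk (j.1 + 1)) = Sk (j.1 + 1) := by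
    ext i
    simp only [Finset.mem_union, Finset.mem_inter, mem_Sk]
    constructor
    · rintro (h | ⟨_, h⟩) <;> omega
    · intro h
      rcases Nat.lt_or_ge i.1 j.1 with h' | h'
      · exact Or.inl h'
      · have hij : i = j := Fin.ext (by omega)
        exact Or.inr ⟨hij ▸ hj, h⟩
  have hi : Sk j.1 ∩ (F ∩ Sk (j.1 + 1)) = F ∩ Sk j.1 := by
    ext i
    simp only [Finset.mem_inter, mem_Sk]
    constructor
    · rintro ⟨h1, h2, _⟩; exact ⟨h2, h1⟩
    · rintro ⟨h1, h2⟩; exact ⟨h2, h1, by omega⟩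
  have hs := submod p X hp0 hp1 (Sk j.1) (F ∩ Sk (j.1 + 1))
  rw [hu, hi] at hs
  linarith

theorem ent_ge_sum (hp0 : ∀ ω, 0 ≤ p ω) (hp1 : ∑ ω, p ω = 1) (F : Finset (Fin n)) :
    ∑ j ∈ F, (jointEntropy p X (Sk (j.1 + 1)) - jointEntropy p X (Sk j.1)) ≤
      jointEntropy p X F := by
  rw [tele p X hp1 F]
  have hrw : ∑ j ∈ F, (jointEntropy p X (Sk (j.1 + 1)) - jointEntropy p X (Sk j.1))
      = ∑ j : Fin n, if j ∈ F then
          (jointEntropy p X (Sk (j.1 + 1)) - jointEntropy p X (Sk j.1)) else 0 := by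
    rw [Finset.sum_ite_mem, Finset.univ_inter]
  rw [hrw]
  refine Finset.sum_le_sum fun j _ => ?_
  by_cases hj : j ∈ F
  · rw [if_pos hj]
    exact step p X hp0 hp1 hj
  · rw [if_neg hj]
    have := ent_mono p X hp0 (Finset.inter_subset_inter (Finset.Subset.refl F)
      (Sk_mono (Nat.le_succ j.1)))
    linarith

end ShearerAux

open ShearerAux in
/-- **Shearer's inequality for fractional edge covers.** If `x = (x_F)_{F ∈ E}` is a
fractional edge cover of the hypergraph `([n], E)`, then
`H[X] ≤ ∑_{F ∈ E} x_F · H[X_F]`. -/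
theorem shearer_inequality {n : ℕ} {Ω : Type*} [Fintype Ω]
    {D : Fin n → Type*} [∀ i, Fintype (D i)] [∀ i, DecidableEq (D i)]
    (p : Ω → ℝ) (hp0 : ∀ ω, 0 ≤ p ω) (hp1 : ∑ ω, p ω = 1)
    (X : (i : Fin n) → Ω → D i)
    (E : Finset (Finset (Fin n)))
    (x : Finset (Fin n) → ℝ)
    (hx0 : ∀ F ∈ E, 0 ≤ x F)
    (hxcover : ∀ j : Fin n, 1 ≤ ∑ F ∈ E.filter (fun F => j ∈ F), x F) :
    jointEntropy p X Finset.univ ≤ ∑ F ∈ E, x F * jointEntropy p X F := by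
  set c : Fin n → ℝ :=
    fun j => jointEntropy p X (Sk (j.1 + 1)) - jointEntropy p X (Sk j.1) with hc
  have hc0 : ∀ j, 0 ≤ c j := by
    intro j
    have := ent_mono p X hp0 (Sk_mono (n := n) (Nat.le_succ j.1))
    simp only [hc]
    linarith
  have h1 : jointEntropy p X Finset.univ = ∑ j : Fin n, c j := by
    rw [tele p X hp1 Finset.univ]
    simp only [Finset.univ_inter, hc]
  calc jointEntropy p X Finset.univ = ∑ j : Fin n, c j := h1
    _ ≤ ∑ j : Fin n, (∑ F ∈ E.filter (fun F => j ∈ F), x F) * c j := by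
        refine Finset.sum_le_sum fun j _ => ?_
        exact le_mul_of_one_le_left (hc0 j) (hxcover j)
    _ = ∑ j : Fin n, ∑ F ∈ E.filter (fun F => j ∈ F), x F * c j := by
        refine Finset.sum_congr rfl fun j _ => ?_
        rw [Finset.sum_mul]
    _ = ∑ j : Fin n, ∑ F ∈ E, if j ∈ F then x F * c j else 0 := by
        refine Finset.sum_congr rfl fun j _ => ?_
        rw [Finset.sum_filter]
    _ = ∑ F ∈ E, ∑ j : Fin n, if j ∈ F then x F * c j else 0 := Finset.sum_comm
    _ = ∑ F ∈ E, x F * ∑ j ∈ F, c j := by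
        refine Finset.sum_congr rfl fun F _ => ?_
        rw [Finset.sum_ite_mem, Finset.univ_inter, Finset.mul_sum]
    _ ≤ ∑ F ∈ E, x F * jointEntropy p X F := by
        refine Finset.sum_le_sum fun F hF => ?_
        exact mul_le_mul_of_nonneg_left (ent_ge_sum p X hp0 hp1 F) (hx0 F hF)
end

section
/- (The hard instance for pairwise join plans on the triangle query.) Let m ≥ 1 and let a_0,…,a_m, b_0,…,b_m, c_0,…,c_m be distinct elements. Define R = ({a_0} × {b_0,…,b_m}) ∪ ({a_0,…,a_m} × {b_0}), S = ({b_0} × {c_0,…,c_m}) ∪ ({b_0,…,b_m} × {c_0}), and T = ({a_0} × {c_0,…,c_m}) ∪ ({a_0,…,a_m} × {c_0}). Then: (i) |R| = |S| = |T| = 2m + 1; (ii) the triangle join Q_△ = {(a,b,c) : (a,b) ∈ R, (b,c) ∈ S, (a,c) ∈ T} has exactly 3m + 1 tuples; and (iii) each of the three pairwise joins R ⋈ S (on B), S ⋈ T (on C), and R ⋈ T (on A) has at least (m+1)² tuples. -/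
open scoped BigOperators

theorem cross_card {α β : Type*} [DecidableEq α] [DecidableEq β] (m : ℕ)
    (f : Fin (m+1) → α) (g : Fin (m+1) → β)
    (hf : Function.Injective f) (hg : Function.Injective g) :
    (({f 0} ×ˢ Finset.univ.image g) ∪ (Finset.univ.image f ×ˢ {g 0})).card = 2 * m + 1 := by
  have h1 : ({f 0} ×ˢ Finset.univ.image g).card = m + 1 := by
    simp [Finset.card_image_of_injective _ hg]
  have h2 : ((Finset.univ.image f) ×ˢ {g 0}).card = m + 1 := by
    simp [Finset.card_image_of_injective _ hf]
  have h3 : (({f 0} ×ˢ Finset.univ.image g) ∩ ((Finset.univ.image f) ×ˢ {g 0})) = {(f 0, g 0)} := by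
    ext ⟨x, y⟩
    simp only [Finset.mem_inter, Finset.mem_product, Finset.mem_singleton, Finset.mem_image,
      Finset.mem_univ, true_and, Prod.mk.injEq]
    constructor
    · rintro ⟨⟨rfl, -⟩, -, rfl⟩; exact ⟨rfl, rfl⟩
    · rintro ⟨rfl, rfl⟩; exact ⟨⟨rfl, ⟨0, rfl⟩⟩, ⟨0, rfl⟩, rfl⟩
  have := Finset.card_union_add_card_inter ({f 0} ×ˢ Finset.univ.image g)
    ((Finset.univ.image f) ×ˢ {g 0})
  rw [h1, h2, h3] at this
  rw [Finset.card_singleton] at this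
  omega

theorem ncard_lb {α : Type*} [DecidableEq α] (m : ℕ) (F : Fin (m+1) × Fin (m+1) → α)
    (hF : Function.Injective F) (s : Set α) (hfin : s.Finite)
    (hsub : ∀ p, F p ∈ s) : (m + 1) ^ 2 ≤ s.ncard := by
  have h1 : (Finset.univ.image F : Finset α).card = (m+1)^2 := by
    rw [Finset.card_image_of_injective _ hF]
    simp [sq]
  calc (m+1)^2 = ((Finset.univ.image F : Finset α) : Set α).ncard := by
        rw [Set.ncard_coe_finset, h1]
    _ ≤ s.ncard := by
        apply Set.ncard_le_ncard _ hfin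
        intro x hx
        simp only [Finset.coe_image, Set.mem_image, Finset.coe_univ, Set.image_univ,
          Set.mem_range] at hx
        obtain ⟨p, rfl⟩ := hx
        exact hsub p

/-- **The hard instance for pairwise join plans on the triangle query.**
With `R = ({a₀} × {b₀,…,b_m}) ∪ ({a₀,…,a_m} × {b₀})` and similarly `S`, `T`:
(i) `|R| = |S| = |T| = 2m + 1`; (ii) the triangle join has exactly `3m + 1` tuples;
(iii) each pairwise join `R ⋈ S`, `S ⋈ T`, `R ⋈ T` has at least `(m+1)²` tuples. -/
theorem triangle_hard_instance {A B C : Type*}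
    [DecidableEq A] [DecidableEq B] [DecidableEq C]
    (m : ℕ) (hm : 1 ≤ m)
    (a : Fin (m + 1) → A) (b : Fin (m + 1) → B) (c : Fin (m + 1) → C)
    (ha : Function.Injective a) (hb : Function.Injective b) (hc : Function.Injective c)
    (R : Finset (A × B)) (S : Finset (B × C)) (T : Finset (A × C))
    (hR : R = ({a 0} ×ˢ Finset.univ.image b) ∪ (Finset.univ.image a ×ˢ {b 0}))
    (hS : S = ({b 0} ×ˢ Finset.univ.image c) ∪ (Finset.univ.image b ×ˢ {c 0}))
    (hT : T = ({a 0} ×ˢ Finset.univ.image c) ∪ (Finset.univ.image a ×ˢ {c 0})) :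
    R.card = 2 * m + 1 ∧ S.card = 2 * m + 1 ∧ T.card = 2 * m + 1 ∧
    ({p : A × B × C | (p.1, p.2.1) ∈ R ∧ (p.2.1, p.2.2) ∈ S ∧
        (p.1, p.2.2) ∈ T}).ncard = 3 * m + 1 ∧
    (m + 1) ^ 2 ≤ ({p : A × B × C | (p.1, p.2.1) ∈ R ∧ (p.2.1, p.2.2) ∈ S}).ncard ∧
    (m + 1) ^ 2 ≤ ({p : A × B × C | (p.2.1, p.2.2) ∈ S ∧ (p.1, p.2.2) ∈ T}).ncard ∧
    (m + 1) ^ 2 ≤ ({p : A × B × C | (p.1, p.2.1) ∈ R ∧ (p.1, p.2.2) ∈ T}).ncard := by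
  have hmR : ∀ x y, (x, y) ∈ R ↔ ((∃ i, b i = y) ∧ a 0 = x) ∨ ((∃ i, a i = x) ∧ b 0 = y) := by
    intro x y; rw [hR]; simp
  have hmS : ∀ y z, (y, z) ∈ S ↔ ((∃ i, c i = z) ∧ b 0 = y) ∨ ((∃ i, b i = y) ∧ c 0 = z) := by
    intro y z; rw [hS]; simp
  have hmT : ∀ x z, (x, z) ∈ T ↔ ((∃ i, c i = z) ∧ a 0 = x) ∨ ((∃ i, a i = x) ∧ c 0 = z) := by
    intro x z; rw [hT]; simp
  refine ⟨by rw [hR]; exact cross_card m a b ha hb,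
         by rw [hS]; exact cross_card m b c hb hc,
         by rw [hT]; exact cross_card m a c ha hc, ?_, ?_, ?_, ?_⟩
  · -- triangle join
    set X : Finset (A × B × C) := Finset.univ.image (fun k => (a 0, b 0, c k)) with hX
    set Y : Finset (A × B × C) := Finset.univ.image (fun k => (a 0, b k, c 0)) with hY
    set Z : Finset (A × B × C) := Finset.univ.image (fun k => (a k, b 0, c 0)) with hZ
    have hQ : {p : A × B × C | (p.1, p.2.1) ∈ R ∧ (p.2.1, p.2.2) ∈ S ∧ (p.1, p.2.2) ∈ T}
        = ↑(X ∪ Y ∪ Z) := by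
      ext ⟨x, y, z⟩
      simp only [Set.mem_setOf_eq, hmR, hmS, hmT, hX, hY, hZ, Finset.coe_union, Set.mem_union,
        Finset.mem_coe, Finset.mem_image, Finset.mem_univ, true_and, Prod.mk.injEq]
      constructor
      · rintro ⟨hr, hs, ht⟩
        rcases hs with ⟨⟨k, rfl⟩, rfl⟩ | ⟨⟨j, rfl⟩, rfl⟩
        · rcases ht with ⟨-, rfl⟩ | ⟨⟨i, rfl⟩, hz⟩
          · exact Or.inl (Or.inl ⟨k, rfl, rfl, rfl⟩)
          · exact Or.inr ⟨i, rfl, rfl, hz⟩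
        · rcases hr with ⟨-, rfl⟩ | ⟨⟨i, rfl⟩, hy⟩
          · exact Or.inl (Or.inr ⟨j, rfl, rfl, rfl⟩)
          · exact Or.inr ⟨i, rfl, hy, rfl⟩
      · rintro ((⟨k, rfl, rfl, rfl⟩ | ⟨k, rfl, rfl, rfl⟩) | ⟨k, rfl, rfl, rfl⟩)
        · exact ⟨Or.inl ⟨⟨0, rfl⟩, rfl⟩, Or.inl ⟨⟨k, rfl⟩, rfl⟩, Or.inl ⟨⟨k, rfl⟩, rfl⟩⟩
        · exact ⟨Or.inl ⟨⟨k, rfl⟩, rfl⟩, Or.inr ⟨⟨k, rfl⟩, rfl⟩, Or.inr ⟨⟨0, rfl⟩, rfl⟩⟩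
        · exact ⟨Or.inr ⟨⟨k, rfl⟩, rfl⟩, Or.inl ⟨⟨0, rfl⟩, rfl⟩, Or.inr ⟨⟨k, rfl⟩, rfl⟩⟩
    rw [hQ, Set.ncard_coe_finset]
    have hcX : X.card = m + 1 := by
      rw [hX, Finset.card_image_of_injective]
      · simp
      · intro i j hij
        exact hc (congrArg (fun p => p.2.2) hij)
    have hcY : Y.card = m + 1 := by
      rw [hY, Finset.card_image_of_injective]
      · simp
      · intro i j hij
        exact hb (congrArg (fun p => p.2.1) hij)
    have hcZ : Z.card = m + 1 := by
      rw [hZ, Finset.card_image_of_injective]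
      · simp
      · intro i j hij
        exact ha (congrArg (fun p => p.1) hij)
    have hXY : X ∩ Y = {(a 0, b 0, c 0)} := by
      ext ⟨x, y, z⟩
      simp only [Finset.mem_inter, hX, hY, Finset.mem_image, Finset.mem_univ, true_and,
        Finset.mem_singleton, Prod.mk.injEq]
      constructor
      · rintro ⟨⟨k, rfl, rfl, rfl⟩, j, -, -, hj3⟩
        exact ⟨rfl, rfl, hj3.symm⟩
      · rintro ⟨rfl, rfl, rfl⟩
        exact ⟨⟨0, rfl, rfl, rfl⟩, 0, rfl, rfl, rfl⟩
    have hXYZ : (X ∪ Y) ∩ Z = {(a 0, b 0, c 0)} := by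
      ext ⟨x, y, z⟩
      simp only [Finset.mem_inter, Finset.mem_union, hX, hY, hZ, Finset.mem_image,
        Finset.mem_univ, true_and, Finset.mem_singleton, Prod.mk.injEq]
      constructor
      · rintro ⟨h1, k, rfl, rfl, rfl⟩
        rcases h1 with ⟨j, hj1, -, -⟩ | ⟨j, hj1, -, -⟩ <;> exact ⟨hj1.symm, rfl, rfl⟩
      · rintro ⟨rfl, rfl, rfl⟩
        exact ⟨Or.inl ⟨0, rfl, rfl, rfl⟩, 0, rfl, rfl, rfl⟩
    have e1 := Finset.card_union_add_card_inter X Y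
    have e2 := Finset.card_union_add_card_inter (X ∪ Y) Z
    rw [hXY, Finset.card_singleton] at e1
    rw [hXYZ, Finset.card_singleton] at e2
    omega
  · -- R ⋈ S
    apply ncard_lb m (fun p => (a p.1, b 0, c p.2))
    · intro p q hpq
      exact Prod.ext (ha (congrArg (fun r => r.1) hpq)) (hc (congrArg (fun r => r.2.2) hpq))
    · apply Set.Finite.subset (Finset.finite_toSet ((R.image Prod.fst) ×ˢ S))
      rintro ⟨x, y, z⟩ ⟨h1, h2⟩
      simp only [Finset.coe_product, Set.mem_prod, Finset.mem_coe, Finset.coe_image,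
        Set.mem_image, Finset.mem_coe]
      exact ⟨⟨(x, y), h1, rfl⟩, h2⟩
    · rintro ⟨i, j⟩
      exact ⟨(hmR _ _).2 (Or.inr ⟨⟨i, rfl⟩, rfl⟩), (hmS _ _).2 (Or.inl ⟨⟨j, rfl⟩, rfl⟩)⟩
  · -- S ⋈ T
    apply ncard_lb m (fun p => (a p.1, b p.2, c 0))
    · intro p q hpq
      exact Prod.ext (ha (congrArg (fun r => r.1) hpq)) (hb (congrArg (fun r => r.2.1) hpq))
    · apply Set.Finite.subset (Finset.finite_toSet ((T.image Prod.fst) ×ˢ S))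
      rintro ⟨x, y, z⟩ ⟨h1, h2⟩
      simp only [Finset.coe_product, Set.mem_prod, Finset.mem_coe, Finset.coe_image,
        Set.mem_image, Finset.mem_coe]
      exact ⟨⟨(x, z), h2, rfl⟩, h1⟩
    · rintro ⟨i, j⟩
      exact ⟨(hmS _ _).2 (Or.inr ⟨⟨j, rfl⟩, rfl⟩), (hmT _ _).2 (Or.inr ⟨⟨i, rfl⟩, rfl⟩)⟩
  · -- R ⋈ T
    apply ncard_lb m (fun p => (a 0, b p.1, c p.2))
    · intro p q hpq
      exact Prod.ext (hb (congrArg (fun r => r.2.1) hpq)) (hc (congrArg (fun r => r.2.2) hpq))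
    · apply Set.Finite.subset (Finset.finite_toSet
        ((R.image Prod.fst) ×ˢ ((R.image Prod.snd) ×ˢ (T.image Prod.snd))))
      rintro ⟨x, y, z⟩ ⟨h1, h2⟩
      simp only [Finset.coe_product, Set.mem_prod, Finset.mem_coe, Finset.coe_image,
        Set.mem_image, Finset.mem_coe]
      exact ⟨⟨(x, y), h1, rfl⟩, ⟨(x, y), h1, rfl⟩, ⟨(x, z), h2, rfl⟩⟩
    · rintro ⟨i, j⟩
      exact ⟨(hmR _ _).2 (Or.inl ⟨⟨i, rfl⟩, rfl⟩), (hmT _ _).2 (Or.inl ⟨⟨j, rfl⟩, rfl⟩)⟩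
end

section
/- (Quadratic blowup when joining incomparable simple relations.) Let n ≥ 2 and d ≥ 1, with domain D = {0, 1, …, d}. Let S and T be simple relations on attribute sets Ā_S ⊆ [n] and Ā_T ⊆ [n] respectively. If neither Ā_S ⊆ Ā_T nor Ā_T ⊆ Ā_S, then the natural join S ⋈ T, consisting of all tuples t : Ā_S ∪ Ā_T → D whose restrictions to Ā_S and Ā_T lie in S and T respectively, satisfies |S ⋈ T| ≥ (d + 1)². -/
open scoped BigOperators

/-- The *simple* relation on attribute set `A ⊆ [n]` over the domain `{0, 1, …, d}`:
all tuples `t : A → {0,…,d}` having at most one nonzero coordinate. -/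
def SimpleRel (n d : ℕ) (A : Finset (Fin n)) : Set ({j : Fin n // j ∈ A} → Fin (d + 1)) :=
  {t | ({j : {j : Fin n // j ∈ A} | t j ≠ 0}).ncard ≤ 1}

/-- **Quadratic blowup when joining incomparable simple relations.** If `S` and `T` are
the simple relations on attribute sets `Ā_S` and `Ā_T` respectively, and neither
attribute set contains the other, then `|S ⋈ T| ≥ (d+1)²`. -/
theorem simple_join_blowup (n d : ℕ) (hn : 2 ≤ n) (hd : 1 ≤ d)
    (AS AT : Finset (Fin n)) (hST : ¬ AS ⊆ AT) (hTS : ¬ AT ⊆ AS) :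
    (d + 1) ^ 2 ≤
      ({t : {j : Fin n // j ∈ AS ∪ AT} → Fin (d + 1) |
        (fun j : {j : Fin n // j ∈ AS} =>
            t ⟨j.1, Finset.mem_union_left _ j.2⟩) ∈ SimpleRel n d AS ∧
        (fun j : {j : Fin n // j ∈ AT} =>
            t ⟨j.1, Finset.mem_union_right _ j.2⟩) ∈ SimpleRel n d AT}).ncard := by
  obtain ⟨a, haS, haT⟩ := Finset.not_subset.mp hST
  obtain ⟨b, hbT, hbS⟩ := Finset.not_subset.mp hTS
  have hab : a ≠ b := fun h => haT (h ▸ hbT)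
  set J : Set ({j : Fin n // j ∈ AS ∪ AT} → Fin (d + 1)) :=
    {t : {j : Fin n // j ∈ AS ∪ AT} → Fin (d + 1) |
        (fun j : {j : Fin n // j ∈ AS} =>
            t ⟨j.1, Finset.mem_union_left _ j.2⟩) ∈ SimpleRel n d AS ∧
        (fun j : {j : Fin n // j ∈ AT} =>
            t ⟨j.1, Finset.mem_union_right _ j.2⟩) ∈ SimpleRel n d AT} with hJ
  let f : Fin (d + 1) × Fin (d + 1) → ({j : Fin n // j ∈ AS ∪ AT} → Fin (d + 1)) :=
    fun p j => if j.1 = a then p.1 else if j.1 = b then p.2 else 0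
  have hinj : Function.Injective f := by
    intro p q h
    have h1 := congrFun h ⟨a, Finset.mem_union_left _ haS⟩
    have h2 := congrFun h ⟨b, Finset.mem_union_right _ hbT⟩
    simp only [f, if_pos rfl, if_neg hab.symm, if_neg hab] at h1 h2
    exact Prod.ext h1 h2
  have hrange : Set.range f ⊆ J := by
    rintro _ ⟨p, rfl⟩
    constructor
    · refine le_trans (Set.ncard_le_ncard ?_ (Set.finite_singleton ⟨a, haS⟩)) ?_
      · intro j hj
        simp only [Set.mem_setOf_eq, f] at hj
        by_cases hja : j.1 = a
        · exact Set.mem_singleton_iff.mpr (Subtype.ext hja)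
        · exfalso
          rw [if_neg hja] at hj
          by_cases hjb : j.1 = b
          · exact hbS (hjb ▸ j.2)
          · rw [if_neg hjb] at hj; exact hj rfl
      · simp
    · refine le_trans (Set.ncard_le_ncard ?_ (Set.finite_singleton ⟨b, hbT⟩)) ?_
      · intro j hj
        simp only [Set.mem_setOf_eq, f] at hj
        by_cases hjb : j.1 = b
        · exact Set.mem_singleton_iff.mpr (Subtype.ext hjb)
        · exfalso
          by_cases hja : j.1 = a
          · exact haT (hja ▸ j.2)
          · rw [if_neg hja, if_neg hjb] at hj; exact hj rfl
      · simp
  calc (d + 1) ^ 2 = Nat.card (Fin (d + 1) × Fin (d + 1)) := by simp [sq]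
    _ = (Set.range f).ncard := by
          rw [Set.ncard_eq_toFinset_card'];
          rw [Set.toFinset_range, Finset.card_image_of_injective _ hinj, Nat.card_eq_fintype_card, Finset.card_univ]
    _ ≤ J.ncard := Set.ncard_le_ncard hrange (Set.toFinite J)
end

section
/- (AGM bound for projected joins.) Let H = (V, E) be a hypergraph with finite relations R_F for F ∈ E, and let x = (x_F)_{F∈E} be any fractional edge cover of H. For any subset B ⊆ V, the join of the projected relations P = ⋈_{F∈E} π_{F∩B}(R_F), consisting of all tuples t : B → D whose restriction to F ∩ B belongs to π_{F∩B}(R_F) for every F ∈ E, satisfies |P| ≤ ∏_{F∈E} |R_F|^{x_F}. -/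
/-- Generalized Hölder inequality with weights summing to 1. -/
theorem holder_finset_aux {ι κ : Type*} (T : Finset ι) (S : Finset κ) (w : ι → ℝ) (g : ι → κ → ℝ)
    (hw : ∀ i ∈ T, 0 ≤ w i) (hg : ∀ i ∈ T, ∀ d ∈ S, 0 ≤ g i d)
    (hsum : ∑ i ∈ T, w i = 1) :
    ∑ d ∈ S, ∏ i ∈ T, g i d ^ w i ≤ ∏ i ∈ T, (∑ d ∈ S, g i d) ^ w i := by
  classical
  set A : ι → ℝ := fun i => ∑ d ∈ S, g i d with hA
  have hA0 : ∀ i ∈ T, 0 ≤ A i := fun i hi => Finset.sum_nonneg fun d hd => hg i hi d hd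
  by_cases hz : ∃ i ∈ T, A i = 0 ∧ w i ≠ 0
  · obtain ⟨i, hiT, hAi, hwi⟩ := hz
    have hgz : ∀ d ∈ S, g i d = 0 := fun d hd =>
      (Finset.sum_eq_zero_iff_of_nonneg (fun d hd => hg i hiT d hd)).1 hAi d hd
    have hL : ∑ d ∈ S, ∏ j ∈ T, g j d ^ w j = 0 := by
      apply Finset.sum_eq_zero
      intro d hd
      apply Finset.prod_eq_zero hiT
      rw [hgz d hd, Real.zero_rpow hwi]
    rw [hL]
    exact Finset.prod_nonneg fun j hj => Real.rpow_nonneg (hA0 j hj) _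
  · push_neg at hz
    have hApos : ∀ i ∈ T, w i ≠ 0 → 0 < A i := by
      intro i hi hwi
      rcases lt_or_eq_of_le (hA0 i hi) with h | h
      · exact h
      · exact absurd (hz i hi h.symm) hwi
    set P : ℝ := ∏ i ∈ T, A i ^ w i with hP
    have hPpos : 0 < P := by
      apply Finset.prod_pos
      intro i hi
      by_cases hwi : w i = 0
      · rw [hwi, Real.rpow_zero]; exact one_pos
      · exact Real.rpow_pos_of_pos (hApos i hi hwi) _
    rw [← div_le_one hPpos, Finset.sum_div]
    have key : ∀ d ∈ S, (∏ i ∈ T, g i d ^ w i) / P ≤ ∑ i ∈ T, w i * (g i d / A i) := by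
      intro d hd
      have h1 : (∏ i ∈ T, g i d ^ w i) / P = ∏ i ∈ T, (g i d / A i) ^ w i := by
        rw [hP, ← Finset.prod_div_distrib]
        exact Finset.prod_congr rfl fun i hi =>
          (Real.div_rpow (hg i hi d hd) (hA0 i hi) (w i)).symm
      rw [h1]
      exact Real.geom_mean_le_arith_mean_weighted T w _ hw hsum
        (fun i hi => div_nonneg (hg i hi d hd) (hA0 i hi))
    calc ∑ d ∈ S, (∏ i ∈ T, g i d ^ w i) / P
        ≤ ∑ d ∈ S, ∑ i ∈ T, w i * (g i d / A i) := Finset.sum_le_sum key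
      _ = ∑ i ∈ T, w i * (A i / A i) := by
          rw [Finset.sum_comm]
          refine Finset.sum_congr rfl fun i hi => ?_
          rw [← Finset.mul_sum, ← Finset.sum_div]
      _ ≤ ∑ i ∈ T, w i := by
          refine Finset.sum_le_sum fun i hi => ?_
          by_cases hwi : w i = 0
          · simp [hwi]
          · rw [div_self (ne_of_gt (hApos i hi hwi)), mul_one]
      _ = 1 := hsum

theorem join_finite_aux {V D : Type*} [Fintype V] [DecidableEq V]
    (E : Finset (Finset V))
    (R : (F : Finset V) → Set ({v : V // v ∈ F} → D))
    (hR : ∀ F ∈ E, (R F).Finite)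
    (hcov : ∀ v : V, ∃ F ∈ E, v ∈ F) (B : Finset V) :
    ({t : {v : V // v ∈ B} → D | ∀ F ∈ E, ∃ u ∈ R F,
        ∀ (v : V) (hvF : v ∈ F) (hvB : v ∈ B), u ⟨v, hvF⟩ = t ⟨v, hvB⟩}).Finite := by
  classical
  choose Fv hFvE hFvmem using hcov
  set s : {v : V // v ∈ B} → Set D := fun v => (fun u => u ⟨v.1, hFvmem v.1⟩) '' R (Fv v.1)
  have hsfin : ∀ v, (s v).Finite := fun v => (hR _ (hFvE v.1)).image _
  apply (Set.Finite.pi hsfin).subset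
  intro t ht
  rw [Set.mem_pi]
  intro v _
  obtain ⟨u, huR, hu⟩ := ht (Fv v.1) (hFvE v.1)
  exact ⟨u, huR, hu v.1 (hFvmem v.1) v.2⟩

theorem rpow_split_le {m M e₁ e₂ : ℝ} (hm : 0 ≤ m) (hmM : m ≤ M) (h1 : 0 ≤ e₁) (h2 : 0 ≤ e₂) :
    m ^ (e₁ + e₂) ≤ M ^ e₁ * m ^ e₂ := by
  rw [Real.rpow_add_of_nonneg hm h1 h2]
  exact mul_le_mul_of_nonneg_right (Real.rpow_le_rpow hm hmM h1) (Real.rpow_nonneg hm _)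

theorem agm_aux_s13 {V D : Type*} [Fintype V] [DecidableEq V]
    (E : Finset (Finset V)) (x : Finset V → ℝ)
    (hx0 : ∀ F ∈ E, 0 ≤ x F)
    (hxcover : ∀ v : V, 1 ≤ ∑ F ∈ E.filter (fun F => v ∈ F), x F)
    (B : Finset V) :
    ∀ (R : (F : Finset V) → Set ({v : V // v ∈ F} → D)), (∀ F ∈ E, (R F).Finite) →
    (({t : {v : V // v ∈ B} → D | ∀ F ∈ E, ∃ u ∈ R F,
        ∀ (v : V) (hvF : v ∈ F) (hvB : v ∈ B), u ⟨v, hvF⟩ = t ⟨v, hvB⟩}).ncard : ℝ)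
      ≤ ∏ F ∈ E, ((R F).ncard : ℝ) ^ (x F) := by
  classical
  have hcov : ∀ v : V, ∃ F ∈ E, v ∈ F := by
    intro v
    by_contra h
    push_neg at h
    have he : E.filter (fun F => v ∈ F) = ∅ := Finset.filter_eq_empty_iff.2 h
    have h1 := hxcover v
    rw [he, Finset.sum_empty] at h1
    linarith
  induction B using Finset.induction_on with
  | empty =>
    intro R hR
    have hRHS0 : (0:ℝ) ≤ ∏ F ∈ E, ((R F).ncard : ℝ) ^ (x F) :=
      Finset.prod_nonneg fun F _ => Real.rpow_nonneg (Nat.cast_nonneg _) _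
    rcases Set.eq_empty_or_nonempty
        {t : {v : V // v ∈ (∅ : Finset V)} → D | ∀ F ∈ E, ∃ u ∈ R F,
          ∀ (v : V) (hvF : v ∈ F) (hvB : v ∈ (∅ : Finset V)), u ⟨v, hvF⟩ = t ⟨v, hvB⟩}
      with hJ | hJ
    · rw [hJ]
      simpa using hRHS0
    · obtain ⟨t0, ht0⟩ := hJ
      have hsub : {t : {v : V // v ∈ (∅ : Finset V)} → D | ∀ F ∈ E, ∃ u ∈ R F,
          ∀ (v : V) (hvF : v ∈ F) (hvB : v ∈ (∅ : Finset V)), u ⟨v, hvF⟩ = t ⟨v, hvB⟩}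
          ⊆ {t0} := by
        intro t _
        have : t = t0 := funext fun v => absurd v.2 (Finset.notMem_empty v.1)
        simp [this]
      have hle1 : ({t : {v : V // v ∈ (∅ : Finset V)} → D | ∀ F ∈ E, ∃ u ∈ R F,
          ∀ (v : V) (hvF : v ∈ F) (hvB : v ∈ (∅ : Finset V)), u ⟨v, hvF⟩ = t ⟨v, hvB⟩}).ncard ≤ 1 := by
        have := Set.ncard_le_ncard hsub (Set.finite_singleton t0)
        simpa using this
      have h1le : (1:ℝ) ≤ ∏ F ∈ E, ((R F).ncard : ℝ) ^ (x F) := by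
        have h0 : (1:ℝ) = ∏ F ∈ E, (1:ℝ) := by simp
        rw [h0]
        refine Finset.prod_le_prod (fun F hF => zero_le_one) (fun F hF => ?_)
        obtain ⟨u, huR, -⟩ := ht0 F hF
        have hpos : 0 < (R F).ncard := (Set.ncard_pos (hR F hF)).2 ⟨u, huR⟩
        have : (1:ℝ) ≤ ((R F).ncard : ℝ) := by exact_mod_cast hpos
        calc (1:ℝ) = 1 ^ (x F) := (Real.one_rpow _).symm
          _ ≤ ((R F).ncard : ℝ) ^ (x F) := Real.rpow_le_rpow zero_le_one this (hx0 F hF)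
      calc (({t : {v : V // v ∈ (∅ : Finset V)} → D | ∀ F ∈ E, ∃ u ∈ R F,
          ∀ (v : V) (hvF : v ∈ F) (hvB : v ∈ (∅ : Finset V)), u ⟨v, hvF⟩ = t ⟨v, hvB⟩}).ncard : ℝ)
          ≤ 1 := by exact_mod_cast hle1
        _ ≤ _ := h1le
  | @insert a B₀ haB ih =>
    intro R hR
    obtain ⟨F₀, hF₀E, hF₀a⟩ := hcov a
    set Ea : Finset (Finset V) := E.filter (fun F => a ∈ F) with hEadef
    set c : ℝ := ∑ F ∈ Ea, x F with hcdef
    have hc1 : (1:ℝ) ≤ c := hxcover a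
    have hcpos : (0:ℝ) < c := lt_of_lt_of_le one_pos hc1
    set R' : D → (F : Finset V) → Set ({v : V // v ∈ F} → D) :=
      fun d F => {u | u ∈ R F ∧ ∀ h : a ∈ F, u ⟨a, h⟩ = d} with hR'def
    have hR'sub : ∀ d F, R' d F ⊆ R F := fun d F u hu => hu.1
    have hR'fin : ∀ d, ∀ F ∈ E, (R' d F).Finite := fun d F hF => (hR F hF).subset (hR'sub d F)
    set S : Finset D := (hR F₀ hF₀E).toFinset.image (fun u => u ⟨a, hF₀a⟩) with hSdef
    set J : Set ({v : V // v ∈ insert a B₀} → D) :=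
      {t | ∀ F ∈ E, ∃ u ∈ R F,
        ∀ (v : V) (hvF : v ∈ F) (hvB : v ∈ insert a B₀), u ⟨v, hvF⟩ = t ⟨v, hvB⟩} with hJdef
    set Jd : D → Set ({v : V // v ∈ B₀} → D) := fun d =>
      {t | ∀ F ∈ E, ∃ u ∈ R' d F,
        ∀ (v : V) (hvF : v ∈ F) (hvB : v ∈ B₀), u ⟨v, hvF⟩ = t ⟨v, hvB⟩} with hJddef
    have hJfin : J.Finite := join_finite_aux E R hR hcov (insert a B₀)
    have hJdfin : ∀ d, (Jd d).Finite := fun d => join_finite_aux E (R' d) (hR'fin d) hcov B₀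
    have hamem : a ∈ insert a B₀ := Finset.mem_insert_self a B₀
    -- restriction lands in Jd
    have hres : ∀ t, t ∈ J →
        (fun v : {v : V // v ∈ B₀} => t ⟨v.1, Finset.mem_insert_of_mem v.2⟩) ∈ Jd (t ⟨a, hamem⟩) := by
      intro t ht F hF
      obtain ⟨u, huR, hu⟩ := ht F hF
      exact ⟨u, ⟨huR, fun h => hu a h hamem⟩,
        fun v hvF hvB => hu v hvF (Finset.mem_insert_of_mem hvB)⟩
    have hmemS : ∀ t ∈ J, t ⟨a, hamem⟩ ∈ S := by
      intro t ht
      obtain ⟨u, huR, hu⟩ := ht F₀ hF₀E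
      exact Finset.mem_image.2 ⟨u, (hR F₀ hF₀E).mem_toFinset.2 huR, hu a hF₀a hamem⟩
    -- counting step
    have hcount : (J.ncard : ℝ) ≤ ∑ d ∈ S, ((Jd d).ncard : ℝ) := by
      have h1 : J.ncard = hJfin.toFinset.card := Set.ncard_eq_toFinset_card _ hJfin
      have h2 : hJfin.toFinset.card
          = ∑ d ∈ S, (hJfin.toFinset.filter (fun t => t ⟨a, hamem⟩ = d)).card :=
        Finset.card_eq_sum_card_fiberwise (fun t ht => hmemS t (hJfin.mem_toFinset.1 ht))
      rw [h1, h2]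
      push_cast
      refine Finset.sum_le_sum fun d hd => ?_
      have h3 : (Jd d).ncard = (hJdfin d).toFinset.card := Set.ncard_eq_toFinset_card _ (hJdfin d)
      rw [h3]
      have h4 : (hJfin.toFinset.filter (fun t => t ⟨a, hamem⟩ = d)).card
          ≤ (hJdfin d).toFinset.card := by
        apply Finset.card_le_card_of_injOn
          (fun t (v : {v : V // v ∈ B₀}) => t ⟨v.1, Finset.mem_insert_of_mem v.2⟩)
        · intro t ht
          obtain ⟨htJ, hta⟩ := Finset.mem_filter.1 ht
          have h5 := hres t (hJfin.mem_toFinset.1 htJ)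
          rw [hta] at h5
          exact (hJdfin d).mem_toFinset.2 h5
        · intro t₁ h₁ t₂ h₂ heq
          obtain ⟨h₁J, h₁a⟩ := Finset.mem_filter.1 h₁
          obtain ⟨h₂J, h₂a⟩ := Finset.mem_filter.1 h₂
          funext v
          rcases Finset.mem_insert.1 v.2 with hva | hvB
          · have e1 : v = ⟨a, hamem⟩ := Subtype.ext hva
            rw [e1, h₁a, h₂a]
          · exact congrFun heq ⟨v.1, hvB⟩
      exact_mod_cast h4
    have hIH : ∀ d ∈ S, ((Jd d).ncard : ℝ) ≤ ∏ F ∈ E, ((R' d F).ncard : ℝ) ^ x F :=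
      fun d _ => ih (R' d) (hR'fin d)
    set Q : ℝ := ∏ F ∈ E.filter (fun F => ¬ a ∈ F), ((R F).ncard : ℝ) ^ x F with hQdef
    have hQ0 : 0 ≤ Q := Finset.prod_nonneg fun F _ => Real.rpow_nonneg (Nat.cast_nonneg _) _
    have hsplit : ∀ d, ∏ F ∈ E, ((R' d F).ncard : ℝ) ^ x F
        = (∏ F ∈ Ea, ((R' d F).ncard : ℝ) ^ x F) * Q := by
      intro d
      rw [← Finset.prod_filter_mul_prod_filter_not E (fun F => a ∈ F)]
      congr 1
      refine Finset.prod_congr rfl fun F hF => ?_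
      have haF : a ∉ F := (Finset.mem_filter.1 hF).2
      have hRR : R' d F = R F := by
        ext u
        constructor
        · exact fun h => h.1
        · exact fun h => ⟨h, fun hh => absurd hh haF⟩
      rw [hRR]
    set w : Finset V → ℝ := fun F => x F / c with hwdef
    have hEaE : ∀ F ∈ Ea, F ∈ E := fun F hF => (Finset.mem_filter.1 hF).1
    have hw0 : ∀ F ∈ Ea, 0 ≤ w F := fun F hF => div_nonneg (hx0 F (hEaE F hF)) hcpos.le
    have hwsum : ∑ F ∈ Ea, w F = 1 := by
      rw [hwdef]
      rw [← Finset.sum_div, ← hcdef, div_self (ne_of_gt hcpos)]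
    have hwle : ∀ F ∈ Ea, w F ≤ x F := fun F hF => div_le_self (hx0 F (hEaE F hF)) hc1
    set C : ℝ := ∏ F ∈ Ea, ((R F).ncard : ℝ) ^ (x F - w F) with hCdef
    have hC0 : 0 ≤ C := Finset.prod_nonneg fun F _ => Real.rpow_nonneg (Nat.cast_nonneg _) _
    have hPd : ∀ d ∈ S, ∏ F ∈ Ea, ((R' d F).ncard : ℝ) ^ x F
        ≤ C * ∏ F ∈ Ea, ((R' d F).ncard : ℝ) ^ w F := by
      intro d _
      rw [hCdef, ← Finset.prod_mul_distrib]
      refine Finset.prod_le_prod (fun F _ => Real.rpow_nonneg (Nat.cast_nonneg _) _)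
        (fun F hF => ?_)
      have h1 : ((R' d F).ncard : ℝ) ≤ ((R F).ncard : ℝ) :=
        Nat.cast_le.2 (Set.ncard_le_ncard (hR'sub d F) (hR F (hEaE F hF)))
      have h2 : 0 ≤ x F - w F := sub_nonneg.2 (hwle F hF)
      calc ((R' d F).ncard : ℝ) ^ x F
          = ((R' d F).ncard : ℝ) ^ ((x F - w F) + w F) := by rw [sub_add_cancel]
        _ ≤ _ := rpow_split_le (Nat.cast_nonneg _) h1 h2 (hw0 F hF)
    have hdisj : ∀ F ∈ Ea, ∑ d ∈ S, ((R' d F).ncard : ℝ) ≤ ((R F).ncard : ℝ) := by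
      intro F hF
      have hFE := hEaE F hF
      have haF : a ∈ F := (Finset.mem_filter.1 hF).2
      have hkey : ∀ d, R' d F = ↑((hR F hFE).toFinset.filter (fun u => u ⟨a, haF⟩ = d)) := by
        intro d
        ext u
        simp only [Finset.coe_filter, Set.mem_setOf_eq, Set.Finite.mem_toFinset]
        constructor
        · exact fun h => ⟨h.1, h.2 haF⟩
        · exact fun h => ⟨h.1, fun _ => h.2⟩
      have hsum : ∑ d ∈ S, (R' d F).ncard ≤ (R F).ncard := by
        simp_rw [hkey, Set.ncard_coe_finset]
        rw [← Finset.card_biUnion]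
        · rw [Set.ncard_eq_toFinset_card _ (hR F hFE)]
          exact Finset.card_le_card (Finset.biUnion_subset.2 fun d _ => Finset.filter_subset _ _)
        · intro d₁ _ d₂ _ hne
          simp only [Finset.disjoint_left, Finset.mem_filter]
          rintro u ⟨_, hu1⟩ ⟨_, hu2⟩
          exact hne (hu1.symm.trans hu2)
      exact_mod_cast hsum
    have hholder : ∑ d ∈ S, ∏ F ∈ Ea, ((R' d F).ncard : ℝ) ^ w F
        ≤ ∏ F ∈ Ea, (∑ d ∈ S, ((R' d F).ncard : ℝ)) ^ w F :=
      holder_finset_aux Ea S w (fun F d => ((R' d F).ncard : ℝ)) hw0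
        (fun F _ d _ => Nat.cast_nonneg _) hwsum
    have hfinal2 : ∏ F ∈ Ea, (∑ d ∈ S, ((R' d F).ncard : ℝ)) ^ w F
        ≤ ∏ F ∈ Ea, ((R F).ncard : ℝ) ^ w F :=
      Finset.prod_le_prod
        (fun F hF => Real.rpow_nonneg (Finset.sum_nonneg fun d _ => Nat.cast_nonneg _) _)
        (fun F hF => Real.rpow_le_rpow (Finset.sum_nonneg fun d _ => Nat.cast_nonneg _)
          (hdisj F hF) (hw0 F hF))
    have hmerge : C * ∏ F ∈ Ea, ((R F).ncard : ℝ) ^ w F = ∏ F ∈ Ea, ((R F).ncard : ℝ) ^ x F := by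
      rw [hCdef, ← Finset.prod_mul_distrib]
      refine Finset.prod_congr rfl fun F hF => ?_
      rw [← Real.rpow_add_of_nonneg (Nat.cast_nonneg _) (sub_nonneg.2 (hwle F hF)) (hw0 F hF),
        sub_add_cancel]
    calc (J.ncard : ℝ)
        ≤ ∑ d ∈ S, ((Jd d).ncard : ℝ) := hcount
      _ ≤ ∑ d ∈ S, (∏ F ∈ Ea, ((R' d F).ncard : ℝ) ^ x F) * Q :=
          Finset.sum_le_sum fun d hd => (hIH d hd).trans_eq (hsplit d)
      _ ≤ ∑ d ∈ S, (C * ∏ F ∈ Ea, ((R' d F).ncard : ℝ) ^ w F) * Q :=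
          Finset.sum_le_sum fun d hd => mul_le_mul_of_nonneg_right (hPd d hd) hQ0
      _ = (C * ∑ d ∈ S, ∏ F ∈ Ea, ((R' d F).ncard : ℝ) ^ w F) * Q := by
          rw [Finset.mul_sum, ← Finset.sum_mul]
      _ ≤ (C * ∏ F ∈ Ea, (∑ d ∈ S, ((R' d F).ncard : ℝ)) ^ w F) * Q :=
          mul_le_mul_of_nonneg_right (mul_le_mul_of_nonneg_left hholder hC0) hQ0
      _ ≤ (C * ∏ F ∈ Ea, ((R F).ncard : ℝ) ^ w F) * Q :=
          mul_le_mul_of_nonneg_right (mul_le_mul_of_nonneg_left hfinal2 hC0) hQ0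
      _ = (∏ F ∈ Ea, ((R F).ncard : ℝ) ^ x F) * Q := by rw [hmerge]
      _ = ∏ F ∈ E, ((R F).ncard : ℝ) ^ x F := by
          rw [hQdef, hEadef, Finset.prod_filter_mul_prod_filter_not]

open scoped BigOperators

/-- **AGM bound for projected joins.** Let `H = (V, E)` be a hypergraph with finite
relations `R_F` and `x` a fractional edge cover of `H`.  For any `B ⊆ V`, the join of
the projected relations `P = ⋈_{F ∈ E} π_{F ∩ B}(R_F)` satisfies
`|P| ≤ ∏_{F ∈ E} |R_F| ^ (x_F)`. -/
theorem agm_projected_join {V D : Type*} [Fintype V] [DecidableEq V]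
    (E : Finset (Finset V))
    (R : (F : Finset V) → Set ({v : V // v ∈ F} → D))
    (hR : ∀ F ∈ E, (R F).Finite)
    (x : Finset V → ℝ)
    (hx0 : ∀ F ∈ E, 0 ≤ x F)
    (hxcover : ∀ v : V, 1 ≤ ∑ F ∈ E.filter (fun F => v ∈ F), x F)
    (B : Finset V) :
    (({t : {v : V // v ∈ B} → D | ∀ F ∈ E, ∃ u ∈ R F,
        ∀ (v : V) (hvF : v ∈ F) (hvB : v ∈ B), u ⟨v, hvF⟩ = t ⟨v, hvB⟩}).ncard : ℝ)
      ≤ ∏ F ∈ E, ((R F).ncard : ℝ) ^ (x F) :=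
  agm_aux_s13 E x hx0 hxcover B R hR
end

section
/- (Triangle count in a graph.) Let G be a finite simple (undirected, loopless) graph with M edges. Then the number of triangles in G (unordered sets of three pairwise adjacent vertices) is at most (2M)^{3/2} / 6. -/
open scoped BigOperators

open Finset

section Aux

variable {V : Type*} [Fintype V] [DecidableEq V] (G : SimpleGraph V) [DecidableRel G.Adj]

/-- Ordered triangles. -/
private def ordT : Finset (V × V × V) :=
  Finset.univ.filter fun p => G.Adj p.1 p.2.1 ∧ G.Adj p.1 p.2.2 ∧ G.Adj p.2.1 p.2.2

/-- Ordered edges. -/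
private def ordE : Finset (V × V) := Finset.univ.filter fun p => G.Adj p.1 p.2

private def codeg (a b : V) : ℕ :=
  (Finset.univ.filter fun c => G.Adj a c ∧ G.Adj b c).card

private lemma ordT_card_eq_six_mul :
    (ordT G).card = 6 * (G.cliqueFinset 3).card := by
  rw [Finset.card_eq_sum_card_fiberwise
      (f := fun p : V × V × V => ({p.1, p.2.1, p.2.2} : Finset V)) (t := G.cliqueFinset 3) ?_]
  · rw [Finset.sum_congr rfl (g := fun _ => 6) ?_, Finset.sum_const, smul_eq_mul, mul_comm]
    intro s hs
    rw [SimpleGraph.mem_cliqueFinset_iff, SimpleGraph.is3Clique_iff] at hs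
    obtain ⟨a, b, c, hab, hac, hbc, rfl⟩ := hs
    have hab' : a ≠ b := hab.ne
    have hac' : a ≠ c := hac.ne
    have hbc' : b ≠ c := hbc.ne
    have : (ordT G).filter (fun p : V × V × V => ({p.1, p.2.1, p.2.2} : Finset V) = {a, b, c})
        = ({(a, b, c), (a, c, b), (b, a, c), (b, c, a), (c, a, b), (c, b, a)} :
            Finset (V × V × V)) := by
      ext ⟨x, y, z⟩
      simp only [ordT, Finset.mem_filter, Finset.mem_univ, true_and, Finset.mem_insert,
        Finset.mem_singleton, Prod.mk.injEq]
      constructor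
      · rintro ⟨⟨hxy, hxz, hyz⟩, hset⟩
        have hx : x = a ∨ x = b ∨ x = c := by
          have : x ∈ ({a, b, c} : Finset V) := hset ▸ (by simp)
          simpa using this
        have hy : y = a ∨ y = b ∨ y = c := by
          have : y ∈ ({a, b, c} : Finset V) := hset ▸ (by simp)
          simpa using this
        have hz : z = a ∨ z = b ∨ z = c := by
          have : z ∈ ({a, b, c} : Finset V) := hset ▸ (by simp)
          simpa using this
        have h1 : x ≠ y := hxy.ne
        have h2 : x ≠ z := hxz.ne
        have h3 : y ≠ z := hyz.ne
        rcases hx with rfl | rfl | rfl <;> rcases hy with rfl | rfl | rfl <;>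
          rcases hz with rfl | rfl | rfl <;> simp_all
      · have e1 : ({a, c, b} : Finset V) = {a, b, c} := by
          ext w; simp; tauto
        have e2 : ({b, a, c} : Finset V) = {a, b, c} := by
          ext w; simp; tauto
        have e3 : ({b, c, a} : Finset V) = {a, b, c} := by
          ext w; simp; tauto
        have e4 : ({c, a, b} : Finset V) = {a, b, c} := by
          ext w; simp; tauto
        have e5 : ({c, b, a} : Finset V) = {a, b, c} := by
          ext w; simp; tauto
        rintro (⟨rfl, rfl, rfl⟩ | ⟨rfl, rfl, rfl⟩ | ⟨rfl, rfl, rfl⟩ | ⟨rfl, rfl, rfl⟩ |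
          ⟨rfl, rfl, rfl⟩ | ⟨rfl, rfl, rfl⟩)
        · exact ⟨⟨hab, hac, hbc⟩, rfl⟩
        · exact ⟨⟨hac, hab, hbc.symm⟩, e1⟩
        · exact ⟨⟨hab.symm, hbc, hac⟩, e2⟩
        · exact ⟨⟨hbc, hab.symm, hac.symm⟩, e3⟩
        · exact ⟨⟨hac.symm, hbc.symm, hab⟩, e4⟩
        · exact ⟨⟨hbc.symm, hac.symm, hab.symm⟩, e5⟩
    rw [this]
    rw [Finset.card_insert_of_notMem (by simp [Prod.ext_iff]; tauto),
      Finset.card_insert_of_notMem (by simp [Prod.ext_iff]; tauto),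
      Finset.card_insert_of_notMem (by simp [Prod.ext_iff]; tauto),
      Finset.card_insert_of_notMem (by simp [Prod.ext_iff]; tauto),
      Finset.card_insert_of_notMem (by simp [Prod.ext_iff]; tauto),
      Finset.card_singleton]
  · intro p hp
    simp only [ordT, Finset.mem_coe, Finset.mem_filter, Finset.mem_univ, true_and] at hp
    rw [Finset.mem_coe]; show ({p.1, p.2.1, p.2.2} : Finset V) ∈ G.cliqueFinset 3
    rw [SimpleGraph.mem_cliqueFinset_iff, SimpleGraph.is3Clique_triple_iff]
    exact hp

private lemma ordT_card_eq_sum_codeg :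
    (ordT G).card = ∑ p ∈ ordE G, codeg G p.1 p.2 := by
  rw [Finset.card_eq_sum_card_fiberwise
      (f := fun p : V × V × V => (p.1, p.2.1)) (t := ordE G) ?_]
  · refine Finset.sum_congr rfl fun q hq => ?_
    obtain ⟨a, b⟩ := q
    have hq' : G.Adj a b := by
      simpa [ordE] using hq
    refine Finset.card_bij' (fun p _ => p.2.2)
      (fun c _ => (a, b, c)) ?_ ?_ ?_ ?_
    · rintro ⟨x, y, z⟩ hp
      rw [Finset.mem_filter] at hp
      obtain ⟨hp1, hp2⟩ := hp
      simp only [ordT, Finset.mem_filter, Finset.mem_univ, true_and] at hp1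
      rw [Prod.mk.injEq] at hp2
      obtain ⟨rfl, rfl⟩ := hp2
      simp only [codeg, Finset.mem_filter, Finset.mem_univ, true_and]
      exact ⟨hp1.2.1, hp1.2.2⟩
    · intro c hc
      simp only [codeg, Finset.mem_filter, Finset.mem_univ, true_and] at hc
      rw [Finset.mem_filter]
      refine ⟨?_, rfl⟩
      simp only [ordT, Finset.mem_filter, Finset.mem_univ, true_and]
      exact ⟨hq', hc.1, hc.2⟩
    · rintro ⟨x, y, z⟩ hp
      rw [Finset.mem_filter] at hp
      obtain ⟨-, hp2⟩ := hp
      rw [Prod.mk.injEq] at hp2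
      obtain ⟨rfl, rfl⟩ := hp2
      rfl
    · intro c _; rfl
  · rintro ⟨x, y, z⟩ hp
    simp only [ordT, Finset.mem_coe, Finset.mem_filter, Finset.mem_univ, true_and] at hp
    simp only [ordE, Finset.mem_coe, Finset.mem_filter, Finset.mem_univ, true_and]
    exact hp.1

private lemma ordE_card : (ordE G).card = 2 * G.edgeFinset.card := by
  rw [← SimpleGraph.sum_degrees_eq_twice_card_edges]
  rw [ordE, Finset.card_filter, Fintype.sum_prod_type]
  refine Finset.sum_congr rfl fun a _ => ?_
  rw [← Finset.card_filter, SimpleGraph.degree, SimpleGraph.neighborFinset_eq_filter]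

private lemma codeg_le_degree_left (a b : V) : codeg G a b ≤ G.degree a := by
  rw [← SimpleGraph.card_neighborFinset_eq_degree, SimpleGraph.neighborFinset_eq_filter]
  exact Finset.card_le_card (Finset.monotone_filter_right _ (fun c _ hc => hc.1))

end Aux

/-- **Triangle count in a graph.** A finite simple graph with `M` edges has at most
`(2M)^(3/2) / 6` triangles (3-cliques). -/
theorem triangle_count_bound {V : Type*} [Fintype V] [DecidableEq V]
    (G : SimpleGraph V) [DecidableRel G.Adj] :
    ((G.cliqueFinset 3).card : ℝ)
      ≤ ((2 * G.edgeFinset.card : ℕ) : ℝ) ^ ((3 : ℝ) / 2) / 6 := by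
  set M : ℕ := 2 * G.edgeFinset.card with hM
  have key : (6 : ℝ) * (G.cliqueFinset 3).card ≤ (M : ℝ) ^ ((3 : ℝ) / 2) := by
    have hnat : 6 * (G.cliqueFinset 3).card = ∑ p ∈ ordE G, codeg G p.1 p.2 := by
      rw [← ordT_card_eq_six_mul, ordT_card_eq_sum_codeg]
    have h1 : (6 : ℝ) * (G.cliqueFinset 3).card = ∑ p ∈ ordE G, (codeg G p.1 p.2 : ℝ) := by
      exact_mod_cast congrArg (Nat.cast (R := ℝ)) hnat
    have hcodeg : ∀ p ∈ ordE G, (codeg G p.1 p.2 : ℝ) ≤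
        Real.sqrt ((G.degree p.1 : ℝ) * (G.degree p.2 : ℝ)) := by
      intro p hp
      refine Real.le_sqrt_of_sq_le ?_
      have h1 : codeg G p.1 p.2 ≤ G.degree p.1 := codeg_le_degree_left G p.1 p.2
      have h2 : codeg G p.1 p.2 ≤ G.degree p.2 := by
        have : codeg G p.1 p.2 = codeg G p.2 p.1 := by
          simp only [codeg]; congr 1; ext c; simp [and_comm]
        rw [this]; exact codeg_le_degree_left G p.2 p.1
      calc ((codeg G p.1 p.2 : ℝ)) ^ 2 = (codeg G p.1 p.2 : ℝ) * (codeg G p.1 p.2 : ℝ) := sq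
            _
        _ ≤ (G.degree p.1 : ℝ) * (G.degree p.2 : ℝ) := by
            exact mul_le_mul (by exact_mod_cast h1) (by exact_mod_cast h2)
              (by positivity) (by positivity)
    have h2 : ∑ p ∈ ordE G, (codeg G p.1 p.2 : ℝ)
        ≤ ∑ p ∈ ordE G, Real.sqrt ((G.degree p.1 : ℝ) * (G.degree p.2 : ℝ)) :=
      Finset.sum_le_sum hcodeg
    have hCS : (∑ p ∈ ordE G, Real.sqrt ((G.degree p.1 : ℝ) * (G.degree p.2 : ℝ))) ^ 2
        ≤ (M : ℝ) * ∑ p ∈ ordE G, (G.degree p.1 : ℝ) * (G.degree p.2 : ℝ) := by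
      have := Finset.sum_mul_sq_le_sq_mul_sq (ordE G) (fun _ => (1 : ℝ))
        (fun p => Real.sqrt ((G.degree p.1 : ℝ) * (G.degree p.2 : ℝ)))
      simp only [one_mul, one_pow, Finset.sum_const, nsmul_eq_mul, smul_eq_mul, mul_one] at this
      calc (∑ p ∈ ordE G, Real.sqrt ((G.degree p.1 : ℝ) * (G.degree p.2 : ℝ))) ^ 2
          ≤ ((ordE G).card : ℝ) * ∑ p ∈ ordE G,
              Real.sqrt ((G.degree p.1 : ℝ) * (G.degree p.2 : ℝ)) ^ 2 := this
        _ = (M : ℝ) * ∑ p ∈ ordE G, (G.degree p.1 : ℝ) * (G.degree p.2 : ℝ) := by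
            rw [ordE_card]
            congr 1
            refine Finset.sum_congr rfl fun p _ => Real.sq_sqrt (by positivity)
    have hsum : ∑ p ∈ ordE G, (G.degree p.1 : ℝ) * (G.degree p.2 : ℝ) ≤ (M : ℝ) ^ 2 := by
      have hsub : ∑ p ∈ ordE G, (G.degree p.1 : ℝ) * (G.degree p.2 : ℝ)
          ≤ ∑ p : V × V, (G.degree p.1 : ℝ) * (G.degree p.2 : ℝ) :=
        Finset.sum_le_sum_of_subset_of_nonneg (Finset.subset_univ _)
          (fun p _ _ => by positivity)
      refine hsub.trans ?_
      rw [Fintype.sum_prod_type]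
      have : ∑ a : V, ∑ b : V, (G.degree a : ℝ) * (G.degree b : ℝ)
          = (∑ a : V, (G.degree a : ℝ)) ^ 2 := by
        rw [sq, Finset.sum_mul_sum]
      rw [this]
      have hdeg : ∑ a : V, (G.degree a : ℝ) = (M : ℝ) := by
        rw [hM]
        exact_mod_cast congrArg (Nat.cast (R := ℝ)) G.sum_degrees_eq_twice_card_edges
      rw [hdeg]
    have hMnn : (0 : ℝ) ≤ (M : ℝ) := Nat.cast_nonneg _
    have hfin : ∑ p ∈ ordE G, Real.sqrt ((G.degree p.1 : ℝ) * (G.degree p.2 : ℝ))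
        ≤ (M : ℝ) ^ ((3 : ℝ) / 2) := by
      have hnn : (0 : ℝ) ≤ ∑ p ∈ ordE G, Real.sqrt ((G.degree p.1 : ℝ) * (G.degree p.2 : ℝ)) :=
        Finset.sum_nonneg fun p _ => Real.sqrt_nonneg _
      have hsq : (∑ p ∈ ordE G, Real.sqrt ((G.degree p.1 : ℝ) * (G.degree p.2 : ℝ))) ^ 2
          ≤ (M : ℝ) ^ 3 := by
        calc _ ≤ (M : ℝ) * ∑ p ∈ ordE G, (G.degree p.1 : ℝ) * (G.degree p.2 : ℝ) := hCS
          _ ≤ (M : ℝ) * (M : ℝ) ^ 2 := by nlinarith [hsum]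
          _ = (M : ℝ) ^ 3 := by ring
      have hsqrt := Real.sqrt_le_sqrt hsq
      rw [Real.sqrt_sq hnn] at hsqrt
      refine hsqrt.trans_eq ?_
      rw [Real.sqrt_eq_rpow, ← Real.rpow_natCast (M : ℝ) 3, ← Real.rpow_mul hMnn]
      norm_num
    calc (6 : ℝ) * (G.cliqueFinset 3).card
        = ∑ p ∈ ordE G, (codeg G p.1 p.2 : ℝ) := h1
      _ ≤ ∑ p ∈ ordE G, Real.sqrt ((G.degree p.1 : ℝ) * (G.degree p.2 : ℝ)) := h2
      _ ≤ (M : ℝ) ^ ((3 : ℝ) / 2) := hfin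
  linarith [key]
end
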